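/- arXiv:1705.08521 — 8 statements merged into one kernel-verified Lean document; each statement's English description precedes it below -/
import Mathlib

section
/- Let R = U Zᵀ with UᵀU = I and Z full rank r, and let 𝔛 ∈ ℝ^{l×m}. Then the pair (X_U, X_Z) = ((I − UUᵀ)𝔛Z(ZᵀZ)^{-1}, 𝔛ᵀU) is the unique minimizer over the horizontal space {(A,B) : UᵀA = 0} of the functional J(A,B) = ½‖𝔛 − AZᵀ − U Bᵀ‖², where ‖·‖ is the Frobenius norm. Equivalently, the orthogonal projection of 𝔛 onto the tangent space at UZᵀ is Π(𝔛) = (I−UUᵀ)𝔛Z(ZᵀZ)^{-1}Zᵀ + UUᵀ𝔛. -/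
open Matrix

private lemma trace_sq_nonneg {a b : ℕ} (X : Matrix (Fin a) (Fin b) ℝ) :
    0 ≤ Matrix.trace (Xᵀ * X) := by
  simp only [Matrix.trace, Matrix.diag, Matrix.mul_apply, Matrix.transpose_apply]
  exact Finset.sum_nonneg fun j _ => Finset.sum_nonneg fun i _ => mul_self_nonneg _

private lemma eq_zero_of_trace_sq {a b : ℕ} (X : Matrix (Fin a) (Fin b) ℝ)
    (h : Matrix.trace (Xᵀ * X) = 0) : X = 0 := by
  simp only [Matrix.trace, Matrix.diag, Matrix.mul_apply, Matrix.transpose_apply] at h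
  ext i j
  have h1 := (Finset.sum_eq_zero_iff_of_nonneg (fun j _ =>
    Finset.sum_nonneg fun i _ => mul_self_nonneg (X i j))).mp h j (Finset.mem_univ j)
  have h2 := (Finset.sum_eq_zero_iff_of_nonneg (fun i _ =>
    mul_self_nonneg (X i j))).mp h1 i (Finset.mem_univ i)
  simpa [mul_self_eq_zero] using h2

private lemma trace_flip {a b : ℕ} (E F : Matrix (Fin a) (Fin b) ℝ) :
    Matrix.trace (Fᵀ * E) = Matrix.trace (Eᵀ * F) := by
  rw [← Matrix.trace_transpose (Fᵀ * E), Matrix.transpose_mul, Matrix.transpose_transpose]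

private lemma trace_expand {a b : ℕ} (E F H : Matrix (Fin a) (Fin b) ℝ)
    (h1 : Matrix.trace (Eᵀ * F) = 0) (h2 : Matrix.trace (Eᵀ * H) = 0)
    (h3 : Matrix.trace (Fᵀ * H) = 0) :
    Matrix.trace ((E - F - H)ᵀ * (E - F - H)) =
      Matrix.trace (Eᵀ * E) + Matrix.trace (Fᵀ * F) + Matrix.trace (Hᵀ * H) := by
  simp only [Matrix.transpose_sub, Matrix.sub_mul, Matrix.mul_sub, Matrix.trace_sub]
  rw [trace_flip E F, trace_flip E H, trace_flip F H]
  linarith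

private lemma gram_isUnit {m r : ℕ} (Z : Matrix (Fin m) (Fin r) ℝ) (hZ : Z.rank = r) :
    IsUnit (Zᵀ * Z) := by
  rw [← Matrix.mulVec_surjective_iff_isUnit]
  have h : (Zᵀ * Z).rank = r := by rw [Matrix.rank_transpose_mul_self, hZ]
  have htop : LinearMap.range (Zᵀ * Z).mulVecLin = ⊤ := by
    apply Submodule.eq_top_of_finrank_eq
    rw [Matrix.rank] at h
    simp [h]
  have hs := LinearMap.range_eq_top.mp htop
  intro v
  obtain ⟨w, hw⟩ := hs v
  exact ⟨w, hw⟩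

/-- The pair `((I−UUᵀ)𝔛Z(ZᵀZ)⁻¹, 𝔛ᵀU)` is the unique minimizer over the horizontal space
of `J(A,B) = ½‖𝔛 − AZᵀ − UBᵀ‖²` (squared Frobenius norm written via the trace), and the
resulting tangent projection of `𝔛` is `(I−UUᵀ)𝔛Z(ZᵀZ)⁻¹Zᵀ + UUᵀ𝔛`. -/
theorem tangent_projection_is_unique_minimizer
    (l m r : ℕ) (U : Matrix (Fin l) (Fin r) ℝ) (Z : Matrix (Fin m) (Fin r) ℝ)
    (hU : Uᵀ * U = 1) (hZ : Z.rank = r)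
    (𝔛 : Matrix (Fin l) (Fin m) ℝ) :
    let J : Matrix (Fin l) (Fin r) ℝ → Matrix (Fin m) (Fin r) ℝ → ℝ := fun A B =>
      (1 / 2) * Matrix.trace ((𝔛 - A * Zᵀ - U * Bᵀ)ᵀ * (𝔛 - A * Zᵀ - U * Bᵀ))
    let XU : Matrix (Fin l) (Fin r) ℝ := (1 - U * Uᵀ) * 𝔛 * Z * (Zᵀ * Z)⁻¹
    let XZ : Matrix (Fin m) (Fin r) ℝ := 𝔛ᵀ * U
    Uᵀ * XU = 0 ∧
    (∀ (A : Matrix (Fin l) (Fin r) ℝ) (B : Matrix (Fin m) (Fin r) ℝ),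
      Uᵀ * A = 0 → J XU XZ ≤ J A B) ∧
    (∀ (A : Matrix (Fin l) (Fin r) ℝ) (B : Matrix (Fin m) (Fin r) ℝ),
      Uᵀ * A = 0 → J A B = J XU XZ → A = XU ∧ B = XZ) ∧
    XU * Zᵀ + U * XZᵀ = (1 - U * Uᵀ) * 𝔛 * Z * (Zᵀ * Z)⁻¹ * Zᵀ + U * Uᵀ * 𝔛 := by
  intro J XU XZ
  have hGdet : IsUnit (Zᵀ * Z).det := (Matrix.isUnit_iff_isUnit_det _).mp (gram_isUnit Z hZ)
  have hinvG : (Zᵀ * Z)⁻¹ * (Zᵀ * Z) = 1 := Matrix.nonsing_inv_mul _ hGdet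
  have hGinv : (Zᵀ * Z) * (Zᵀ * Z)⁻¹ = 1 := Matrix.mul_nonsing_inv _ hGdet
  have hUQ : Uᵀ * (1 - U * Uᵀ) = 0 := by
    rw [Matrix.mul_sub, Matrix.mul_one, ← Matrix.mul_assoc, hU, Matrix.one_mul, sub_self]
  -- Part 1: horizontality
  have hpart1 : Uᵀ * XU = 0 := by
    show Uᵀ * ((1 - U * Uᵀ) * 𝔛 * Z * (Zᵀ * Z)⁻¹) = 0
    simp only [← Matrix.mul_assoc, hUQ, Matrix.zero_mul]
  have hXZT : XZᵀ = Uᵀ * 𝔛 := by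
    show (𝔛ᵀ * U)ᵀ = Uᵀ * 𝔛
    rw [Matrix.transpose_mul, Matrix.transpose_transpose]
  set E : Matrix (Fin l) (Fin m) ℝ := 𝔛 - XU * Zᵀ - U * XZᵀ with hE
  have hcancel : ∀ (M : Matrix (Fin l) (Fin r) ℝ), M * (Zᵀ * Z)⁻¹ * Zᵀ * Z = M := by
    intro M
    rw [Matrix.mul_assoc (M * (Zᵀ * Z)⁻¹), Matrix.mul_assoc M, hinvG, Matrix.mul_one]
  have hEZ : E * Z = 0 := by
    rw [hE, hXZT]
    show (𝔛 - (1 - U * Uᵀ) * 𝔛 * Z * (Zᵀ * Z)⁻¹ * Zᵀ - U * (Uᵀ * 𝔛)) * Z = 0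
    rw [Matrix.sub_mul, Matrix.sub_mul, hcancel ((1 - U * Uᵀ) * 𝔛 * Z)]
    simp only [Matrix.sub_mul, Matrix.one_mul, ← Matrix.mul_assoc]
    abel
  have hUE : Uᵀ * E = 0 := by
    rw [hE, hXZT]
    simp only [Matrix.mul_sub, ← Matrix.mul_assoc]
    rw [show Uᵀ * XU * Zᵀ = 0 from by rw [hpart1, Matrix.zero_mul], hU, Matrix.one_mul]
    abel
  have hEU : Eᵀ * U = 0 := by
    have := congrArg Matrix.transpose hUE
    simpa [Matrix.transpose_mul] using this
  -- Key identity
  have key : ∀ (A : Matrix (Fin l) (Fin r) ℝ) (B : Matrix (Fin m) (Fin r) ℝ),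
      Uᵀ * A = 0 →
      J A B = J XU XZ
        + (1 / 2) * Matrix.trace (((A - XU) * Zᵀ)ᵀ * ((A - XU) * Zᵀ))
        + (1 / 2) * Matrix.trace (((B - XZ)ᵀ)ᵀ * (B - XZ)ᵀ) := by
    intro A B hA
    set D : Matrix (Fin l) (Fin r) ℝ := A - XU with hD
    set C : Matrix (Fin m) (Fin r) ℝ := B - XZ with hC
    have hsplit : 𝔛 - A * Zᵀ - U * Bᵀ = E - D * Zᵀ - U * Cᵀ := by
      rw [hE, hD, hC]
      simp only [Matrix.sub_mul, Matrix.transpose_sub, Matrix.mul_sub]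
      abel
    have hUD : Uᵀ * D = 0 := by rw [hD, Matrix.mul_sub, hA, hpart1, sub_self]
    have hDU : Dᵀ * U = 0 := by
      have := congrArg Matrix.transpose hUD
      simpa [Matrix.transpose_mul] using this
    have h1 : Matrix.trace (Eᵀ * (D * Zᵀ)) = 0 := by
      rw [← Matrix.mul_assoc, Matrix.trace_mul_cycle, ← Matrix.transpose_mul E Z, hEZ]
      simp
    have h2 : Matrix.trace (Eᵀ * (U * Cᵀ)) = 0 := by
      rw [← Matrix.mul_assoc, hEU, Matrix.zero_mul, Matrix.trace_zero]
    have h3 : Matrix.trace ((D * Zᵀ)ᵀ * (U * Cᵀ)) = 0 := by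
      rw [Matrix.transpose_mul, Matrix.transpose_transpose, Matrix.mul_assoc Z Dᵀ, ← Matrix.mul_assoc Dᵀ U Cᵀ, hDU,
        Matrix.zero_mul, Matrix.mul_zero, Matrix.trace_zero]
    have hUC : (U * Cᵀ)ᵀ * (U * Cᵀ) = (Cᵀ)ᵀ * Cᵀ := by
      rw [Matrix.transpose_mul, Matrix.mul_assoc, ← Matrix.mul_assoc Uᵀ U Cᵀ, hU,
        Matrix.one_mul]
    show (1 / 2) * Matrix.trace ((𝔛 - A * Zᵀ - U * Bᵀ)ᵀ * (𝔛 - A * Zᵀ - U * Bᵀ)) =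
      (1 / 2) * Matrix.trace ((𝔛 - XU * Zᵀ - U * XZᵀ)ᵀ * (𝔛 - XU * Zᵀ - U * XZᵀ))
        + (1 / 2) * Matrix.trace ((D * Zᵀ)ᵀ * (D * Zᵀ))
        + (1 / 2) * Matrix.trace ((Cᵀ)ᵀ * Cᵀ)
    rw [hsplit, ← hE, trace_expand E (D * Zᵀ) (U * Cᵀ) h1 h2 h3, hUC]
    ring
  refine ⟨hpart1, ?_, ?_, ?_⟩
  · intro A B hA
    rw [key A B hA]
    have n1 := trace_sq_nonneg ((A - XU) * Zᵀ)
    have n2 := trace_sq_nonneg ((B - XZ)ᵀ)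
    linarith
  · intro A B hA heq
    have k := key A B hA
    rw [heq] at k
    have n1 := trace_sq_nonneg ((A - XU) * Zᵀ)
    have n2 := trace_sq_nonneg ((B - XZ)ᵀ)
    have t1 : Matrix.trace (((A - XU) * Zᵀ)ᵀ * ((A - XU) * Zᵀ)) = 0 := by linarith
    have t2 : Matrix.trace (((B - XZ)ᵀ)ᵀ * ((B - XZ)ᵀ)) = 0 := by linarith
    have hDZ : (A - XU) * Zᵀ = 0 := eq_zero_of_trace_sq _ t1
    have hCT : (B - XZ)ᵀ = 0 := eq_zero_of_trace_sq _ t2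
    constructor
    · have h4 : (A - XU) * (Zᵀ * Z) = 0 := by
        rw [← Matrix.mul_assoc, hDZ, Matrix.zero_mul]
      have h5 : (A - XU) * ((Zᵀ * Z) * (Zᵀ * Z)⁻¹) = 0 := by
        rw [← Matrix.mul_assoc, h4, Matrix.zero_mul]
      rw [hGinv, Matrix.mul_one] at h5
      exact sub_eq_zero.mp h5
    · have : B - XZ = 0 := by
        have := congrArg Matrix.transpose hCT
        simpa using this
      exact sub_eq_zero.mp this
  · rw [hXZT, ← Matrix.mul_assoc]
end

section
/- Let R = UZᵀ with UᵀU = I and Z full rank r, and let N satisfy UᵀN = 0 and NZ = 0, with rank(N) = k. Then there exist orthonormal vectors u₁,…,u_{r+k} in ℝ^l, orthonormal vectors v₁,…,v_{r+k} in ℝ^m, and positive reals σ₁,…,σ_{r+k} such that UZᵀ = Σ_{i=1}^r σᵢ uᵢ vᵢᵀ and N = Σ_{i=1}^k σ_{r+i} u_{r+i} v_{r+i}ᵀ. -/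
open Matrix

private lemma onb_dot {n : ℕ} (w : OrthonormalBasis (Fin n) ℝ (EuclideanSpace ℝ (Fin n)))
    (i j : Fin n) :
    dotProduct (w i : Fin n → ℝ) (w j) = if i = j then 1 else 0 := by
  have h := w.orthonormal
  rw [orthonormal_iff_ite] at h
  rw [← h i j]
  simp [PiLp.inner_apply, dotProduct, mul_comm]

private lemma dot_mulVec_mulVec {l m n : ℕ} (A : Matrix (Fin l) (Fin m) ℝ)
    (B : Matrix (Fin l) (Fin n) ℝ) (x : Fin m → ℝ) (y : Fin n → ℝ) :
    dotProduct (A *ᵥ x) (B *ᵥ y) = dotProduct x ((Aᵀ * B) *ᵥ y) := by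
  rw [← mulVec_mulVec]
  rw [dotProduct_mulVec x, vecMul_transpose]

private lemma mul_vecMulVec {l m n : ℕ} (A : Matrix (Fin l) (Fin m) ℝ)
    (x : Fin m → ℝ) (y : Fin n → ℝ) :
    A * vecMulVec x y = vecMulVec (A *ᵥ x) y := by
  ext i j
  simp only [mul_apply, vecMulVec_apply, mulVec, dotProduct, Finset.sum_mul, mul_assoc]

private lemma vecMulVec_smul_left {l n : ℕ} (c : ℝ) (x : Fin l → ℝ) (y : Fin n → ℝ) :
    vecMulVec (c • x) y = c • vecMulVec x y := by
  ext i j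
  simp [vecMulVec_apply, mul_assoc]

private lemma vecMulVec_zero_left {l n : ℕ} (y : Fin n → ℝ) :
    vecMulVec (0 : Fin l → ℝ) y = 0 := by
  ext i j
  simp [vecMulVec_apply]

private lemma sum_vecMulVec_self {n : ℕ}
    (w : OrthonormalBasis (Fin n) ℝ (EuclideanSpace ℝ (Fin n))) :
    ∑ j : Fin n, vecMulVec (w j : Fin n → ℝ) (w j) = 1 := by
  classical
  set W : Matrix (Fin n) (Fin n) ℝ := Matrix.of fun i j => (w j : Fin n → ℝ) i with hW
  have hWtW : Wᵀ * W = 1 := by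
    ext a b
    have := onb_dot w a b
    simp only [mul_apply, transpose_apply, hW, Matrix.of_apply, one_apply]
    simpa [dotProduct] using this
  have hWWt : W * Wᵀ = 1 := mul_eq_one_comm.mp hWtW
  calc ∑ j : Fin n, vecMulVec (w j : Fin n → ℝ) (w j) = W * Wᵀ := by
        ext i i'
        simp [Matrix.sum_apply, vecMulVec_apply, mul_apply, hW]
    _ = 1 := hWWt

private lemma svd_exists {l m s : ℕ} (A : Matrix (Fin l) (Fin m) ℝ) (h : A.rank = s) :
    ∃ (u : Fin s → Fin l → ℝ) (v : Fin s → Fin m → ℝ) (σ : Fin s → ℝ),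
      (∀ i j, dotProduct (u i) (u j) = if i = j then 1 else 0) ∧
      (∀ i j, dotProduct (v i) (v j) = if i = j then 1 else 0) ∧
      (∀ i, 0 < σ i) ∧
      A = ∑ i, σ i • vecMulVec (u i) (v i) ∧
      (∀ i, σ i • u i = A *ᵥ v i) ∧ (∀ i, σ i • v i = Aᵀ *ᵥ u i) := by
  classical
  have hB : (Aᵀ * A).IsHermitian := by
    have := isHermitian_conjTranspose_mul_self A
    rwa [conjTranspose_eq_transpose_of_trivial] at this
  have hPSD : (Aᵀ * A).PosSemidef := by
    have := posSemidef_conjTranspose_mul_self A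
    rwa [conjTranspose_eq_transpose_of_trivial] at this
  set μ : Fin m → ℝ := hB.eigenvalues with hμdef
  set w := hB.eigenvectorBasis with hwdef
  have hμ0 : ∀ j, 0 ≤ μ j := fun j => hPSD.eigenvalues_nonneg j
  have hBw : ∀ j, (Aᵀ * A) *ᵥ (w j : Fin m → ℝ) = μ j • (w j : Fin m → ℝ) :=
    fun j => hB.mulVec_eigenvectorBasis j
  have hdot : ∀ x y : Fin m → ℝ,
      dotProduct (A *ᵥ x) (A *ᵥ y) = dotProduct x ((Aᵀ * A) *ᵥ y) :=
    fun x y => dot_mulVec_mulVec A A x y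
  have hcard : Fintype.card {j // μ j ≠ 0} = s := by
    rw [← hB.rank_eq_card_non_zero_eigs, rank_transpose_mul_self, h]
  let e : Fin s ≃ {j // μ j ≠ 0} := (Fintype.equivFinOfCardEq hcard).symm
  have hμpos : ∀ i : Fin s, 0 < μ (e i) := fun i =>
    lt_of_le_of_ne (hμ0 _) (Ne.symm (e i).2)
  set σ : Fin s → ℝ := fun i => Real.sqrt (μ (e i)) with hσdef
  have hσpos : ∀ i, 0 < σ i := fun i => Real.sqrt_pos.mpr (hμpos i)
  have hσsq : ∀ i, σ i * σ i = μ (e i) := fun i => Real.mul_self_sqrt (hμ0 _)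
  set v : Fin s → Fin m → ℝ := fun i => (w (e i) : Fin m → ℝ) with hvdef
  set u : Fin s → Fin l → ℝ := fun i => (σ i)⁻¹ • (A *ᵥ v i) with hudef
  -- dot products of images
  have hwdot : ∀ (a b : Fin m),
      dotProduct (A *ᵥ (w a : Fin m → ℝ)) (A *ᵥ (w b : Fin m → ℝ))
        = μ b * (if a = b then 1 else 0) := by
    intro a b
    rw [hdot, hBw b, dotProduct_smul, smul_eq_mul, onb_dot w a b]
  have hAv : ∀ i j : Fin s, dotProduct (A *ᵥ v i) (A *ᵥ v j)
      = μ (e j) * (if i = j then 1 else 0) := by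
    intro i j
    rw [hvdef]
    simp only []
    rw [hwdot (e i) (e j)]
    congr 1
    have : ((e i : Fin m) = (e j : Fin m)) ↔ i = j := by
      rw [Subtype.coe_inj, e.injective.eq_iff]
    simp [this]
  have hvdot : ∀ i j : Fin s, dotProduct (v i) (v j) = if i = j then 1 else 0 := by
    intro i j
    rw [hvdef]
    simp only []
    rw [onb_dot w (e i) (e j)]
    congr 1
    have : ((e i : Fin m) = (e j : Fin m)) ↔ i = j := by
      rw [Subtype.coe_inj, e.injective.eq_iff]
    simp [this]
  have hudot : ∀ i j : Fin s, dotProduct (u i) (u j) = if i = j then 1 else 0 := by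
    intro i j
    rw [hudef]
    simp only [smul_dotProduct, dotProduct_smul, smul_eq_mul]
    rw [hAv i j]
    by_cases hij : i = j
    · subst hij
      rw [if_pos rfl, mul_one, ← hσsq i]
      have hne := (hσpos i).ne'
      field_simp
    · rw [if_neg hij]
      simp
  have hσu : ∀ i, σ i • u i = A *ᵥ v i := by
    intro i
    rw [hudef]
    simp only []
    rw [smul_inv_smul₀ (hσpos i).ne']
  have hσv : ∀ i, σ i • v i = Aᵀ *ᵥ u i := by
    intro i
    rw [hudef]
    simp only []
    rw [mulVec_smul, mulVec_mulVec, hBw (e i)]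
    have : (μ (e i) : ℝ) = σ i * σ i := (hσsq i).symm
    rw [hvdef]
    simp only []
    rw [this, ← smul_smul, inv_smul_smul₀ (hσpos i).ne']
  -- zero eigenvalue directions are killed by A
  have hz : ∀ j : Fin m, μ j = 0 → A *ᵥ (w j : Fin m → ℝ) = 0 := by
    intro j hj
    have h0 : dotProduct (A *ᵥ (w j : Fin m → ℝ)) (A *ᵥ (w j : Fin m → ℝ)) = 0 := by
      rw [hwdot j j, hj, zero_mul]
    exact dotProduct_self_eq_zero.mp h0
  -- the sum decomposition
  have h1 : A = ∑ j : Fin m, vecMulVec (A *ᵥ (w j : Fin m → ℝ)) (w j : Fin m → ℝ) := by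
    calc A = A * (1 : Matrix (Fin m) (Fin m) ℝ) := (Matrix.mul_one A).symm
      _ = A * ∑ j : Fin m, vecMulVec (w j : Fin m → ℝ) (w j : Fin m → ℝ) := by
          rw [sum_vecMulVec_self w]
      _ = ∑ j : Fin m, A * vecMulVec (w j : Fin m → ℝ) (w j : Fin m → ℝ) := by
          rw [Matrix.mul_sum]
      _ = ∑ j : Fin m, vecMulVec (A *ᵥ (w j : Fin m → ℝ)) (w j : Fin m → ℝ) := by
          refine Finset.sum_congr rfl fun j _ => ?_
          rw [_root_.mul_vecMulVec]
  have h2 : A = ∑ i : Fin s, σ i • vecMulVec (u i) (v i) := by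
    rw [h1]
    have hfilter : ∑ j ∈ Finset.univ.filter (fun j => μ j ≠ 0),
        vecMulVec (A *ᵥ (w j : Fin m → ℝ)) (w j : Fin m → ℝ)
        = ∑ j : Fin m, vecMulVec (A *ᵥ (w j : Fin m → ℝ)) (w j : Fin m → ℝ) := by
      refine Finset.sum_filter_of_ne fun j _ hne => ?_
      intro hj0
      apply hne
      rw [hz j hj0, vecMulVec_zero_left]
    rw [← hfilter]
    have hsub : ∑ j ∈ Finset.univ.filter (fun j => μ j ≠ 0),
        vecMulVec (A *ᵥ (w j : Fin m → ℝ)) (w j : Fin m → ℝ)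
        = ∑ j : {j // μ j ≠ 0},
            vecMulVec (A *ᵥ (w (j : Fin m) : Fin m → ℝ)) (w (j : Fin m) : Fin m → ℝ) :=
      Finset.sum_subtype _ (fun x => by simp) _
    rw [hsub]
    rw [← Equiv.sum_comp e (fun j : {j // μ j ≠ 0} =>
      vecMulVec (A *ᵥ (w (j : Fin m) : Fin m → ℝ)) (w (j : Fin m) : Fin m → ℝ))]
    refine Finset.sum_congr rfl fun i _ => ?_
    have : A *ᵥ (w ((e i : {j // μ j ≠ 0}) : Fin m) : Fin m → ℝ) = σ i • u i := (hσu i).symm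
    rw [this, vecMulVec_smul_left]
  exact ⟨u, v, σ, hudot, hvdot, hσpos, h2, hσu, hσv⟩

/-- A rank-`r` point `R = UZᵀ` together with a rank-`k` normal vector `N` (`UᵀN = 0`,
`NZ = 0`) admit a joint singular value decomposition: there are orthonormal families
`(uᵢ)`, `(vᵢ)` of length `r+k` and positive `σᵢ` with `UZᵀ = Σ_{i<r} σᵢ uᵢvᵢᵀ` and
`N = Σ_{j<k} σ_{r+j} u_{r+j} v_{r+j}ᵀ`. -/
theorem normal_vector_joint_svd
    (l m r k : ℕ) (U : Matrix (Fin l) (Fin r) ℝ) (Z : Matrix (Fin m) (Fin r) ℝ)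
    (hU : Uᵀ * U = 1) (hZ : Z.rank = r)
    (N : Matrix (Fin l) (Fin m) ℝ) (hN1 : Uᵀ * N = 0) (hN2 : N * Z = 0)
    (hNk : N.rank = k) :
    ∃ (u : Fin (r + k) → Fin l → ℝ) (v : Fin (r + k) → Fin m → ℝ) (σ : Fin (r + k) → ℝ),
      (∀ i j, dotProduct (u i) (u j) = if i = j then 1 else 0) ∧
      (∀ i j, dotProduct (v i) (v j) = if i = j then 1 else 0) ∧
      (∀ i, 0 < σ i) ∧
      U * Zᵀ = ∑ i : Fin r,
        σ (Fin.castAdd k i) • vecMulVec (u (Fin.castAdd k i)) (v (Fin.castAdd k i)) ∧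
      N = ∑ j : Fin k,
        σ (Fin.natAdd r j) • vecMulVec (u (Fin.natAdd r j)) (v (Fin.natAdd r j)) := by
  classical
  -- rank of U * Zᵀ is r
  have hRrank : (U * Zᵀ).rank = r := by
    have hle : (U * Zᵀ).rank ≤ r := by
      refine (rank_mul_le_right U Zᵀ).trans ?_
      rw [rank_transpose, hZ]
    have heq : Uᵀ * (U * Zᵀ) = Zᵀ := by rw [← Matrix.mul_assoc, hU, Matrix.one_mul]
    have hge : r ≤ (U * Zᵀ).rank := by
      have h := rank_mul_le_right Uᵀ (U * Zᵀ)
      rw [heq, rank_transpose, hZ] at h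
      exact h
    exact le_antisymm hle hge
  obtain ⟨u1, v1, σ1, hu1, hv1, hσ1, hsum1, hAv1, hATu1⟩ := svd_exists (U * Zᵀ) hRrank
  obtain ⟨u2, v2, σ2, hu2, hv2, hσ2, hsum2, hNv2, hNTu2⟩ := svd_exists N hNk
  -- cross orthogonality for u
  have hATN : (U * Zᵀ)ᵀ * N = 0 := by
    rw [transpose_mul, transpose_transpose, Matrix.mul_assoc, hN1, Matrix.mul_zero]
  have hANt : (U * Zᵀ)ᵀᵀ * Nᵀ = 0 := by
    rw [transpose_transpose, Matrix.mul_assoc, ← transpose_mul, hN2, transpose_zero, Matrix.mul_zero]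
  have hcross_u : ∀ i j, dotProduct (u1 i) (u2 j) = 0 := by
    intro i j
    have h := congrArg₂ dotProduct (hAv1 i) (hNv2 j)
    rw [dot_mulVec_mulVec, hATN] at h
    simp only [smul_dotProduct, dotProduct_smul, smul_eq_mul, zero_mulVec,
      dotProduct_zero] at h
    simpa [mul_eq_zero, (hσ1 i).ne', (hσ2 j).ne'] using h
  have hcross_v : ∀ i j, dotProduct (v1 i) (v2 j) = 0 := by
    intro i j
    have h := congrArg₂ dotProduct (hATu1 i) (hNTu2 j)
    rw [dot_mulVec_mulVec, hANt] at h
    simp only [smul_dotProduct, dotProduct_smul, smul_eq_mul, zero_mulVec,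
      dotProduct_zero] at h
    simpa [mul_eq_zero, (hσ1 i).ne', (hσ2 j).ne'] using h
  refine ⟨Fin.append u1 u2, Fin.append v1 v2, Fin.append σ1 σ2, ?_, ?_, ?_, ?_, ?_⟩
  · intro i j
    refine Fin.addCases (fun i₁ => Fin.addCases (fun j₁ => ?_) (fun j₂ => ?_) j)
      (fun i₂ => Fin.addCases (fun j₁ => ?_) (fun j₂ => ?_) j) i
    · rw [Fin.append_left, Fin.append_left, hu1 i₁ j₁]
      simp [Fin.ext_iff]
    · have hne : Fin.castAdd k i₁ ≠ Fin.natAdd r j₂ := by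
        intro hcontra
        have hval := congrArg Fin.val hcontra
        simp only [Fin.coe_castAdd, Fin.coe_natAdd] at hval
        omega
      rw [Fin.append_left, Fin.append_right, hcross_u i₁ j₂, if_neg hne]
    · have hne : Fin.natAdd r i₂ ≠ Fin.castAdd k j₁ := by
        intro hcontra
        have hval := congrArg Fin.val hcontra
        simp only [Fin.coe_castAdd, Fin.coe_natAdd] at hval
        omega
      rw [Fin.append_right, Fin.append_left, dotProduct_comm, hcross_u j₁ i₂, if_neg hne]
    · rw [Fin.append_right, Fin.append_right, hu2 i₂ j₂]
      simp [Fin.ext_iff]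
  · intro i j
    refine Fin.addCases (fun i₁ => Fin.addCases (fun j₁ => ?_) (fun j₂ => ?_) j)
      (fun i₂ => Fin.addCases (fun j₁ => ?_) (fun j₂ => ?_) j) i
    · rw [Fin.append_left, Fin.append_left, hv1 i₁ j₁]
      simp [Fin.ext_iff]
    · have hne : Fin.castAdd k i₁ ≠ Fin.natAdd r j₂ := by
        intro hcontra
        have hval := congrArg Fin.val hcontra
        simp only [Fin.coe_castAdd, Fin.coe_natAdd] at hval
        omega
      rw [Fin.append_left, Fin.append_right, hcross_v i₁ j₂, if_neg hne]
    · have hne : Fin.natAdd r i₂ ≠ Fin.castAdd k j₁ := by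
        intro hcontra
        have hval := congrArg Fin.val hcontra
        simp only [Fin.coe_castAdd, Fin.coe_natAdd] at hval
        omega
      rw [Fin.append_right, Fin.append_left, dotProduct_comm, hcross_v j₁ i₂, if_neg hne]
    · rw [Fin.append_right, Fin.append_right, hv2 i₂ j₂]
      simp [Fin.ext_iff]
  · intro i
    refine Fin.addCases (fun i₁ => ?_) (fun i₂ => ?_) i
    · rw [Fin.append_left]; exact hσ1 i₁
    · rw [Fin.append_right]; exact hσ2 i₂
  · simp only [Fin.append_left]
    exact hsum1
  · simp only [Fin.append_right]
    exact hsum2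
end

section
/- With R = Σ_{i=1}^r σᵢ uᵢvᵢᵀ and N = Σ_{j=1}^k σ_{r+j} u_{r+j} v_{r+j}ᵀ (with (uᵢ), (vᵢ) orthonormal families and all σᵢ > 0 as above), for each 1 ≤ i ≤ r and 1 ≤ j ≤ k the vectors Φ_{i,r+j}^± = (1/√2)(u_{r+j} vᵢᵀ ± uᵢ v_{r+j}ᵀ) are eigenvectors of the Weingarten map L_R(N) with eigenvalues ± σ_{r+j}/σᵢ. -/
open Matrix

lemma vmv_mul {α β γ : Type*} [Fintype β] (a : α → ℝ) (b c : β → ℝ) (d : γ → ℝ) :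
    vecMulVec a b * vecMulVec c d = dotProduct b c • vecMulVec a d := by
  ext i j
  simp only [mul_apply, vecMulVec_apply, Matrix.smul_apply, smul_eq_mul, dotProduct, Finset.sum_mul]
  exact Finset.sum_congr rfl fun x _ => by ring

lemma vmv_transpose {α β : Type*} (a : α → ℝ) (b : β → ℝ) :
    (vecMulVec a b)ᵀ = vecMulVec b a := by
  ext i j; simp [vecMulVec_apply, mul_comm]

lemma castAdd_ne_natAdd {r k : ℕ} (i : Fin r) (j : Fin k) :
    Fin.castAdd k i ≠ Fin.natAdd r j := by
  intro h
  have := congrArg Fin.val h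
  simp at this
  omega

@[simp] lemma fin_castAdd_eq {r k : ℕ} (i' i : Fin r) :
    (Fin.castAdd k i' = Fin.castAdd k i) ↔ i' = i := by
  constructor
  · intro h; exact Fin.ext (by simpa using congrArg Fin.val h)
  · rintro rfl; rfl

@[simp] lemma fin_natAdd_eq {r k : ℕ} (j' j : Fin k) :
    (Fin.natAdd r j' = Fin.natAdd r j) ↔ j' = j := by
  constructor
  · intro h; have := congrArg Fin.val h; simp at this; exact Fin.ext (by omega)
  · rintro rfl; rfl

@[simp] lemma fin_castAdd_ne_natAdd {r k : ℕ} (i : Fin r) (j : Fin k) :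
    (Fin.castAdd k i = Fin.natAdd r j) ↔ False := by
  simp only [iff_false]; exact castAdd_ne_natAdd i j

@[simp] lemma fin_natAdd_ne_castAdd {r k : ℕ} (i : Fin r) (j : Fin k) :
    (Fin.natAdd r j = Fin.castAdd k i) ↔ False := by
  simp only [iff_false]; exact fun h => castAdd_ne_natAdd i j h.symm

/-- The vectors `Φ_{i,r+j}^± = (1/√2)(u_{r+j}vᵢᵀ ± uᵢv_{r+j}ᵀ)` are eigenvectors of the
Weingarten map `L_R(N)` with eigenvalues `± σ_{r+j}/σᵢ`. -/
theorem weingarten_map_eigenvectors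
    (l m r k : ℕ)
    (u : Fin (r + k) → Fin l → ℝ) (v : Fin (r + k) → Fin m → ℝ) (σ : Fin (r + k) → ℝ)
    (hu : ∀ i j, dotProduct (u i) (u j) = if i = j then 1 else 0)
    (hv : ∀ i j, dotProduct (v i) (v j) = if i = j then 1 else 0)
    (hσ : ∀ i, 0 < σ i)
    (R N : Matrix (Fin l) (Fin m) ℝ)
    (hR : R = ∑ i : Fin r,
      σ (Fin.castAdd k i) • vecMulVec (u (Fin.castAdd k i)) (v (Fin.castAdd k i)))
    (hN : N = ∑ j : Fin k,
      σ (Fin.natAdd r j) • vecMulVec (u (Fin.natAdd r j)) (v (Fin.natAdd r j))) :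
    let L : Matrix (Fin l) (Fin m) ℝ → Matrix (Fin l) (Fin m) ℝ := fun X =>
      ∑ i : Fin r, ∑ j : Fin k,
        (σ (Fin.natAdd r j) / σ (Fin.castAdd k i)) •
          (vecMulVec (u (Fin.castAdd k i)) (v (Fin.castAdd k i)) * Xᵀ *
              vecMulVec (u (Fin.natAdd r j)) (v (Fin.natAdd r j)) +
            vecMulVec (u (Fin.natAdd r j)) (v (Fin.natAdd r j)) * Xᵀ *
              vecMulVec (u (Fin.castAdd k i)) (v (Fin.castAdd k i)))
    ∀ (i : Fin r) (j : Fin k),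
      let Φp : Matrix (Fin l) (Fin m) ℝ := (1 / Real.sqrt 2) •
        (vecMulVec (u (Fin.natAdd r j)) (v (Fin.castAdd k i)) +
          vecMulVec (u (Fin.castAdd k i)) (v (Fin.natAdd r j)))
      let Φm : Matrix (Fin l) (Fin m) ℝ := (1 / Real.sqrt 2) •
        (vecMulVec (u (Fin.natAdd r j)) (v (Fin.castAdd k i)) -
          vecMulVec (u (Fin.castAdd k i)) (v (Fin.natAdd r j)))
      L Φp = (σ (Fin.natAdd r j) / σ (Fin.castAdd k i)) • Φp ∧
      L Φm = -((σ (Fin.natAdd r j) / σ (Fin.castAdd k i))) • Φm := by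
  intro L i j Φp Φm
  constructor
  · show (∑ i' : Fin r, ∑ j' : Fin k, _) = _
    simp only [Φp, transpose_smul, transpose_add, vmv_transpose, Matrix.mul_smul,
      Matrix.smul_mul, Matrix.mul_add, Matrix.add_mul, vmv_mul, hu, hv,
      fin_castAdd_eq, fin_natAdd_eq, fin_castAdd_ne_natAdd, fin_natAdd_ne_castAdd,
      if_false, smul_smul]
    simp only [mul_ite, ite_mul, mul_one, mul_zero, one_mul, zero_mul, ite_smul,
      zero_smul, smul_zero, smul_ite, one_smul, add_zero, zero_add, smul_add,
      Finset.sum_add_distrib, Finset.sum_ite_irrel, Finset.sum_const_zero,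
      Finset.sum_ite_eq, Finset.sum_ite_eq',
      Finset.mem_univ, if_true]
    module
  · show (∑ i' : Fin r, ∑ j' : Fin k, _) = _
    simp only [Φm, transpose_smul, transpose_sub, vmv_transpose, Matrix.mul_smul,
      Matrix.smul_mul, Matrix.mul_sub, Matrix.sub_mul, vmv_mul, hu, hv,
      fin_castAdd_eq, fin_natAdd_eq, fin_castAdd_ne_natAdd, fin_natAdd_ne_castAdd,
      if_false, smul_smul]
    simp only [mul_ite, ite_mul, mul_one, mul_zero, one_mul, zero_mul, ite_smul,
      zero_smul, smul_zero, smul_ite, one_smul, sub_zero, zero_sub, smul_sub,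
      smul_neg, neg_zero, smul_add, Finset.sum_add_distrib,
      Finset.sum_sub_distrib, Finset.sum_neg_distrib,
      Finset.sum_ite_irrel, Finset.sum_const_zero,
      Finset.sum_ite_eq, Finset.sum_ite_eq',
      Finset.mem_univ, if_true]
    module
end

section
/- In the setting above, the kernel of the Weingarten map L_R(N) equals span{uᵢ vᵀ : 1 ≤ i ≤ r, Nv = 0} ⊕ span{u vᵢᵀ : 1 ≤ i ≤ r, uᵀN = 0 and uᵀU = 0}, of dimension (m−k)r + (l−k−r)r, and together with the 2kr eigenvectors Φ_{i,r+j}^± this gives a complete eigendecomposition of L_R(N) on the tangent space, which has dimension (l+m)r − r². -/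
open Matrix

/-- The linear map `X ↦ A * X * B`. -/
def mulLeftRight {l m : ℕ} (A : Matrix (Fin l) (Fin l) ℝ) (B : Matrix (Fin m) (Fin m) ℝ) :
    Matrix (Fin l) (Fin m) ℝ →ₗ[ℝ] Matrix (Fin l) (Fin m) ℝ where
  toFun X := A * X * B
  map_add' X Y := by simp [Matrix.mul_add, Matrix.add_mul]
  map_smul' c X := by simp [Matrix.mul_smul, Matrix.smul_mul]


section Aux

lemma vmv_mul_vmv {n p q : ℕ} (a : Fin n → ℝ) (b c : Fin p → ℝ) (d : Fin q → ℝ) :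
    vecMulVec a b * vecMulVec c d = (b ⬝ᵥ c) • vecMulVec a d := by
  ext i j
  simp [vecMulVec_apply, mul_apply, dotProduct, Finset.sum_mul, Finset.mul_sum]
  congr 1; ext x; ring

lemma mul_vmv {n p q : ℕ} (M : Matrix (Fin n) (Fin p) ℝ) (a : Fin p → ℝ) (b : Fin q → ℝ) :
    M * vecMulVec a b = vecMulVec (M.mulVec a) b := by
  ext i j
  simp [vecMulVec_apply, mul_apply, mulVec, dotProduct, Finset.sum_mul]
  congr 1; ext x; ring

lemma vmv_mul_s8 {n p q : ℕ} (a : Fin n → ℝ) (b : Fin p → ℝ) (M : Matrix (Fin p) (Fin q) ℝ) :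
    vecMulVec a b * M = vecMulVec a (vecMul b M) := by
  ext i j
  simp [vecMulVec_apply, mul_apply, vecMul, dotProduct, Finset.mul_sum]
  congr 1; ext x; ring

lemma vmv_mul_mul_vmv {n p q s : ℕ} (a : Fin n → ℝ) (b : Fin p → ℝ)
    (M : Matrix (Fin p) (Fin q) ℝ) (c : Fin q → ℝ) (d : Fin s → ℝ) :
    vecMulVec a b * M * vecMulVec c d = (b ⬝ᵥ M.mulVec c) • vecMulVec a d := by
  rw [vmv_mul_s8, vmv_mul_vmv, dotProduct_mulVec]

lemma vmv_mulVec {n p : ℕ} (a : Fin n → ℝ) (b : Fin p → ℝ) (w : Fin p → ℝ) :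
    (vecMulVec a b).mulVec w = (b ⬝ᵥ w) • a := by
  ext i
  simp [vecMulVec_apply, mulVec, dotProduct, Finset.sum_mul]
  exact Finset.sum_congr rfl fun x _ => by ring

lemma vecMul_vmv {n p : ℕ} (w : Fin n → ℝ) (a : Fin n → ℝ) (b : Fin p → ℝ) :
    vecMul w (vecMulVec a b) = (w ⬝ᵥ a) • b := by
  ext j
  simp [vecMulVec_apply, vecMul, dotProduct, Finset.sum_mul]
  exact Finset.sum_congr rfl fun x _ => by ring

lemma sum_mulVec {n p a : ℕ} (M : Fin a → Matrix (Fin n) (Fin p) ℝ) (w : Fin p → ℝ) :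
    (∑ i, M i).mulVec w = ∑ i, (M i).mulVec w := by
  ext j
  simp [mulVec, dotProduct, Matrix.sum_apply, Finset.sum_mul]
  rw [Finset.sum_comm]

lemma vecMul_sum {n p a : ℕ} (w : Fin n → ℝ) (M : Fin a → Matrix (Fin n) (Fin p) ℝ) :
    vecMul w (∑ i, M i) = ∑ i, vecMul w (M i) := by
  ext j
  simp [vecMul, dotProduct, Matrix.sum_apply, Finset.mul_sum]
  rw [Finset.sum_comm]

lemma dotProduct_sum' {n a : ℕ} (u : Fin n → ℝ) (w : Fin a → Fin n → ℝ) :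
    u ⬝ᵥ (∑ i, w i) = ∑ i, u ⬝ᵥ w i := by
  simp [dotProduct, Finset.sum_apply, Finset.mul_sum]
  rw [Finset.sum_comm]

lemma sum_vmv_mul_sum_vmv {n a b : ℕ} (f : Fin a → Fin n → ℝ) (g : Fin b → Fin n → ℝ) :
    (∑ i, vecMulVec (f i) (f i)) * (∑ j, vecMulVec (g j) (g j))
      = ∑ i, ∑ j, (f i ⬝ᵥ g j) • vecMulVec (f i) (g j) := by
  rw [Finset.sum_mul]
  refine Finset.sum_congr rfl fun i _ => ?_
  rw [Finset.mul_sum]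
  exact Finset.sum_congr rfl fun j _ => vmv_mul_vmv _ _ _ _

lemma mulLeftRight_apply {l m : ℕ} (A : Matrix (Fin l) (Fin l) ℝ) (B : Matrix (Fin m) (Fin m) ℝ)
    (X : Matrix (Fin l) (Fin m) ℝ) : mulLeftRight A B X = A * X * B := rfl

lemma mulLeftRight_comp {l m : ℕ} (A A' : Matrix (Fin l) (Fin l) ℝ)
    (B B' : Matrix (Fin m) (Fin m) ℝ) :
    (mulLeftRight A B) ∘ₗ (mulLeftRight A' B') = mulLeftRight (A * A') (B' * B) := by
  ext X
  simp only [LinearMap.comp_apply, mulLeftRight_apply, Matrix.mul_assoc]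

lemma stdBasis_repr' {m n : ℕ} (M : Matrix (Fin m) (Fin n) ℝ) (p : Fin m × Fin n) :
    (Matrix.stdBasis ℝ (Fin m) (Fin n)).repr M p = M p.1 p.2 := by
  obtain ⟨i, j⟩ := p
  simp [Matrix.stdBasis, Pi.basis_repr]

lemma trace_mulLeftRight {l m : ℕ} (A : Matrix (Fin l) (Fin l) ℝ)
    (B : Matrix (Fin m) (Fin m) ℝ) :
    LinearMap.trace ℝ _ (mulLeftRight A B) = A.trace * B.trace := by
  rw [LinearMap.trace_eq_matrix_trace ℝ (Matrix.stdBasis ℝ (Fin l) (Fin m))]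
  rw [Matrix.trace]
  have : ∀ p : Fin l × Fin m,
      (LinearMap.toMatrix (Matrix.stdBasis ℝ (Fin l) (Fin m))
        (Matrix.stdBasis ℝ (Fin l) (Fin m)) (mulLeftRight A B)).diag p = A p.1 p.1 * B p.2 p.2 := by
    rintro ⟨i, j⟩
    rw [Matrix.diag, LinearMap.toMatrix_apply, stdBasis_repr']
    rw [Matrix.stdBasis_eq_single, mulLeftRight_apply]
    simp [Matrix.mul_apply, Matrix.single, Finset.sum_mul, ite_and,
      Finset.sum_ite_eq, Finset.sum_ite_eq']
  rw [Finset.sum_congr rfl (fun p _ => this p)]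
  rw [Matrix.trace, Matrix.trace, Finset.sum_mul_sum]
  rw [Fintype.sum_prod_type]
  rfl

lemma trace_vmv {n : ℕ} (a b : Fin n → ℝ) : (vecMulVec a b).trace = a ⬝ᵥ b := by
  simp [Matrix.trace, Matrix.diag, vecMulVec_apply, dotProduct]

/-- The pairing `X ↦ c ⬝ᵥ X *ᵥ d` as a linear map. -/
def pairLM {l m : ℕ} (c : Fin l → ℝ) (d : Fin m → ℝ) :
    Matrix (Fin l) (Fin m) ℝ →ₗ[ℝ] ℝ where
  toFun X := c ⬝ᵥ X.mulVec d
  map_add' X Y := by simp [Matrix.add_mulVec, dotProduct_add]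
  map_smul' t X := by
    simp [Matrix.smul_mulVec, dotProduct_smul]

lemma pairLM_vmv {l m : ℕ} (c a : Fin l → ℝ) (b d : Fin m → ℝ) :
    pairLM c d (vecMulVec a b) = (c ⬝ᵥ a) * (b ⬝ᵥ d) := by
  simp [pairLM, vmv_mulVec, dotProduct_smul]
  ring

lemma coeff_zero {n a : ℕ} (f : Fin a → Fin n → ℝ)
    (hf : ∀ i j, f i ⬝ᵥ f j = if i = j then 1 else 0) (c : Fin a → ℝ)
    (h : ∑ j, c j • f j = 0) : ∀ j, c j = 0 := by
  intro j
  have h2 := congrArg (fun w => f j ⬝ᵥ w) h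
  simpa [dotProduct_sum', dotProduct_smul, hf, Finset.sum_ite_eq'] using h2

lemma vecMul_smul_mat {n p : ℕ} (w : Fin n → ℝ) (c : ℝ) (M : Matrix (Fin n) (Fin p) ℝ) :
    vecMul w (c • M) = c • vecMul w M := by
  ext j
  simp [vecMul, dotProduct, Finset.mul_sum]
  exact Finset.sum_congr rfl fun x _ => by ring

lemma vmv_zero_left {n p : ℕ} (b : Fin p → ℝ) :
    vecMulVec (0 : Fin n → ℝ) b = 0 := by
  ext i j; simp [vecMulVec_apply]

lemma vmv_zero_right {n p : ℕ} (a : Fin n → ℝ) :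
    vecMulVec a (0 : Fin p → ℝ) = 0 := by
  ext i j; simp [vecMulVec_apply]

end Aux

/-- Kernel of the Weingarten map and the complete eigendecomposition on the tangent space:
the kernel of `L_R(N)` restricted to the tangent space is
`span{uᵢvᵀ : Nv = 0} ⊕ span{uvᵢᵀ : uᵀN = 0, uᵀU = 0}` of dimension `(m−k)r + (l−k−r)r`;
together with the `2kr` eigenvectors `Φ±` it spans the whole tangent space, whose dimension
is `(l+m)r − r²`. -/
theorem weingarten_kernel_and_eigendecomposition
    (l m r k : ℕ) (hlk : r + k ≤ l) (hmk : r + k ≤ m)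
    (u : Fin (r + k) → Fin l → ℝ) (v : Fin (r + k) → Fin m → ℝ) (σ : Fin (r + k) → ℝ)
    (hu : ∀ i j, dotProduct (u i) (u j) = if i = j then 1 else 0)
    (hv : ∀ i j, dotProduct (v i) (v j) = if i = j then 1 else 0)
    (hσ : ∀ i, 0 < σ i)
    (N : Matrix (Fin l) (Fin m) ℝ)
    (hN : N = ∑ j : Fin k,
      σ (Fin.natAdd r j) • vecMulVec (u (Fin.natAdd r j)) (v (Fin.natAdd r j))) :
    let PU : Matrix (Fin l) (Fin l) ℝ :=
      ∑ i : Fin r, vecMulVec (u (Fin.castAdd k i)) (u (Fin.castAdd k i))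
    let PV : Matrix (Fin m) (Fin m) ℝ :=
      ∑ i : Fin r, vecMulVec (v (Fin.castAdd k i)) (v (Fin.castAdd k i))
    -- tangent space at `R`, as the kernel of `X ↦ (1−PU) X (1−PV)`
    let T : Submodule ℝ (Matrix (Fin l) (Fin m) ℝ) :=
      LinearMap.ker (mulLeftRight (1 - PU) (1 - PV))
    let L : Matrix (Fin l) (Fin m) ℝ → Matrix (Fin l) (Fin m) ℝ := fun X =>
      ∑ i : Fin r, ∑ j : Fin k,
        (σ (Fin.natAdd r j) / σ (Fin.castAdd k i)) •
          (vecMulVec (u (Fin.castAdd k i)) (v (Fin.castAdd k i)) * Xᵀ *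
              vecMulVec (u (Fin.natAdd r j)) (v (Fin.natAdd r j)) +
            vecMulVec (u (Fin.natAdd r j)) (v (Fin.natAdd r j)) * Xᵀ *
              vecMulVec (u (Fin.castAdd k i)) (v (Fin.castAdd k i)))
    let K1 : Set (Matrix (Fin l) (Fin m) ℝ) :=
      {M | ∃ (i : Fin r) (w : Fin m → ℝ), N.mulVec w = 0 ∧
        M = vecMulVec (u (Fin.castAdd k i)) w}
    let K2 : Set (Matrix (Fin l) (Fin m) ℝ) :=
      {M | ∃ (i : Fin r) (w : Fin l → ℝ), Matrix.vecMul w N = 0 ∧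
        (∀ i' : Fin r, dotProduct w (u (Fin.castAdd k i')) = 0) ∧
        M = vecMulVec w (v (Fin.castAdd k i))}
    let Φs : Set (Matrix (Fin l) (Fin m) ℝ) :=
      {M | ∃ (i : Fin r) (j : Fin k),
        M = (1 / Real.sqrt 2) •
          (vecMulVec (u (Fin.natAdd r j)) (v (Fin.castAdd k i)) +
            vecMulVec (u (Fin.castAdd k i)) (v (Fin.natAdd r j))) ∨
        M = (1 / Real.sqrt 2) •
          (vecMulVec (u (Fin.natAdd r j)) (v (Fin.castAdd k i)) -
            vecMulVec (u (Fin.castAdd k i)) (v (Fin.natAdd r j)))}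
    (∀ X ∈ T, (L X = 0 ↔ X ∈ Submodule.span ℝ (K1 ∪ K2))) ∧
    Module.finrank ℝ (Submodule.span ℝ (K1 ∪ K2)) = (m - k) * r + (l - k - r) * r ∧
    T = Submodule.span ℝ (K1 ∪ K2) ⊔ Submodule.span ℝ Φs ∧
    Module.finrank ℝ T = (l + m) * r - r * r := by
  intro PU PV T L K1 K2 Φs
  -- index facts
  have hcn : ∀ (i : Fin r) (j : Fin k), (Fin.castAdd k i : Fin (r+k)) ≠ Fin.natAdd r j := by
    intro i j h
    have h2 := congrArg Fin.val h
    simp only [Fin.coe_castAdd, Fin.coe_natAdd] at h2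
    have hi := i.isLt
    omega
  -- dot-product facts
  have hucc : ∀ i i' : Fin r,
      u (Fin.castAdd k i) ⬝ᵥ u (Fin.castAdd k i') = if i = i' then 1 else 0 := by
    intro i i'; rw [hu]; simp [Fin.castAdd_inj]
  have hucn : ∀ (i : Fin r) (j : Fin k), u (Fin.castAdd k i) ⬝ᵥ u (Fin.natAdd r j) = 0 := by
    intro i j; rw [hu, if_neg (hcn i j)]
  have hunc : ∀ (j : Fin k) (i : Fin r), u (Fin.natAdd r j) ⬝ᵥ u (Fin.castAdd k i) = 0 := by
    intro j i; rw [hu, if_neg (Ne.symm (hcn i j))]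
  have hunn : ∀ j j' : Fin k,
      u (Fin.natAdd r j) ⬝ᵥ u (Fin.natAdd r j') = if j = j' then 1 else 0 := by
    intro j j'; rw [hu]
    by_cases h : j = j'
    · simp [h]
    · rw [if_neg h, if_neg]
      intro hh; apply h
      have h2 := congrArg Fin.val hh
      simp only [Fin.coe_natAdd] at h2
      exact Fin.ext (by omega)
  have hvcc : ∀ i i' : Fin r,
      v (Fin.castAdd k i) ⬝ᵥ v (Fin.castAdd k i') = if i = i' then 1 else 0 := by
    intro i i'; rw [hv]; simp [Fin.castAdd_inj]
  have hvcn : ∀ (i : Fin r) (j : Fin k), v (Fin.castAdd k i) ⬝ᵥ v (Fin.natAdd r j) = 0 := by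
    intro i j; rw [hv, if_neg (hcn i j)]
  have hvnc : ∀ (j : Fin k) (i : Fin r), v (Fin.natAdd r j) ⬝ᵥ v (Fin.castAdd k i) = 0 := by
    intro j i; rw [hv, if_neg (Ne.symm (hcn i j))]
  have hvnn : ∀ j j' : Fin k,
      v (Fin.natAdd r j) ⬝ᵥ v (Fin.natAdd r j') = if j = j' then 1 else 0 := by
    intro j j'; rw [hv]
    by_cases h : j = j'
    · simp [h]
    · rw [if_neg h, if_neg]
      intro hh; apply h
      have h2 := congrArg Fin.val hh
      simp only [Fin.coe_natAdd] at h2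
      exact Fin.ext (by omega)
  have hPU : PU = ∑ i : Fin r, vecMulVec (u (Fin.castAdd k i)) (u (Fin.castAdd k i)) := rfl
  have hPV : PV = ∑ i : Fin r, vecMulVec (v (Fin.castAdd k i)) (v (Fin.castAdd k i)) := rfl
  have hTmem : ∀ X, X ∈ T ↔ (1 - PU) * X * (1 - PV) = 0 := fun X => Iff.rfl
  set PUk : Matrix (Fin l) (Fin l) ℝ :=
    ∑ j : Fin k, vecMulVec (u (Fin.natAdd r j)) (u (Fin.natAdd r j)) with hPUk
  set PVk : Matrix (Fin m) (Fin m) ℝ :=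
    ∑ j : Fin k, vecMulVec (v (Fin.natAdd r j)) (v (Fin.natAdd r j)) with hPVk
  -- products of projections
  have hPUPU : PU * PU = PU := by
    rw [hPU, sum_vmv_mul_sum_vmv]
    simp [hucc, ite_smul, Finset.sum_ite_eq]
  have hPUkPUk : PUk * PUk = PUk := by
    rw [hPUk, sum_vmv_mul_sum_vmv]
    simp [hunn, ite_smul, Finset.sum_ite_eq]
  have hPUPUk : PU * PUk = 0 := by
    rw [hPU, hPUk, sum_vmv_mul_sum_vmv]; simp [hucn]
  have hPUkPU : PUk * PU = 0 := by
    rw [hPU, hPUk, sum_vmv_mul_sum_vmv]; simp [hunc]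
  have hPVPV : PV * PV = PV := by
    rw [hPV, sum_vmv_mul_sum_vmv]
    simp [hvcc, ite_smul, Finset.sum_ite_eq]
  have hPVkPVk : PVk * PVk = PVk := by
    rw [hPVk, sum_vmv_mul_sum_vmv]
    simp [hvnn, ite_smul, Finset.sum_ite_eq]
  have hPVPVk : PV * PVk = 0 := by
    rw [hPV, hPVk, sum_vmv_mul_sum_vmv]; simp [hvcn]
  have hPVkPV : PVk * PV = 0 := by
    rw [hPV, hPVk, sum_vmv_mul_sum_vmv]; simp [hvnc]
  -- mulVec / vecMul facts
  have hPUc : ∀ i : Fin r, PU.mulVec (u (Fin.castAdd k i)) = u (Fin.castAdd k i) := by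
    intro i; rw [hPU, sum_mulVec]
    simp [vmv_mulVec, hucc, ite_smul, Finset.sum_ite_eq']
  have hPUn : ∀ j : Fin k, PU.mulVec (u (Fin.natAdd r j)) = 0 := by
    intro j; rw [hPU, sum_mulVec]; simp [vmv_mulVec, hucn]
  have hPUkc : ∀ i : Fin r, PUk.mulVec (u (Fin.castAdd k i)) = 0 := by
    intro i; rw [hPUk, sum_mulVec]; simp [vmv_mulVec, hunc]
  have hPUkn : ∀ j : Fin k, PUk.mulVec (u (Fin.natAdd r j)) = u (Fin.natAdd r j) := by
    intro j; rw [hPUk, sum_mulVec]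
    simp [vmv_mulVec, hunn, ite_smul, Finset.sum_ite_eq']
  have hPVc : ∀ i : Fin r, PV.mulVec (v (Fin.castAdd k i)) = v (Fin.castAdd k i) := by
    intro i; rw [hPV, sum_mulVec]
    simp [vmv_mulVec, hvcc, ite_smul, Finset.sum_ite_eq']
  have hPVn : ∀ j : Fin k, PV.mulVec (v (Fin.natAdd r j)) = 0 := by
    intro j; rw [hPV, sum_mulVec]; simp [vmv_mulVec, hvcn]
  have hPVkc : ∀ i : Fin r, PVk.mulVec (v (Fin.castAdd k i)) = 0 := by
    intro i; rw [hPVk, sum_mulVec]; simp [vmv_mulVec, hvnc]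
  have hPVkn : ∀ j : Fin k, PVk.mulVec (v (Fin.natAdd r j)) = v (Fin.natAdd r j) := by
    intro j; rw [hPVk, sum_mulVec]
    simp [vmv_mulVec, hvnn, ite_smul, Finset.sum_ite_eq']
  have hvPUc : ∀ i : Fin r, vecMul (u (Fin.castAdd k i)) PU = u (Fin.castAdd k i) := by
    intro i; rw [hPU, vecMul_sum]
    simp [vecMul_vmv, hucc, ite_smul, Finset.sum_ite_eq']
  have hvPUn : ∀ j : Fin k, vecMul (u (Fin.natAdd r j)) PU = 0 := by
    intro j; rw [hPU, vecMul_sum]; simp [vecMul_vmv, hunc]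
  have hvPUkn : ∀ j : Fin k, vecMul (u (Fin.natAdd r j)) PUk = u (Fin.natAdd r j) := by
    intro j; rw [hPUk, vecMul_sum]
    simp [vecMul_vmv, hunn, ite_smul, Finset.sum_ite_eq']
  have hvPVc : ∀ i : Fin r, vecMul (v (Fin.castAdd k i)) PV = v (Fin.castAdd k i) := by
    intro i; rw [hPV, vecMul_sum]
    simp [vecMul_vmv, hvcc, ite_smul, Finset.sum_ite_eq']
  -- N facts
  have hNmulVec : ∀ w, N.mulVec w =
      ∑ j : Fin k, (σ (Fin.natAdd r j) * (v (Fin.natAdd r j) ⬝ᵥ w)) • u (Fin.natAdd r j) := by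
    intro w; rw [hN, sum_mulVec]
    refine Finset.sum_congr rfl fun j _ => ?_
    rw [Matrix.smul_mulVec, vmv_mulVec, smul_smul]
  have hNvecMul : ∀ w, vecMul w N =
      ∑ j : Fin k, (σ (Fin.natAdd r j) * (w ⬝ᵥ u (Fin.natAdd r j))) • v (Fin.natAdd r j) := by
    intro w; rw [hN, _root_.vecMul_sum]
    refine Finset.sum_congr rfl fun j _ => ?_
    rw [vecMul_smul_mat, vecMul_vmv, smul_smul]
  have hNker : ∀ w, N.mulVec w = 0 → ∀ j : Fin k, v (Fin.natAdd r j) ⬝ᵥ w = 0 := by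
    intro w h j
    rw [hNmulVec w] at h
    have := coeff_zero (fun j' : Fin k => u (Fin.natAdd r j')) (fun a b => hunn a b)
      (fun j' : Fin k => σ (Fin.natAdd r j') * (v (Fin.natAdd r j') ⬝ᵥ w)) h j
    exact (mul_eq_zero.1 this).resolve_left (hσ _).ne'
  have hNcoker : ∀ w, vecMul w N = 0 → ∀ j : Fin k, w ⬝ᵥ u (Fin.natAdd r j) = 0 := by
    intro w h j
    rw [hNvecMul w] at h
    have := coeff_zero (fun j' : Fin k => v (Fin.natAdd r j')) (fun a b => hvnn a b)
      (fun j' : Fin k => σ (Fin.natAdd r j') * (w ⬝ᵥ u (Fin.natAdd r j'))) h j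
    exact (mul_eq_zero.1 this).resolve_left (hσ _).ne'
  -- the projections P1, P2
  set P1 : Matrix (Fin l) (Fin m) ℝ →ₗ[ℝ] Matrix (Fin l) (Fin m) ℝ :=
    mulLeftRight PU (1 - PVk) with hP1
  set P2 : Matrix (Fin l) (Fin m) ℝ →ₗ[ℝ] Matrix (Fin l) (Fin m) ℝ :=
    mulLeftRight (1 - PU - PUk) PV with hP2
  have hP1a : ∀ X, P1 X = PU * X * (1 - PVk) := fun X => rfl
  have hP2a : ∀ X, P2 X = (1 - PU - PUk) * X * PV := fun X => rfl
  set W : Submodule ℝ (Matrix (Fin l) (Fin m) ℝ) := LinearMap.range (P1 + P2) with hW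
  -- generators are fixed by P1 + P2
  have hK1fix : ∀ M ∈ K1, (P1 + P2) M = M := by
    rintro M ⟨i, w, hw, rfl⟩
    have hwv : ∀ j : Fin k, v (Fin.natAdd r j) ⬝ᵥ w = 0 := hNker w hw
    have h1 : P1 (vecMulVec (u (Fin.castAdd k i)) w) = vecMulVec (u (Fin.castAdd k i)) w := by
      rw [hP1a, Matrix.mul_assoc, vmv_mul_s8, mul_vmv, hPUc]
      congr 1
      rw [Matrix.vecMul_sub, Matrix.vecMul_one, hPVk, _root_.vecMul_sum]
      simp [vecMul_vmv, fun j => dotProduct_comm w (v (Fin.natAdd r j)), hwv]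
    have h2 : P2 (vecMulVec (u (Fin.castAdd k i)) w) = 0 := by
      have hz : (1 - PU - PUk).mulVec (u (Fin.castAdd k i)) = 0 := by
        rw [Matrix.sub_mulVec, Matrix.sub_mulVec, Matrix.one_mulVec, hPUc, hPUkc]
        simp
      rw [hP2a, mul_vmv, hz, vmv_zero_left, Matrix.zero_mul]
    rw [LinearMap.add_apply, h1, h2, add_zero]
  have hK2fix : ∀ M ∈ K2, (P1 + P2) M = M := by
    rintro M ⟨i, w, hw, hwu, rfl⟩
    have hwu' : ∀ j : Fin k, w ⬝ᵥ u (Fin.natAdd r j) = 0 := hNcoker w hw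
    have h1 : P1 (vecMulVec w (v (Fin.castAdd k i))) = 0 := by
      have hz : PU.mulVec w = 0 := by
        rw [hPU, _root_.sum_mulVec]
        simp [vmv_mulVec, fun i' => dotProduct_comm (u (Fin.castAdd k i')) w, hwu]
      rw [hP1a, mul_vmv, hz, vmv_zero_left, Matrix.zero_mul]
    have h2 : P2 (vecMulVec w (v (Fin.castAdd k i))) = vecMulVec w (v (Fin.castAdd k i)) := by
      have h3 : PU.mulVec w = 0 := by
        rw [hPU, _root_.sum_mulVec]
        simp [vmv_mulVec, fun i' => dotProduct_comm (u (Fin.castAdd k i')) w, hwu]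
      have h4 : PUk.mulVec w = 0 := by
        rw [hPUk, _root_.sum_mulVec]
        simp [vmv_mulVec, fun j => dotProduct_comm (u (Fin.natAdd r j)) w, hwu']
      have hz : (1 - PU - PUk).mulVec w = w := by
        rw [Matrix.sub_mulVec, Matrix.sub_mulVec, Matrix.one_mulVec, h3, h4]
        simp
      rw [hP2a, mul_vmv, hz, vmv_mul_s8, hvPVc]
    rw [LinearMap.add_apply, h1, h2, zero_add]
  -- range of P1 + P2 is inside the span
  have hrange_le : W ≤ Submodule.span ℝ (K1 ∪ K2) := by
    rintro X ⟨Y, rfl⟩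
    rw [LinearMap.add_apply]
    refine Submodule.add_mem _ ?_ ?_
    · have : P1 Y = ∑ i : Fin r,
          vecMulVec (u (Fin.castAdd k i)) (vecMul (u (Fin.castAdd k i)) (Y * (1 - PVk))) := by
        rw [hP1a, Matrix.mul_assoc, hPU, Matrix.sum_mul]
        exact Finset.sum_congr rfl fun i _ => vmv_mul_s8 _ _ _
      rw [this]
      refine Submodule.sum_mem _ fun i _ => Submodule.subset_span (Or.inl ⟨i, _, ?_, rfl⟩)
      rw [hNmulVec]
      refine Finset.sum_eq_zero fun j _ => ?_
      have : v (Fin.natAdd r j) ⬝ᵥ vecMul (u (Fin.castAdd k i)) (Y * (1 - PVk)) = 0 := by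
        rw [dotProduct_comm, ← Matrix.dotProduct_mulVec, ← Matrix.mulVec_mulVec]
        have : (1 - PVk).mulVec (v (Fin.natAdd r j)) = 0 := by
          rw [Matrix.sub_mulVec, Matrix.one_mulVec, hPVkn]; simp
        rw [this, Matrix.mulVec_zero, dotProduct_zero]
      rw [this, mul_zero, zero_smul]
    · have : P2 Y = ∑ i : Fin r,
          vecMulVec (((1 - PU - PUk) * Y).mulVec (v (Fin.castAdd k i))) (v (Fin.castAdd k i)) := by
        rw [hP2a, hPV, Matrix.mul_sum]
        exact Finset.sum_congr rfl fun i _ => mul_vmv _ _ _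
      rw [this]
      refine Submodule.sum_mem _ fun i _ => Submodule.subset_span (Or.inr ⟨i, _, ?_, ?_, rfl⟩)
      · rw [hNvecMul]
        refine Finset.sum_eq_zero fun j _ => ?_
        have : ((1 - PU - PUk) * Y).mulVec (v (Fin.castAdd k i)) ⬝ᵥ u (Fin.natAdd r j) = 0 := by
          rw [dotProduct_comm, Matrix.dotProduct_mulVec, ← Matrix.vecMul_vecMul]
          have : vecMul (u (Fin.natAdd r j)) (1 - PU - PUk) = 0 := by
            rw [Matrix.vecMul_sub, Matrix.vecMul_sub, Matrix.vecMul_one, hvPUn, hvPUkn]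
            simp
          rw [this, Matrix.zero_vecMul, zero_dotProduct]
        rw [this, mul_zero, zero_smul]
      · intro i'
        rw [dotProduct_comm, Matrix.dotProduct_mulVec, ← Matrix.vecMul_vecMul]
        have : vecMul (u (Fin.castAdd k i')) (1 - PU - PUk) = 0 := by
          rw [Matrix.vecMul_sub, Matrix.vecMul_sub, Matrix.vecMul_one, hvPUc]
          have : vecMul (u (Fin.castAdd k i')) PUk = 0 := by
            rw [hPUk, _root_.vecMul_sum]; simp [vecMul_vmv, hucn]
          rw [this]; simp
        rw [this, Matrix.zero_vecMul, zero_dotProduct]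
  have hspan : Submodule.span ℝ (K1 ∪ K2) = W := by
    refine le_antisymm (Submodule.span_le.2 ?_) hrange_le
    rintro M (hM | hM)
    · exact ⟨M, hK1fix M hM⟩
    · exact ⟨M, hK2fix M hM⟩
  -- decomposition of tangent vectors
  have hdecomp : ∀ X, X ∈ T →
      X = (P1 X + P2 X) + (PU * X * PVk + PUk * X * PV) := by
    intro X hX
    have h0 : (1 - PU) * X * (1 - PV) = 0 := (hTmem X).1 hX
    have e : (1 - PU) * X * (1 - PV) = X - PU * X - (X * PV - PU * X * PV) := by
      rw [Matrix.sub_mul, Matrix.one_mul, Matrix.mul_sub, Matrix.mul_one, Matrix.sub_mul]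
    rw [h0] at e
    have h1 : X = PU * X + X * PV - PU * X * PV := by
      have h2 : X - (PU * X + X * PV - PU * X * PV) = X - PU * X - (X * PV - PU * X * PV) := by
        abel
      rw [← sub_eq_zero, h2, ← e]
    have h3 : P1 X + P2 X + (PU * X * PVk + PUk * X * PV)
        = PU * X + X * PV - PU * X * PV := by
      rw [hP1a, hP2a]
      simp only [Matrix.mul_sub, Matrix.sub_mul, Matrix.mul_one, Matrix.one_mul]
      abel
    rw [h3, ← h1]
  -- expansions of the Φ-part
  have hPUXPVk : ∀ X : Matrix (Fin l) (Fin m) ℝ, PU * X * PVk = ∑ i : Fin r, ∑ j : Fin k,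
      (u (Fin.castAdd k i) ⬝ᵥ X.mulVec (v (Fin.natAdd r j))) •
        vecMulVec (u (Fin.castAdd k i)) (v (Fin.natAdd r j)) := by
    intro X
    rw [hPU, hPVk, Matrix.sum_mul, Matrix.sum_mul]
    refine Finset.sum_congr rfl fun i _ => ?_
    rw [Matrix.mul_sum]
    exact Finset.sum_congr rfl fun j _ => vmv_mul_mul_vmv _ _ _ _ _
  have hPUkXPV : ∀ X : Matrix (Fin l) (Fin m) ℝ, PUk * X * PV = ∑ j : Fin k, ∑ i : Fin r,
      (u (Fin.natAdd r j) ⬝ᵥ X.mulVec (v (Fin.castAdd k i))) •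
        vecMulVec (u (Fin.natAdd r j)) (v (Fin.castAdd k i)) := by
    intro X
    rw [hPUk, hPV, Matrix.sum_mul, Matrix.sum_mul]
    refine Finset.sum_congr rfl fun j _ => ?_
    rw [Matrix.mul_sum]
    exact Finset.sum_congr rfl fun i _ => vmv_mul_mul_vmv _ _ _ _ _
  -- Φ generators and span facts
  have hΦmem : ∀ (i : Fin r) (j : Fin k),
      vecMulVec (u (Fin.natAdd r j)) (v (Fin.castAdd k i)) ∈ Submodule.span ℝ Φs ∧
      vecMulVec (u (Fin.castAdd k i)) (v (Fin.natAdd r j)) ∈ Submodule.span ℝ Φs := by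
    intro i j
    set A := vecMulVec (u (Fin.natAdd r j)) (v (Fin.castAdd k i)) with hA
    set B := vecMulVec (u (Fin.castAdd k i)) (v (Fin.natAdd r j)) with hB
    have h1 : (1 / Real.sqrt 2) • (A + B) ∈ Φs := ⟨i, j, Or.inl rfl⟩
    have h2 : (1 / Real.sqrt 2) • (A - B) ∈ Φs := ⟨i, j, Or.inr rfl⟩
    have hc : Real.sqrt 2 / 2 * (1 / Real.sqrt 2) = 1 / 2 := by
      rw [div_mul_div_comm, mul_one, div_eq_div_iff (by positivity) (by norm_num)]
      ring
    have e1 : A = (Real.sqrt 2 / 2) • ((1 / Real.sqrt 2) • (A + B))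
        + (Real.sqrt 2 / 2) • ((1 / Real.sqrt 2) • (A - B)) := by
      rw [smul_smul, smul_smul, hc, ← smul_add,
        show A + B + (A - B) = A + A by abel, ← two_smul ℝ A, smul_smul]
      norm_num
    have e2 : B = (Real.sqrt 2 / 2) • ((1 / Real.sqrt 2) • (A + B))
        - (Real.sqrt 2 / 2) • ((1 / Real.sqrt 2) • (A - B)) := by
      rw [smul_smul, smul_smul, hc, ← smul_sub,
        show A + B - (A - B) = B + B by abel, ← two_smul ℝ B, smul_smul]
      norm_num
    constructor
    · rw [e1]
      exact Submodule.add_mem _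
        (Submodule.smul_mem _ _ (Submodule.subset_span h1))
        (Submodule.smul_mem _ _ (Submodule.subset_span h2))
    · rw [e2]
      exact Submodule.sub_mem _
        (Submodule.smul_mem _ _ (Submodule.subset_span h1))
        (Submodule.smul_mem _ _ (Submodule.subset_span h2))
  -- rank-one tangent vectors
  have hTleft : ∀ (i : Fin r) (b : Fin m → ℝ), vecMulVec (u (Fin.castAdd k i)) b ∈ T := by
    intro i b
    rw [hTmem]
    have hz : (1 - PU).mulVec (u (Fin.castAdd k i)) = 0 := by
      rw [Matrix.sub_mulVec, Matrix.one_mulVec, hPUc]; simp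
    rw [mul_vmv, hz, vmv_zero_left, Matrix.zero_mul]
  have hTright : ∀ (i : Fin r) (a : Fin l → ℝ), vecMulVec a (v (Fin.castAdd k i)) ∈ T := by
    intro i a
    rw [hTmem]
    have hz : vecMul (v (Fin.castAdd k i)) (1 - PV) = 0 := by
      rw [Matrix.vecMul_sub, Matrix.vecMul_one, hvPVc]; simp
    rw [Matrix.mul_assoc, vmv_mul_s8, hz, vmv_zero_right, Matrix.mul_zero]
  have hΦT : ∀ M ∈ Φs, M ∈ T := by
    rintro M ⟨i, j, h | h⟩ <;> rw [h]
    · exact Submodule.smul_mem _ _ (Submodule.add_mem _ (hTright i _) (hTleft i _))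
    · exact Submodule.smul_mem _ _ (Submodule.sub_mem _ (hTright i _) (hTleft i _))
  -- T = span(K1 ∪ K2) ⊔ span Φs
  have hTeq : T = Submodule.span ℝ (K1 ∪ K2) ⊔ Submodule.span ℝ Φs := by
    refine le_antisymm ?_ (sup_le (Submodule.span_le.2 ?_) (Submodule.span_le.2 hΦT))
    · intro X hX
      rw [hdecomp X hX]
      refine Submodule.add_mem _ (Submodule.mem_sup_left ?_) (Submodule.mem_sup_right ?_)
      · rw [hspan]
        exact ⟨X, by rw [LinearMap.add_apply]⟩
      · rw [hPUXPVk, hPUkXPV]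
        exact Submodule.add_mem _
          (Submodule.sum_mem _ fun i _ => Submodule.sum_mem _ fun j _ =>
            Submodule.smul_mem _ _ (hΦmem i j).2)
          (Submodule.sum_mem _ fun j _ => Submodule.sum_mem _ fun i _ =>
            Submodule.smul_mem _ _ (hΦmem i j).1)
    · rintro M (hM | hM)
      · obtain ⟨i, w, hw, rfl⟩ := hM
        exact hTleft i w
      · obtain ⟨i, w, hw, hwu, rfl⟩ := hM
        exact hTright i w
  -- structured form of L
  have hLkey : ∀ X : Matrix (Fin l) (Fin m) ℝ, L X = ∑ i : Fin r, ∑ j : Fin k,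
      (σ (Fin.natAdd r j) / σ (Fin.castAdd k i)) •
        ((u (Fin.natAdd r j) ⬝ᵥ X.mulVec (v (Fin.castAdd k i))) •
            vecMulVec (u (Fin.castAdd k i)) (v (Fin.natAdd r j)) +
         (u (Fin.castAdd k i) ⬝ᵥ X.mulVec (v (Fin.natAdd r j))) •
            vecMulVec (u (Fin.natAdd r j)) (v (Fin.castAdd k i))) := by
    intro X
    have hflip : ∀ (a : Fin l → ℝ) (b : Fin m → ℝ), b ⬝ᵥ Xᵀ.mulVec a = a ⬝ᵥ X.mulVec b := by
      intro a b
      rw [Matrix.mulVec_transpose, dotProduct_comm]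
      exact (Matrix.dotProduct_mulVec _ _ _).symm
    have hL0 : L X = ∑ i : Fin r, ∑ j : Fin k,
        (σ (Fin.natAdd r j) / σ (Fin.castAdd k i)) •
          (vecMulVec (u (Fin.castAdd k i)) (v (Fin.castAdd k i)) * Xᵀ *
              vecMulVec (u (Fin.natAdd r j)) (v (Fin.natAdd r j)) +
            vecMulVec (u (Fin.natAdd r j)) (v (Fin.natAdd r j)) * Xᵀ *
              vecMulVec (u (Fin.castAdd k i)) (v (Fin.castAdd k i))) := rfl
    rw [hL0]
    refine Finset.sum_congr rfl fun i _ => Finset.sum_congr rfl fun j _ => ?_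
    rw [vmv_mul_mul_vmv, vmv_mul_mul_vmv, hflip, hflip]
  -- coefficients vanish on the range of P1 + P2
  have hcoefrange : ∀ Y : Matrix (Fin l) (Fin m) ℝ,
      (∀ (i : Fin r) (j : Fin k),
        u (Fin.natAdd r j) ⬝ᵥ ((P1 + P2) Y).mulVec (v (Fin.castAdd k i)) = 0) ∧
      (∀ (i : Fin r) (j : Fin k),
        u (Fin.castAdd k i) ⬝ᵥ ((P1 + P2) Y).mulVec (v (Fin.natAdd r j)) = 0) := by
    intro Y
    have hYdef : (P1 + P2) Y = PU * Y * (1 - PVk) + (1 - PU - PUk) * Y * PV := by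
      rw [LinearMap.add_apply, hP1a, hP2a]
    constructor
    · intro i j
      rw [hYdef, Matrix.add_mulVec, dotProduct_add]
      have t1 : u (Fin.natAdd r j) ⬝ᵥ (PU * Y * (1 - PVk)).mulVec (v (Fin.castAdd k i)) = 0 := by
        rw [Matrix.dotProduct_mulVec]
        have hz : vecMul (u (Fin.natAdd r j)) (PU * Y * (1 - PVk)) = 0 := by
          rw [← Matrix.vecMul_vecMul, ← Matrix.vecMul_vecMul, hvPUn, Matrix.zero_vecMul,
            Matrix.zero_vecMul]
        rw [hz, zero_dotProduct]
      have t2 : u (Fin.natAdd r j) ⬝ᵥ ((1 - PU - PUk) * Y * PV).mulVec (v (Fin.castAdd k i)) = 0 := by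
        rw [Matrix.dotProduct_mulVec]
        have hz0 : vecMul (u (Fin.natAdd r j)) (1 - PU - PUk) = 0 := by
          rw [Matrix.vecMul_sub, Matrix.vecMul_sub, Matrix.vecMul_one, hvPUn, hvPUkn]
          simp
        have hz : vecMul (u (Fin.natAdd r j)) ((1 - PU - PUk) * Y * PV) = 0 := by
          rw [← Matrix.vecMul_vecMul, ← Matrix.vecMul_vecMul, hz0, Matrix.zero_vecMul,
            Matrix.zero_vecMul]
        rw [hz, zero_dotProduct]
      rw [t1, t2, add_zero]
    · intro i j
      rw [hYdef, Matrix.add_mulVec, dotProduct_add]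
      have t1 : (PU * Y * (1 - PVk)).mulVec (v (Fin.natAdd r j)) = 0 := by
        rw [← Matrix.mulVec_mulVec]
        have hz : (1 - PVk).mulVec (v (Fin.natAdd r j)) = 0 := by
          rw [Matrix.sub_mulVec, Matrix.one_mulVec, hPVkn]; simp
        rw [hz, Matrix.mulVec_zero]
      have t2 : ((1 - PU - PUk) * Y * PV).mulVec (v (Fin.natAdd r j)) = 0 := by
        rw [← Matrix.mulVec_mulVec, hPVn, Matrix.mulVec_zero]
      rw [t1, t2]
      simp
  -- kernel characterization
  have hker : ∀ X ∈ T, (L X = 0 ↔ X ∈ Submodule.span ℝ (K1 ∪ K2)) := by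
    intro X hX
    constructor
    · intro hL0
      have hA : ∀ (i : Fin r) (j : Fin k),
          u (Fin.natAdd r j) ⬝ᵥ X.mulVec (v (Fin.castAdd k i)) = 0 := by
        intro i j
        have hp := congrArg (pairLM (u (Fin.castAdd k i)) (v (Fin.natAdd r j))) hL0
        rw [hLkey] at hp
        simp only [map_sum, map_add, _root_.map_smul, pairLM_vmv, map_zero, smul_eq_mul,
          hucc, hvnn, hunc, hvcn, hucn, hvnc, ite_mul, mul_ite, mul_one, one_mul,
          mul_zero, zero_mul, add_zero, zero_add, Finset.sum_ite_eq, Finset.sum_ite_eq',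
          Finset.mem_univ, if_true, Finset.sum_const_zero] at hp
        exact (mul_eq_zero.1 hp).resolve_left (div_ne_zero (hσ _).ne' (hσ _).ne')
      have hB : ∀ (i : Fin r) (j : Fin k),
          u (Fin.castAdd k i) ⬝ᵥ X.mulVec (v (Fin.natAdd r j)) = 0 := by
        intro i j
        have hp := congrArg (pairLM (u (Fin.natAdd r j)) (v (Fin.castAdd k i))) hL0
        rw [hLkey] at hp
        simp only [map_sum, map_add, _root_.map_smul, pairLM_vmv, map_zero, smul_eq_mul,
          hunn, hvcc, hucn, hvnc, hunc, hvcn, ite_mul, mul_ite, mul_one, one_mul,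
          mul_zero, zero_mul, add_zero, zero_add, Finset.sum_ite_eq, Finset.sum_ite_eq',
          Finset.mem_univ, if_true, Finset.sum_const_zero] at hp
        have hp2 : (σ (Fin.natAdd r j) / σ (Fin.castAdd k i)) *
            (u (Fin.castAdd k i) ⬝ᵥ X.mulVec (v (Fin.natAdd r j))) = 0 := by
          rw [← hp, Finset.sum_eq_single i]
          · rw [Finset.sum_eq_single j]
            · simp
            · intro b _ hb; simp [Ne.symm hb]
            · intro hj; exact absurd (Finset.mem_univ j) hj
          · intro b _ hb; simp [hb]
          · intro hi; exact absurd (Finset.mem_univ i) hi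
        exact (mul_eq_zero.1 hp2).resolve_left (div_ne_zero (hσ _).ne' (hσ _).ne')
      have hD : PU * X * PVk + PUk * X * PV = 0 := by
        rw [hPUXPVk, hPUkXPV]
        rw [Finset.sum_eq_zero, Finset.sum_eq_zero, add_zero]
        · intro j _
          exact Finset.sum_eq_zero fun i _ => by rw [hA i j, zero_smul]
        · intro i _
          exact Finset.sum_eq_zero fun j _ => by rw [hB i j, zero_smul]
      have hfix : X = P1 X + P2 X := by
        conv_lhs => rw [hdecomp X hX]
        rw [hD, add_zero]
      rw [hspan]
      exact ⟨X, by rw [LinearMap.add_apply]; exact hfix.symm⟩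
    · intro hXs
      rw [hspan] at hXs
      obtain ⟨Y, rfl⟩ := hXs
      obtain ⟨hA, hB⟩ := hcoefrange Y
      rw [hLkey]
      refine Finset.sum_eq_zero fun i _ => Finset.sum_eq_zero fun j _ => ?_
      rw [hA i j, hB i j, zero_smul, zero_smul, add_zero, smul_zero]
  -- idempotency facts
  have hVkVk : (1 - PVk) * (1 - PVk) = 1 - PVk := by
    rw [Matrix.mul_sub, Matrix.mul_one, Matrix.sub_mul, Matrix.one_mul, hPVkPVk]
    abel
  have hUU : (1 - PU - PUk) * (1 - PU - PUk) = 1 - PU - PUk := by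
    simp only [Matrix.sub_mul, Matrix.mul_sub, Matrix.one_mul, Matrix.mul_one,
      hPUPU, hPUPUk, hPUkPU, hPUkPUk]
    abel
  have hz12 : PU * (1 - PU - PUk) = 0 := by
    rw [Matrix.mul_sub, Matrix.mul_sub, Matrix.mul_one, hPUPU, hPUPUk]
    simp
  have hz21 : (1 - PU - PUk) * PU = 0 := by
    rw [Matrix.sub_mul, Matrix.sub_mul, Matrix.one_mul, hPUPU, hPUkPU]
    simp
  have hML0 : ∀ B : Matrix (Fin m) (Fin m) ℝ, mulLeftRight (0 : Matrix (Fin l) (Fin l) ℝ) B = 0 := by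
    intro B
    apply LinearMap.ext
    intro X
    show (0 : Matrix (Fin l) (Fin l) ℝ) * X * B = 0
    rw [Matrix.zero_mul, Matrix.zero_mul]
  have hPP : (P1 + P2) ∘ₗ (P1 + P2) = P1 + P2 := by
    rw [LinearMap.add_comp, LinearMap.comp_add, LinearMap.comp_add, hP1, hP2,
      mulLeftRight_comp, mulLeftRight_comp, mulLeftRight_comp, mulLeftRight_comp,
      hPUPU, hVkVk, hUU, hz12, hz21, hPVPV, hML0, hML0, add_zero, zero_add]
  have hproj : LinearMap.IsProj (LinearMap.range (P1 + P2)) (P1 + P2) :=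
    ⟨fun x => LinearMap.mem_range_self _ x, by
      rintro x ⟨y, rfl⟩
      rw [← LinearMap.comp_apply, hPP]⟩
  have htr := LinearMap.IsProj.trace hproj
  -- traces of the basic projections
  have t1 : PU.trace = (r : ℝ) := by
    rw [hPU, Matrix.trace_sum]
    simp [trace_vmv, hucc]
  have t2 : PUk.trace = (k : ℝ) := by
    rw [hPUk, Matrix.trace_sum]
    simp [trace_vmv, hunn]
  have t3 : PV.trace = (r : ℝ) := by
    rw [hPV, Matrix.trace_sum]
    simp [trace_vmv, hvcc]
  have t4 : PVk.trace = (k : ℝ) := by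
    rw [hPVk, Matrix.trace_sum]
    simp [trace_vmv, hvnn]
  have htrval : LinearMap.trace ℝ (Matrix (Fin l) (Fin m) ℝ) (P1 + P2)
      = (r : ℝ) * ((m : ℝ) - (k : ℝ)) + ((l : ℝ) - (r : ℝ) - (k : ℝ)) * (r : ℝ) := by
    rw [map_add, hP1, hP2, trace_mulLeftRight, trace_mulLeftRight,
      Matrix.trace_sub, Matrix.trace_sub, Matrix.trace_sub, Matrix.trace_one,
      Matrix.trace_one, t1, t2, t3, t4]
    simp only [Fintype.card_fin]
    try ring
  have hkm : k ≤ m := le_trans (Nat.le_add_left k r) hmk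
  have hkrl : k + r ≤ l := by omega
  have hfr1 : Module.finrank ℝ (LinearMap.range (P1 + P2)) = (m - k) * r + (l - k - r) * r := by
    have hcast : ((Module.finrank ℝ (LinearMap.range (P1 + P2)) : ℕ) : ℝ)
        = (((m - k) * r + (l - k - r) * r : ℕ) : ℝ) := by
      rw [← htr, htrval, Nat.cast_add, Nat.cast_mul, Nat.cast_mul, Nat.cast_sub hkm,
        Nat.sub_sub, Nat.cast_sub hkrl, Nat.cast_add]
      ring
    exact_mod_cast hcast
  -- the tangent space dimension
  set Q0 : Matrix (Fin l) (Fin m) ℝ →ₗ[ℝ] Matrix (Fin l) (Fin m) ℝ :=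
    mulLeftRight (1 - PU) (1 - PV) with hQ0
  have hTk : T = LinearMap.ker Q0 := rfl
  have hUU' : (1 - PU) * (1 - PU) = 1 - PU := by
    rw [Matrix.mul_sub, Matrix.mul_one, Matrix.sub_mul, Matrix.one_mul, hPUPU]
    abel
  have hVV' : (1 - PV) * (1 - PV) = 1 - PV := by
    rw [Matrix.mul_sub, Matrix.mul_one, Matrix.sub_mul, Matrix.one_mul, hPVPV]
    abel
  have hQQ : Q0 ∘ₗ Q0 = Q0 := by
    rw [hQ0, mulLeftRight_comp, hUU', hVV']
  have hprojQ : LinearMap.IsProj (LinearMap.range Q0) Q0 :=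
    ⟨fun x => LinearMap.mem_range_self _ x, by
      rintro x ⟨y, rfl⟩
      rw [← LinearMap.comp_apply, hQQ]⟩
  have htrQ := LinearMap.IsProj.trace hprojQ
  have htrQval : LinearMap.trace ℝ (Matrix (Fin l) (Fin m) ℝ) Q0
      = ((l : ℝ) - (r : ℝ)) * ((m : ℝ) - (r : ℝ)) := by
    rw [hQ0, trace_mulLeftRight, Matrix.trace_sub, Matrix.trace_sub, Matrix.trace_one,
      Matrix.trace_one, t1, t3]
    simp only [Fintype.card_fin]
  have hrl : r ≤ l := by omega
  have hrm : r ≤ m := by omega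
  have hrkQ : Module.finrank ℝ (LinearMap.range Q0) = (l - r) * (m - r) := by
    have hcast : ((Module.finrank ℝ (LinearMap.range Q0) : ℕ) : ℝ)
        = (((l - r) * (m - r) : ℕ) : ℝ) := by
      rw [← htrQ, htrQval, Nat.cast_mul, Nat.cast_sub hrl, Nat.cast_sub hrm]
    exact_mod_cast hcast
  have hrn := LinearMap.finrank_range_add_finrank_ker Q0
  have hfrM : Module.finrank ℝ (Matrix (Fin l) (Fin m) ℝ) = l * m := by
    rw [Module.finrank_matrix]
    simp
  have hfr2 : Module.finrank ℝ T = (l + m) * r - r * r := by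
    rw [hrkQ, hfrM] at hrn
    have harith : ∀ F : ℕ, (l - r) * (m - r) + F = l * m → F = (l + m) * r - r * r := by
      obtain ⟨a, ha⟩ := Nat.exists_eq_add_of_le hrl
      obtain ⟨b, hb⟩ := Nat.exists_eq_add_of_le hrm
      intro F hF
      rw [ha, hb, Nat.add_sub_cancel_left, Nat.add_sub_cancel_left] at hF
      have e1 : (r + a) * (r + b) = a * b + (r * r + r * b + a * r) := by ring
      rw [e1] at hF
      have hF2 := Nat.add_left_cancel hF
      rw [ha, hb, hF2]
      have e2 : (r + a + (r + b)) * r = r * r + (r * r + r * b + a * r) := by ring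
      rw [e2, Nat.add_sub_cancel_left]
    rw [hTk]
    exact harith _ hrn
  refine ⟨hker, ?_, hTeq, hfr2⟩
  rw [hspan, hW]
  exact hfr1
end

section
/- The operator norm of the Weingarten map L_R(N) on the tangent space at R is σ₁(N)/σ_r(R), i.e., the maximal principal curvature of the fixed-rank-r manifold at R in the unit normal direction N/‖N‖ equals 1/σ_r(R) times σ₁(N)/‖N‖ ≤ 1/σ_r(R). -/
open Matrix

/-- Frobenius norm of a real matrix. -/
noncomputable def fnorm {l m : ℕ} (A : Matrix (Fin l) (Fin m) ℝ) : ℝ :=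
  Real.sqrt (Matrix.trace (Aᵀ * A))

namespace WG
variable {l m p r k : ℕ}




def finner (A B : Matrix (Fin l) (Fin m) ℝ) : ℝ := ∑ i, ∑ j, A i j * B i j

lemma finner_comm (A B : Matrix (Fin l) (Fin m) ℝ) : finner A B = finner B A := by
  simp [finner, mul_comm]

lemma finner_self_nonneg (A : Matrix (Fin l) (Fin m) ℝ) : 0 ≤ finner A A :=
  Finset.sum_nonneg fun i _ => Finset.sum_nonneg fun j _ => mul_self_nonneg _

lemma fnorm_eq (A : Matrix (Fin l) (Fin m) ℝ) : fnorm A = Real.sqrt (finner A A) := by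
  unfold fnorm finner
  congr 1
  rw [Matrix.trace]
  simp only [Matrix.diag, Matrix.mul_apply, Matrix.transpose_apply]
  rw [Finset.sum_comm]

lemma finner_add_left (A B C : Matrix (Fin l) (Fin m) ℝ) :
    finner (A + B) C = finner A C + finner B C := by
  simp [finner, add_mul, Finset.sum_add_distrib]

lemma finner_smul_left (c : ℝ) (A B : Matrix (Fin l) (Fin m) ℝ) :
    finner (c • A) B = c * finner A B := by
  simp [finner, Finset.mul_sum, mul_assoc]

lemma finner_sub_left (A B C : Matrix (Fin l) (Fin m) ℝ) :
    finner (A - B) C = finner A C - finner B C := by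
  have := finner_add_left (A - B) B C
  simp at this; linarith

lemma finner_sum_left {ι : Type*} (s : Finset ι) (f : ι → Matrix (Fin l) (Fin m) ℝ)
    (B : Matrix (Fin l) (Fin m) ℝ) :
    finner (∑ i ∈ s, f i) B = ∑ i ∈ s, finner (f i) B := by
  classical
  induction s using Finset.induction with
  | empty => simp [finner]
  | insert _ _ h ih => rw [Finset.sum_insert h, finner_add_left, ih, Finset.sum_insert h]

lemma finner_sum_right {ι : Type*} (s : Finset ι) (f : ι → Matrix (Fin l) (Fin m) ℝ)
    (B : Matrix (Fin l) (Fin m) ℝ) :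
    finner B (∑ i ∈ s, f i) = ∑ i ∈ s, finner B (f i) := by
  rw [finner_comm, finner_sum_left]; simp [finner_comm]

lemma finner_vecMulVec (a : Fin l → ℝ) (b : Fin m → ℝ) (X : Matrix (Fin l) (Fin m) ℝ) :
    finner (vecMulVec a b) X = dotProduct a (X *ᵥ b) := by
  simp only [finner, vecMulVec_apply, dotProduct, mulVec, Finset.mul_sum]
  exact Finset.sum_congr rfl fun i _ => Finset.sum_congr rfl fun j _ => by ring

lemma finner_vecMulVec_vecMulVec (a c : Fin l → ℝ) (b d : Fin m → ℝ) :
    finner (vecMulVec a b) (vecMulVec c d) = dotProduct a c * dotProduct b d := by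
  simp only [finner, vecMulVec_apply, dotProduct, Finset.sum_mul]
  refine Finset.sum_congr rfl fun i _ => ?_
  rw [Finset.mul_sum]
  exact Finset.sum_congr rfl fun j _ => by ring

lemma vecMulVec_mul_vecMulVec (a : Fin l → ℝ) (b c : Fin m → ℝ) (d : Fin p → ℝ) :
    vecMulVec a b * vecMulVec c d = dotProduct b c • vecMulVec a d := by
  ext i j
  simp only [Matrix.mul_apply, vecMulVec_apply, Matrix.smul_apply, dotProduct, Finset.sum_mul,
    smul_eq_mul]
  exact Finset.sum_congr rfl fun q _ => by ring

lemma mul_vecMulVec {n : ℕ} (M : Matrix (Fin n) (Fin l) ℝ) (c : Fin l → ℝ) (d : Fin m → ℝ) :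
    M * vecMulVec c d = vecMulVec (M *ᵥ c) d := by
  ext i j
  simp only [Matrix.mul_apply, vecMulVec_apply, mulVec, dotProduct, Finset.sum_mul]
  exact Finset.sum_congr rfl fun t _ => by ring

lemma triple (a : Fin l → ℝ) (b : Fin m → ℝ) (X : Matrix (Fin l) (Fin m) ℝ)
    (c : Fin l → ℝ) (d : Fin m → ℝ) :
    vecMulVec a b * Xᵀ * vecMulVec c d = dotProduct c (X *ᵥ b) • vecMulVec a d := by
  rw [Matrix.mul_assoc, mul_vecMulVec, vecMulVec_mul_vecMulVec]
  congr 1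
  rw [Matrix.mulVec_transpose, Matrix.dotProduct_mulVec, dotProduct_comm]




lemma finner_smul_right (c : ℝ) (A B : Matrix (Fin l) (Fin m) ℝ) :
    finner A (c • B) = c * finner A B := by
  rw [finner_comm, finner_smul_left, finner_comm]

lemma pyth {ι : Type*} [Fintype ι] [DecidableEq ι] (F : ι → Matrix (Fin l) (Fin m) ℝ)
    (hF : ∀ s t, finner (F s) (F t) = if s = t then 1 else 0) (c : ι → ℝ) :
    finner (∑ s, c s • F s) (∑ s, c s • F s) = ∑ s, (c s)^2 := by
  rw [finner_sum_left]
  refine Finset.sum_congr rfl fun s _ => ?_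
  rw [finner_smul_left, finner_sum_right]
  simp only [finner_smul_right, hF]
  simp [mul_ite, Finset.sum_ite_eq, pow_two]

lemma bessel {ι : Type*} [Fintype ι] [DecidableEq ι] (F : ι → Matrix (Fin l) (Fin m) ℝ)
    (hF : ∀ s t, finner (F s) (F t) = if s = t then 1 else 0)
    (X : Matrix (Fin l) (Fin m) ℝ) :
    ∑ s, (finner (F s) X)^2 ≤ finner X X := by
  set c : ι → ℝ := fun s => finner (F s) X with hc
  set Z : Matrix (Fin l) (Fin m) ℝ := ∑ s, c s • F s with hZ
  have h0 : 0 ≤ finner (X - Z) (X - Z) := finner_self_nonneg _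
  have hZX : finner Z X = ∑ s, (c s)^2 := by
    rw [hZ, finner_sum_left]
    exact Finset.sum_congr rfl fun s _ => by rw [finner_smul_left]; simp only [hc]; ring
  have hXZ : finner X Z = ∑ s, (c s)^2 := by rw [finner_comm]; exact hZX
  have hZZ : finner Z Z = ∑ s, (c s)^2 := pyth F hF c
  have hexp : finner (X - Z) (X - Z) = finner X X - finner Z X - (finner X Z - finner Z Z) := by
    rw [finner_sub_left, finner_comm X (X - Z), finner_sub_left, finner_comm Z (X - Z),
      finner_sub_left]
  rw [hexp, hZX, hXZ, hZZ] at h0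
  linarith



/-- The doubled index family. -/
def Fam (u : Fin (r + k) → Fin l → ℝ) (v : Fin (r + k) → Fin m → ℝ) :
    (Fin r × Fin k) ⊕ (Fin r × Fin k) → Matrix (Fin l) (Fin m) ℝ
  | .inl s => vecMulVec (u (Fin.castAdd k s.1)) (v (Fin.natAdd r s.2))
  | .inr s => vecMulVec (u (Fin.natAdd r s.2)) (v (Fin.castAdd k s.1))

lemma Fam_ortho (u : Fin (r + k) → Fin l → ℝ) (v : Fin (r + k) → Fin m → ℝ)
    (hu : ∀ i j, dotProduct (u i) (u j) = if i = j then 1 else 0)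
    (hv : ∀ i j, dotProduct (v i) (v j) = if i = j then 1 else 0)
    (s t : (Fin r × Fin k) ⊕ (Fin r × Fin k)) :
    finner (Fam u v s) (Fam u v t) = if s = t then 1 else 0 := by
  have hc : ∀ i i' : Fin r, (Fin.castAdd k i = Fin.castAdd k i') ↔ i = i' := by
    intro i i'; simp [Fin.ext_iff]
  have hn : ∀ j j' : Fin k, (Fin.natAdd r j = Fin.natAdd r j') ↔ j = j' := by
    intro j j'; simp [Fin.ext_iff]
  have hcn : ∀ (i : Fin r) (j : Fin k), ¬ (Fin.castAdd k i = Fin.natAdd r j) := by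
    intro i j h; rw [Fin.ext_iff] at h; simp at h; omega
  have hnc : ∀ (i : Fin r) (j : Fin k), ¬ (Fin.natAdd r j = Fin.castAdd k i) := by
    intro i j h; rw [Fin.ext_iff] at h; simp at h; omega
  rcases s with ⟨i, j⟩ | ⟨i, j⟩ <;> rcases t with ⟨i', j'⟩ | ⟨i', j'⟩ <;>
    simp only [Fam, finner_vecMulVec_vecMulVec, hu, hv]
  · by_cases h1 : i = i' <;> by_cases h2 : j = j' <;>
      simp [h1, h2, hc, hn, Prod.ext_iff]
  · simp [hcn, hnc]
  · simp [hcn, hnc]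
  · by_cases h1 : i = i' <;> by_cases h2 : j = j' <;>
      simp [h1, h2, hc, hn, Prod.ext_iff]

/-- Coefficients of `L X` in the family `Fam`. -/
noncomputable def coefs (u : Fin (r + k) → Fin l → ℝ) (v : Fin (r + k) → Fin m → ℝ)
    (σ : Fin (r + k) → ℝ) (X : Matrix (Fin l) (Fin m) ℝ) :
    (Fin r × Fin k) ⊕ (Fin r × Fin k) → ℝ
  | .inl s => (σ (Fin.natAdd r s.2) / σ (Fin.castAdd k s.1)) * finner (Fam u v (.inr s)) X
  | .inr s => (σ (Fin.natAdd r s.2) / σ (Fin.castAdd k s.1)) * finner (Fam u v (.inl s)) X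

lemma L_repr (u : Fin (r + k) → Fin l → ℝ) (v : Fin (r + k) → Fin m → ℝ)
    (σ : Fin (r + k) → ℝ) (X : Matrix (Fin l) (Fin m) ℝ) :
    (∑ i : Fin r, ∑ j : Fin k,
        (σ (Fin.natAdd r j) / σ (Fin.castAdd k i)) •
          (vecMulVec (u (Fin.castAdd k i)) (v (Fin.castAdd k i)) * Xᵀ *
              vecMulVec (u (Fin.natAdd r j)) (v (Fin.natAdd r j)) +
            vecMulVec (u (Fin.natAdd r j)) (v (Fin.natAdd r j)) * Xᵀ *
              vecMulVec (u (Fin.castAdd k i)) (v (Fin.castAdd k i))))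
      = ∑ s, coefs u v σ X s • Fam u v s := by
  rw [Fintype.sum_sum_type, ← Finset.sum_add_distrib, Fintype.sum_prod_type]
  refine Finset.sum_congr rfl fun i _ => Finset.sum_congr rfl fun j _ => ?_
  rw [triple, triple]
  simp only [Fam, coefs, finner_vecMulVec, smul_add, smul_smul]

end WG

open WG in
/-- The operator norm of the Weingarten map `L_R(N)` on the tangent space at `R` is
`σ₁(N)/σ_r(R)`; in particular, since `σ₁(N) ≤ ‖N‖`, the maximal principal curvature in the
unit normal direction `N/‖N‖` is at most `1/σ_r(R)`. -/
theorem weingarten_operator_norm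
    (l m r k : ℕ)
    (u : Fin (r + k) → Fin l → ℝ) (v : Fin (r + k) → Fin m → ℝ) (σ : Fin (r + k) → ℝ)
    (hu : ∀ i j, dotProduct (u i) (u j) = if i = j then 1 else 0)
    (hv : ∀ i j, dotProduct (v i) (v j) = if i = j then 1 else 0)
    (hσ : ∀ i, 0 < σ i)
    (N : Matrix (Fin l) (Fin m) ℝ)
    (hN : N = ∑ j : Fin k,
      σ (Fin.natAdd r j) • vecMulVec (u (Fin.natAdd r j)) (v (Fin.natAdd r j)))
    -- `σ₁(N)` : the largest singular value of `N`; `σ_r(R)` : the smallest of `R`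
    (s1 : ℝ) (hs1 : IsGreatest (Set.range fun j : Fin k => σ (Fin.natAdd r j)) s1)
    (sr : ℝ) (hsr : IsLeast (Set.range fun i : Fin r => σ (Fin.castAdd k i)) sr) :
    let PU : Matrix (Fin l) (Fin l) ℝ :=
      ∑ i : Fin r, vecMulVec (u (Fin.castAdd k i)) (u (Fin.castAdd k i))
    let PV : Matrix (Fin m) (Fin m) ℝ :=
      ∑ i : Fin r, vecMulVec (v (Fin.castAdd k i)) (v (Fin.castAdd k i))
    let T : Submodule ℝ (Matrix (Fin l) (Fin m) ℝ) :=
      LinearMap.ker (mulLeftRight (1 - PU) (1 - PV))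
    let L : Matrix (Fin l) (Fin m) ℝ → Matrix (Fin l) (Fin m) ℝ := fun X =>
      ∑ i : Fin r, ∑ j : Fin k,
        (σ (Fin.natAdd r j) / σ (Fin.castAdd k i)) •
          (vecMulVec (u (Fin.castAdd k i)) (v (Fin.castAdd k i)) * Xᵀ *
              vecMulVec (u (Fin.natAdd r j)) (v (Fin.natAdd r j)) +
            vecMulVec (u (Fin.natAdd r j)) (v (Fin.natAdd r j)) * Xᵀ *
              vecMulVec (u (Fin.castAdd k i)) (v (Fin.castAdd k i)))
    (∀ X ∈ T, fnorm (L X) ≤ (s1 / sr) * fnorm X) ∧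
    (∃ X ∈ T, X ≠ 0 ∧ fnorm (L X) = (s1 / sr) * fnorm X) ∧
    s1 ≤ fnorm N := by
  intro PU PV T L
  obtain ⟨j1, hj1'⟩ := hs1.1
  obtain ⟨i1, hi1'⟩ := hsr.1
  have hj1 : σ (Fin.natAdd r j1) = s1 := hj1'
  have hi1 : σ (Fin.castAdd k i1) = sr := hi1'
  have hsrpos : 0 < sr := hi1 ▸ hσ _
  have hs1pos : 0 < s1 := hj1 ▸ hσ _
  have hK : (0:ℝ) ≤ s1 / sr := le_of_lt (div_pos hs1pos hsrpos)
  have hortho := Fam_ortho u v hu hv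
  have hratio : ∀ (i : Fin r) (j : Fin k),
      0 ≤ σ (Fin.natAdd r j) / σ (Fin.castAdd k i) ∧
      σ (Fin.natAdd r j) / σ (Fin.castAdd k i) ≤ s1 / sr := fun i j =>
    ⟨le_of_lt (div_pos (hσ _) (hσ _)),
     div_le_div₀ hs1pos.le (hs1.2 ⟨j, rfl⟩) hsrpos (hsr.2 ⟨i, rfl⟩)⟩
  refine ⟨?_, ?_, ?_⟩
  · -- norm bound
    intro X _
    have hrepr : L X = ∑ s, coefs u v σ X s • Fam u v s := L_repr u v σ X
    have key : ∑ s, (coefs u v σ X s)^2 ≤ (s1/sr)^2 * finner X X := by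
      have step1 : ∀ s, (coefs u v σ X s)^2 ≤
          (s1/sr)^2 *
            (finner (Fam u v (Equiv.sumComm (Fin r × Fin k) (Fin r × Fin k) s)) X)^2 := by
        rintro (⟨i, j⟩ | ⟨i, j⟩) <;>
        · simp only [coefs, Equiv.sumComm_apply, Sum.swap_inl, Sum.swap_inr]
          rw [mul_pow]
          exact mul_le_mul_of_nonneg_right
            (pow_le_pow_left₀ (hratio i j).1 (hratio i j).2 2) (sq_nonneg _)
      calc ∑ s, (coefs u v σ X s)^2
          ≤ ∑ s, (s1/sr)^2 *
              (finner (Fam u v (Equiv.sumComm (Fin r × Fin k) (Fin r × Fin k) s)) X)^2 :=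
            Finset.sum_le_sum fun s _ => step1 s
        _ = (s1/sr)^2 * ∑ s, (finner (Fam u v s) X)^2 := by
            rw [← Finset.mul_sum]
            congr 1
            exact Equiv.sum_comp (Equiv.sumComm (Fin r × Fin k) (Fin r × Fin k))
              (fun t => (finner (Fam u v t) X)^2)
        _ ≤ (s1/sr)^2 * finner X X :=
            mul_le_mul_of_nonneg_left (bessel _ hortho X) (sq_nonneg _)
    calc fnorm (L X) = Real.sqrt (∑ s, (coefs u v σ X s)^2) := by
          rw [hrepr, fnorm_eq, pyth _ hortho]
      _ ≤ Real.sqrt ((s1/sr)^2 * finner X X) := Real.sqrt_le_sqrt key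
      _ = (s1/sr) * fnorm X := by
          rw [fnorm_eq, Real.sqrt_mul (sq_nonneg (s1/sr)) (finner X X), Real.sqrt_sq hK]
  · -- equality witness
    refine ⟨Fam u v (.inl (i1, j1)), ?_, ?_, ?_⟩
    · -- membership in the tangent space
      have hPUX : PU * Fam u v (.inl (i1, j1)) = Fam u v (.inl (i1, j1)) := by
        show (∑ i : Fin r, vecMulVec (u (Fin.castAdd k i)) (u (Fin.castAdd k i))) *
            Fam u v (.inl (i1, j1)) = Fam u v (.inl (i1, j1))
        rw [Matrix.sum_mul]
        simp only [Fam, WG.vecMulVec_mul_vecMulVec, hu]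
        have hce : ∀ i : Fin r, (Fin.castAdd k i = Fin.castAdd k i1) ↔ i = i1 := by
          intro i; simp [Fin.ext_iff]
        simp [hce, ite_smul, Finset.sum_ite_eq']
      show Fam u v (.inl (i1, j1)) ∈ LinearMap.ker (mulLeftRight (1 - PU) (1 - PV))
      rw [LinearMap.mem_ker]
      show (1 - PU) * Fam u v (.inl (i1, j1)) * (1 - PV) = 0
      rw [Matrix.sub_mul, Matrix.one_mul, hPUX, sub_self, Matrix.zero_mul]
    · -- nonzero
      intro h
      have h1 := hortho (.inl (i1, j1)) (.inl (i1, j1))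
      rw [h] at h1
      simp [finner] at h1
    · -- equality of norms
      have hrepr : L (Fam u v (.inl (i1, j1))) =
          ∑ s, coefs u v σ (Fam u v (.inl (i1, j1))) s • Fam u v s :=
        L_repr u v σ _
      have hcoefs : ∀ s, coefs u v σ (Fam u v (.inl (i1, j1))) s =
          if s = Sum.inr (i1, j1) then s1 / sr else 0 := by
        rintro (⟨i, j⟩ | ⟨i, j⟩)
        · simp [coefs, hortho]
        · simp only [coefs, hortho]
          by_cases h1 : i = i1 <;> by_cases h2 : j = j1 <;>
            simp [h1, h2, Prod.ext_iff, hi1, hj1]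
      have hsum : ∑ s, (coefs u v σ (Fam u v (.inl (i1, j1))) s)^2 = (s1/sr)^2 := by
        rw [Finset.sum_congr rfl (fun s _ => by rw [hcoefs s])]
        simp [apply_ite (fun x : ℝ => x^2), Finset.sum_ite_eq']
      have hX1 : fnorm (Fam u v (.inl (i1, j1))) = 1 := by
        rw [fnorm_eq, hortho]
        simp
      calc fnorm (L (Fam u v (.inl (i1, j1))))
          = Real.sqrt (∑ s, (coefs u v σ (Fam u v (.inl (i1, j1))) s)^2) := by
            rw [hrepr, fnorm_eq, pyth _ hortho]
        _ = (s1/sr) * fnorm (Fam u v (.inl (i1, j1))) := by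
            rw [hsum, Real.sqrt_sq hK, hX1, mul_one]
  · -- s1 ≤ fnorm N
    have hGortho : ∀ s t : Fin k,
        finner (vecMulVec (u (Fin.natAdd r s)) (v (Fin.natAdd r s)))
          (vecMulVec (u (Fin.natAdd r t)) (v (Fin.natAdd r t))) = if s = t then 1 else 0 := by
      intro s t
      rw [finner_vecMulVec_vecMulVec, hu, hv]
      have : (Fin.natAdd r s = Fin.natAdd r t) ↔ s = t := by simp [Fin.ext_iff]
      by_cases h : s = t <;> simp [this, h]
    have hNN : finner N N = ∑ j : Fin k, (σ (Fin.natAdd r j))^2 := by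
      rw [hN]; exact pyth _ hGortho _
    rw [fnorm_eq, hNN]
    have : s1^2 ≤ ∑ j : Fin k, (σ (Fin.natAdd r j))^2 := by
      rw [← hj1]
      exact Finset.single_le_sum (fun (j : Fin k) _ => sq_nonneg (σ (Fin.natAdd r j)))
        (Finset.mem_univ j1)
    calc s1 = Real.sqrt (s1^2) := (Real.sqrt_sq hs1pos.le).symm
      _ ≤ _ := Real.sqrt_le_sqrt this
end

section
/- For any two rank-r matrices R¹, R² ∈ ℝ^{l×m}, the orthogonal projections onto their tangent spaces satisfy ‖Π_{T_{R¹}} − Π_{T_{R²}}‖ ≤ min(1, (2/σ_r(R¹)) ‖R¹ − R²‖), where the left-hand norm is the operator norm on ℝ^{l×m} with the Frobenius norm, and σ_r(R¹) is the smallest nonzero singular value of R¹. -/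
open Matrix

namespace TPB

variable {n p q s : Type*} [Fintype n] [Fintype p] [Fintype q] [Fintype s]

noncomputable def vsq (x : n → ℝ) : ℝ := x ⬝ᵥ x

lemma vsq_nonneg (x : n → ℝ) : 0 ≤ vsq x :=
  Finset.sum_nonneg fun _ _ => mul_self_nonneg _

lemma vsq_eq_zero {x : n → ℝ} (h : vsq x = 0) : x = 0 := by
  funext i
  have h2 := (Finset.sum_eq_zero_iff_of_nonneg (fun i _ => mul_self_nonneg (x i))).1 h i
    (Finset.mem_univ i)
  simpa using mul_self_eq_zero.1 h2

lemma dmv (M : Matrix n p ℝ) (x : p → ℝ) (y : n → ℝ) :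
    (M *ᵥ x) ⬝ᵥ y = x ⬝ᵥ (Mᵀ *ᵥ y) := by
  rw [dotProduct_comm, dotProduct_mulVec, ← mulVec_transpose, dotProduct_comm]

lemma cs (x y : n → ℝ) : (x ⬝ᵥ y) ^ 2 ≤ vsq x * vsq y := by
  have := Finset.sum_mul_sq_le_sq_mul_sq Finset.univ x y
  simpa [dotProduct, vsq, pow_two] using this

/-- operator norm bound, squared form -/
noncomputable def opb (M : Matrix n p ℝ) (c : ℝ) : Prop :=
  0 ≤ c ∧ ∀ x : p → ℝ, vsq (M *ᵥ x) ≤ c ^ 2 * vsq x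

lemma opb_mono {M : Matrix n p ℝ} {c d : ℝ} (h : opb M c) (hcd : c ≤ d) : opb M d :=
  ⟨h.1.trans hcd, fun x => (h.2 x).trans (by
    have : c^2 ≤ d^2 := by nlinarith [h.1]
    nlinarith [vsq_nonneg x])⟩

lemma opb_mul {M : Matrix n p ℝ} {N : Matrix p q ℝ} {c d : ℝ}
    (hM : opb M c) (hN : opb N d) : opb (M * N) (c * d) := by
  refine ⟨mul_nonneg hM.1 hN.1, fun x => ?_⟩
  rw [← mulVec_mulVec]
  calc vsq (M *ᵥ (N *ᵥ x)) ≤ c ^ 2 * vsq (N *ᵥ x) := hM.2 _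
    _ ≤ c ^ 2 * (d ^ 2 * vsq x) := by
        have := hN.2 x
        nlinarith [sq_nonneg c]
    _ = (c * d) ^ 2 * vsq x := by ring

lemma sq_le_cancel {s a : ℝ} (hs : 0 ≤ s) (ha : 0 ≤ a) (h : s ^ 2 ≤ a * s) : s ≤ a := by
  rcases eq_or_lt_of_le hs with h0 | h0
  · linarith
  · nlinarith

lemma opb_transpose {M : Matrix n p ℝ} {c : ℝ} (h : opb M c) : opb Mᵀ c := by
  refine ⟨h.1, fun x => ?_⟩
  have h1 : vsq (Mᵀ *ᵥ x) = x ⬝ᵥ (M *ᵥ (Mᵀ *ᵥ x)) := by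
    rw [vsq, dmv, transpose_transpose]
  have h2 : vsq (Mᵀ *ᵥ x) ^ 2 ≤ vsq x * vsq (M *ᵥ (Mᵀ *ᵥ x)) := by rw [h1]; exact cs _ _
  have h3 : vsq (M *ᵥ (Mᵀ *ᵥ x)) ≤ c ^ 2 * vsq (Mᵀ *ᵥ x) := h.2 _
  refine sq_le_cancel (vsq_nonneg _) (mul_nonneg (sq_nonneg c) (vsq_nonneg x)) ?_
  nlinarith [vsq_nonneg x, vsq_nonneg (Mᵀ *ᵥ x)]

/-- symmetric idempotent matrices have operator norm ≤ 1 -/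
lemma opb_proj {P : Matrix n n ℝ} (hsym : Pᵀ = P) (hid : P * P = P) : opb P 1 := by
  refine ⟨zero_le_one, fun x => ?_⟩
  have h1 : vsq (P *ᵥ x) = x ⬝ᵥ (P *ᵥ x) := by
    rw [vsq, dmv, hsym, mulVec_mulVec, hid]
  have h2 : vsq (P *ᵥ x) ^ 2 ≤ vsq x * vsq (P *ᵥ x) := by
    have h3 := cs x (P *ᵥ x)
    rw [← h1] at h3
    exact h3
  have := sq_le_cancel (vsq_nonneg (P *ᵥ x)) (vsq_nonneg x) h2
  linarith


lemma opb_diagonal [DecidableEq n] {w : n → ℝ} {c : ℝ} (hc : 0 ≤ c)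
    (h : ∀ i, |w i| ≤ c) : opb (diagonal w) c := by
  refine ⟨hc, fun x => ?_⟩
  have : ∀ i, (diagonal w *ᵥ x) i * (diagonal w *ᵥ x) i ≤ c ^ 2 * (x i * x i) := by
    intro i
    rw [mulVec_diagonal]
    have h1 := h i
    have hw2 : w i ^ 2 ≤ c ^ 2 := by
      have h2 := abs_nonneg (w i)
      have h3 := sq_abs (w i)
      nlinarith
    nlinarith [mul_nonneg (sub_nonneg.2 hw2) (sq_nonneg (x i))]
  calc vsq (diagonal w *ᵥ x) = ∑ i, (diagonal w *ᵥ x) i * (diagonal w *ᵥ x) i := rfl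
    _ ≤ ∑ i, c ^ 2 * (x i * x i) := Finset.sum_le_sum fun i _ => this i
    _ = c ^ 2 * vsq x := by rw [vsq, dotProduct, Finset.mul_sum]

/-- squared Frobenius norm -/
noncomputable def fsq (M : Matrix n p ℝ) : ℝ := trace (Mᵀ * M)

lemma fsq_eq_sum_cols (M : Matrix n p ℝ) : fsq M = ∑ j, vsq (fun i => M i j) := by
  simp [fsq, trace, mul_apply, vsq, dotProduct, diag]

lemma fsq_eq_sum_rows (M : Matrix n p ℝ) : fsq M = ∑ i, vsq (fun j => M i j) := by
  rw [fsq_eq_sum_cols]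
  simp only [vsq, dotProduct]
  exact Finset.sum_comm

lemma fsq_nonneg (M : Matrix n p ℝ) : 0 ≤ fsq M := by
  rw [fsq_eq_sum_cols]; exact Finset.sum_nonneg fun j _ => vsq_nonneg _

lemma fsq_transpose (M : Matrix n p ℝ) : fsq Mᵀ = fsq M := by
  rw [fsq_eq_sum_cols, fsq_eq_sum_rows]; rfl

lemma col_mul (M : Matrix n p ℝ) (X : Matrix p q ℝ) (j : q) :
    (fun i => (M * X) i j) = M *ᵥ (fun k => X k j) := by
  funext i; simp [mul_apply, mulVec, dotProduct]

/-- operator bound gives Frobenius bound on products -/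
lemma fsq_mul_le {M : Matrix n p ℝ} {c : ℝ} (h : opb M c) (X : Matrix p q ℝ) :
    fsq (M * X) ≤ c ^ 2 * fsq X := by
  rw [fsq_eq_sum_cols, fsq_eq_sum_cols, Finset.mul_sum]
  refine Finset.sum_le_sum fun j _ => ?_
  rw [col_mul]
  exact h.2 _

lemma fsq_mul_right_le {N : Matrix p q ℝ} {c : ℝ} (h : opb Nᵀ c) (X : Matrix n p ℝ) :
    fsq (X * N) ≤ c ^ 2 * fsq X := by
  have h1 : fsq (X * N) = fsq (Nᵀ * Xᵀ) := by rw [← transpose_mul, fsq_transpose]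
  rw [h1, ← fsq_transpose X]
  exact fsq_mul_le h _

/-- matrix acting as operator is bounded by its Frobenius norm -/
lemma opb_of_fsq {M : Matrix n p ℝ} {c : ℝ} (hc : 0 ≤ c) (h : fsq M ≤ c ^ 2) :
    opb M c := by
  refine ⟨hc, fun x => ?_⟩
  have key : ∀ i, (M *ᵥ x) i * (M *ᵥ x) i ≤ vsq (fun j => M i j) * vsq x := by
    intro i
    have := cs (fun j => M i j) x
    have he : (M *ᵥ x) i = (fun j => M i j) ⬝ᵥ x := rfl
    rw [he]
    nlinarith
  calc vsq (M *ᵥ x) = ∑ i, (M *ᵥ x) i * (M *ᵥ x) i := rfl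
    _ ≤ ∑ i, vsq (fun j => M i j) * vsq x := Finset.sum_le_sum fun i _ => key i
    _ = fsq M * vsq x := by rw [fsq_eq_sum_rows, Finset.sum_mul]
    _ ≤ c ^ 2 * vsq x := by nlinarith [vsq_nonneg x]

/-- Frobenius inner product -/
noncomputable def fip (M N : Matrix n p ℝ) : ℝ := trace (Mᵀ * N)

lemma fip_self (M : Matrix n p ℝ) : fip M M = fsq M := rfl

lemma fip_eq_sum (M N : Matrix n p ℝ) : fip M N = ∑ ij : n × p, M ij.1 ij.2 * N ij.1 ij.2 := by
  rw [Fintype.sum_prod_type]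
  simp [fip, trace, mul_apply, diag]
  exact Finset.sum_comm

lemma fip_comm (M N : Matrix n p ℝ) : fip M N = fip N M := by
  rw [fip_eq_sum, fip_eq_sum]
  exact Finset.sum_congr rfl fun ij _ => mul_comm _ _

lemma fip_cs (M N : Matrix n p ℝ) : fip M N ^ 2 ≤ fsq M * fsq N := by
  have hM : fsq M = ∑ ij : n × p, M ij.1 ij.2 ^ 2 := by
    rw [fsq_eq_sum_rows, Fintype.sum_prod_type]
    simp [vsq, dotProduct, pow_two]
  have hN : fsq N = ∑ ij : n × p, N ij.1 ij.2 ^ 2 := by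
    rw [fsq_eq_sum_rows, Fintype.sum_prod_type]
    simp [vsq, dotProduct, pow_two]
  rw [fip_eq_sum, hM, hN]
  exact Finset.sum_mul_sq_le_sq_mul_sq _ _ _

lemma fip_add_left (A B C : Matrix n p ℝ) : fip (A + B) C = fip A C + fip B C := by
  rw [fip, fip, fip, transpose_add, Matrix.add_mul, trace_add]

lemma fip_add_right (A B C : Matrix n p ℝ) : fip A (B + C) = fip A B + fip A C := by
  rw [fip, fip, fip, Matrix.mul_add, trace_add]

lemma fip_sub_left (A B C : Matrix n p ℝ) : fip (A - B) C = fip A C - fip B C := by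
  rw [fip, fip, fip, transpose_sub, Matrix.sub_mul, trace_sub]

lemma fip_sub_right (A B C : Matrix n p ℝ) : fip A (B - C) = fip A B - fip A C := by
  rw [fip, fip, fip, Matrix.mul_sub, trace_sub]

lemma fsq_sub (A B : Matrix n p ℝ) : fsq (A - B) = fsq A - 2 * fip A B + fsq B := by
  rw [← fip_self, fip_sub_left, fip_sub_right, fip_sub_right, ← fip_self, ← fip_self,
    fip_comm B A]
  ring

lemma fsq_add (A B : Matrix n p ℝ) : fsq (A + B) = fsq A + 2 * fip A B + fsq B := by
  rw [← fip_self, fip_add_left, fip_add_right, fip_add_right, ← fip_self, ← fip_self,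
    fip_comm B A]
  ring

lemma fnorm_triangle' (A B : Matrix n p ℝ) :
    Real.sqrt (fsq (A + B)) ≤ Real.sqrt (fsq A) + Real.sqrt (fsq B) := by
  have hA := fsq_nonneg A
  have hB := fsq_nonneg B
  have hip : fip A B ≤ Real.sqrt (fsq A) * Real.sqrt (fsq B) := by
    have h1 := fip_cs A B
    have h2 : Real.sqrt (fsq A) ^ 2 = fsq A := Real.sq_sqrt hA
    have h3 : Real.sqrt (fsq B) ^ 2 = fsq B := Real.sq_sqrt hB
    calc fip A B ≤ Real.sqrt (fip A B ^ 2) := by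
          rw [Real.sqrt_sq_eq_abs]; exact le_abs_self _
      _ ≤ Real.sqrt (fsq A * fsq B) := Real.sqrt_le_sqrt h1
      _ = Real.sqrt (fsq A) * Real.sqrt (fsq B) := Real.sqrt_mul hA _
  have key : fsq (A + B) ≤ (Real.sqrt (fsq A) + Real.sqrt (fsq B)) ^ 2 := by
    rw [fsq_add]
    have h2 : Real.sqrt (fsq A) ^ 2 = fsq A := Real.sq_sqrt hA
    have h3 : Real.sqrt (fsq B) ^ 2 = fsq B := Real.sq_sqrt hB
    nlinarith
  calc Real.sqrt (fsq (A + B)) ≤ Real.sqrt ((Real.sqrt (fsq A) + Real.sqrt (fsq B)) ^ 2) :=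
        Real.sqrt_le_sqrt key
    _ = Real.sqrt (fsq A) + Real.sqrt (fsq B) := by
        rw [Real.sqrt_sq (by positivity)]


lemma sub_mulVec' [DecidableEq n] (P : Matrix n n ℝ) (x : n → ℝ) :
    (1 - P) *ᵥ x = x - P *ᵥ x := by
  rw [sub_mulVec, one_mulVec]

lemma proj_pythag [DecidableEq n] {P : Matrix n n ℝ} (hsym : Pᵀ = P) (hid : P * P = P)
    (x : n → ℝ) : vsq x = vsq (P *ᵥ x) + vsq ((1 - P) *ᵥ x) := by
  have horth : (P *ᵥ x) ⬝ᵥ (x - P *ᵥ x) = 0 := by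
    rw [dmv, hsym, mulVec_sub, mulVec_mulVec, hid, sub_self, dotProduct_zero]
  rw [sub_mulVec']
  have hx : x = P *ᵥ x + (x - P *ᵥ x) := by abel
  calc vsq x = (P *ᵥ x + (x - P *ᵥ x)) ⬝ᵥ (P *ᵥ x + (x - P *ᵥ x)) := by rw [vsq, ← hx]
    _ = vsq (P *ᵥ x) + vsq (x - P *ᵥ x) + 2 * ((P *ᵥ x) ⬝ᵥ (x - P *ᵥ x)) := by
        rw [vsq, vsq, add_dotProduct, dotProduct_add, dotProduct_add,
          dotProduct_comm (x - P *ᵥ x) (P *ᵥ x)]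
        ring
    _ = vsq (P *ᵥ x) + vsq (x - P *ᵥ x) := by rw [horth]; ring

lemma inv_bound [DecidableEq n] {M : Matrix n n ℝ} {c : ℝ} (hc : 0 < c)
    (h : ∀ z, c ^ 2 * vsq z ≤ vsq (M *ᵥ z)) :
    ∀ y, c ^ 2 * vsq y ≤ vsq (Mᵀ *ᵥ y) := by
  have hinj : Function.Injective (M.mulVecLin) := by
    rw [← LinearMap.ker_eq_bot]
    rw [LinearMap.ker_eq_bot']
    intro z hz
    have h1 := h z
    rw [Matrix.mulVecLin_apply] at hz
    rw [hz] at h1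
    have : vsq z ≤ 0 := by
      have h0 : vsq (0 : n → ℝ) = 0 := by simp [vsq]
      rw [h0] at h1
      have h1' : c ^ 2 * vsq z ≤ c ^ 2 * 0 := by linarith
      exact le_of_mul_le_mul_left h1' (pow_pos hc 2)
    have := le_antisymm this (vsq_nonneg z)
    exact vsq_eq_zero this
  have hsurj : Function.Surjective (M.mulVecLin) :=
    (LinearMap.injective_iff_surjective).1 hinj
  set N : Matrix n n ℝ := Matrix.of fun i j => Classical.choose (hsurj (Pi.single j 1)) i
    with hN
  have hMN : M * N = 1 := by
    ext i j
    have hspec := Classical.choose_spec (hsurj (Pi.single j 1))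
    rw [Matrix.mulVecLin_apply] at hspec
    have hcol : (fun k => N k j) = Classical.choose (hsurj (Pi.single j 1)) := rfl
    have : (M * N) i j = (M *ᵥ fun k => N k j) i := by
      simp [mul_apply, mulVec, dotProduct]
    rw [this, hcol, hspec, Pi.single_apply, one_apply]
  have hopbN : opb N (1 / c) := by
    refine ⟨by positivity, fun x => ?_⟩
    have h1 := h (N *ᵥ x)
    rw [mulVec_mulVec, hMN, one_mulVec] at h1
    rw [div_pow, one_pow, one_div, inv_mul_eq_div, le_div_iff₀ (pow_pos hc 2)]
    nlinarith [h1]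
  have hopbNt : opb Nᵀ (1 / c) := opb_transpose hopbN
  intro y
  have hid : Nᵀ * Mᵀ = 1 := by rw [← transpose_mul, hMN, transpose_one]
  have h2 : vsq y ≤ (1 / c) ^ 2 * vsq (Mᵀ *ᵥ y) := by
    have := hopbNt.2 (Mᵀ *ᵥ y)
    rwa [mulVec_mulVec, hid, one_mulVec] at this
  rw [div_pow, one_pow, one_div, inv_mul_eq_div, le_div_iff₀ (pow_pos hc 2)] at h2
  nlinarith [h2]


section Sym

variable {k : Type*} [Fintype k] [DecidableEq k] [DecidableEq n]

lemma orth_rows_isometry {A : Matrix k n ℝ} (hA : A * Aᵀ = 1) (z : k → ℝ) :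
    vsq (Aᵀ *ᵥ z) = vsq z := by
  rw [vsq, dmv, transpose_transpose, mulVec_mulVec, hA, one_mulVec, vsq]

lemma proj_symm {A : Matrix k n ℝ} : (Aᵀ * A)ᵀ = Aᵀ * A := by
  rw [transpose_mul, transpose_transpose]

lemma proj_idem {A : Matrix k n ℝ} (hA : A * Aᵀ = 1) : (Aᵀ * A) * (Aᵀ * A) = Aᵀ * A := by
  rw [Matrix.mul_assoc, ← Matrix.mul_assoc A Aᵀ A, hA, Matrix.one_mul]

lemma proj_symm' {A : Matrix k n ℝ} : (1 - Aᵀ * A)ᵀ = 1 - Aᵀ * A := by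
  rw [transpose_sub, transpose_one, proj_symm]

lemma comp_idem {P : Matrix n n ℝ} [DecidableEq n] (h : P * P = P) :
    (1 - P) * (1 - P) = 1 - P := by
  rw [Matrix.sub_mul, Matrix.one_mul, Matrix.mul_sub, Matrix.mul_one, h]
  abel

lemma proj_idem' {A : Matrix k n ℝ} (hA : A * Aᵀ = 1) :
    (1 - Aᵀ * A) * (1 - Aᵀ * A) = 1 - Aᵀ * A :=
  comp_idem (proj_idem hA)

/-- equal-rank sin-theta symmetry -/
lemma sym_bound {A A' : Matrix k n ℝ} (hA : A * Aᵀ = 1) (hA' : A' * A'ᵀ = 1)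
    {t : ℝ} (ht : 0 ≤ t)
    (h : opb ((1 - A'ᵀ * A') * (Aᵀ * A)) t) :
    opb ((1 - Aᵀ * A) * (A'ᵀ * A')) t := by
  rcases le_or_gt 1 t with h1t | h1t
  · have := opb_mul (opb_proj (proj_symm' (A := A)) (proj_idem' hA))
      (opb_proj (proj_symm (A := A')) (proj_idem hA'))
    exact opb_mono this (by linarith)
  · -- t < 1 case
    set M : Matrix k k ℝ := A' * Aᵀ with hM
    have hMlow : ∀ z, (1 - t ^ 2) * vsq z ≤ vsq (M *ᵥ z) := by
      intro z
      have hhyp := h.2 (Aᵀ *ᵥ z)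
      have e1 : ((1 - A'ᵀ * A') * (Aᵀ * A)) *ᵥ (Aᵀ *ᵥ z) = (1 - A'ᵀ * A') *ᵥ (Aᵀ *ᵥ z) := by
        rw [mulVec_mulVec, mulVec_mulVec, Matrix.mul_assoc (1 - A'ᵀ * A') (Aᵀ * A) Aᵀ,
          Matrix.mul_assoc Aᵀ A Aᵀ, hA, Matrix.mul_one]
      rw [e1, orth_rows_isometry hA] at hhyp
      have epy := proj_pythag (proj_symm (A := A')) (proj_idem hA') (Aᵀ *ᵥ z)
      rw [orth_rows_isometry hA] at epy
      have e2 : (A'ᵀ * A') *ᵥ (Aᵀ *ᵥ z) = A'ᵀ *ᵥ (M *ᵥ z) := by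
        rw [mulVec_mulVec, mulVec_mulVec, Matrix.mul_assoc, ← hM]
      have e3 : vsq ((A'ᵀ * A') *ᵥ (Aᵀ *ᵥ z)) = vsq (M *ᵥ z) := by
        rw [e2, orth_rows_isometry hA']
      rw [e3] at epy
      nlinarith [vsq_nonneg z]
    have hc : (0:ℝ) < Real.sqrt (1 - t ^ 2) := Real.sqrt_pos.2 (by nlinarith)
    have hc2 : Real.sqrt (1 - t ^ 2) ^ 2 = 1 - t ^ 2 := Real.sq_sqrt (by nlinarith)
    have hMtlow : ∀ y, (1 - t ^ 2) * vsq y ≤ vsq (Mᵀ *ᵥ y) := by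
      intro y
      have := inv_bound hc (fun z => by rw [hc2]; exact hMlow z) y
      rwa [hc2] at this
    refine ⟨ht, fun x => ?_⟩
    have e4 : ((1 - Aᵀ * A) * (A'ᵀ * A')) *ᵥ x = (1 - Aᵀ * A) *ᵥ (A'ᵀ *ᵥ (A' *ᵥ x)) := by
      rw [mulVec_mulVec, mulVec_mulVec, ← Matrix.mul_assoc]
    have epy := proj_pythag (proj_symm (A := A)) (proj_idem hA) (A'ᵀ *ᵥ (A' *ᵥ x))
    have e5 : (Aᵀ * A) *ᵥ (A'ᵀ *ᵥ (A' *ᵥ x)) = Aᵀ *ᵥ (Mᵀ *ᵥ (A' *ᵥ x)) := by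
      rw [mulVec_mulVec, mulVec_mulVec, mulVec_mulVec, mulVec_mulVec, hM, transpose_mul,
        transpose_transpose]
      congr 1
      simp only [Matrix.mul_assoc]
    have e6 : vsq ((Aᵀ * A) *ᵥ (A'ᵀ *ᵥ (A' *ᵥ x))) = vsq (Mᵀ *ᵥ (A' *ᵥ x)) := by
      rw [e5, orth_rows_isometry hA]
    have e7 : vsq (A'ᵀ *ᵥ (A' *ᵥ x)) = vsq (A' *ᵥ x) := orth_rows_isometry hA' _
    have e8 : vsq (A' *ᵥ x) ≤ vsq x := by
      have := (opb_transpose (⟨zero_le_one, fun w => le_of_eq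
        ((orth_rows_isometry hA' w).trans (by ring))⟩ : opb A'ᵀ 1)).2 x
      rwa [transpose_transpose, one_pow, one_mul] at this
    rw [e4]
    have hlow := hMtlow (A' *ᵥ x)
    rw [e6, e7] at epy
    nlinarith [vsq_nonneg (A' *ᵥ x)]

/-- difference of projections bound -/
lemma proj_diff_bound {P1 P2 : Matrix n n ℝ}
    (h1s : P1ᵀ = P1) (h1i : P1 * P1 = P1) (h2s : P2ᵀ = P2) (h2i : P2 * P2 = P2)
    {t : ℝ} (ht : 0 ≤ t)
    (ha : opb (P1 * (1 - P2)) t) (hb : opb ((1 - P1) * P2) t) :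
    opb (P1 - P2) t := by
  refine ⟨ht, fun x => ?_⟩
  have hdec : (P1 - P2) *ᵥ x = (P1 * (1 - P2)) *ᵥ ((1 - P2) *ᵥ x)
      - ((1 - P1) * P2) *ᵥ (P2 *ᵥ x) := by
    rw [mulVec_mulVec, mulVec_mulVec]
    have e1 : P1 * (1 - P2) * (1 - P2) = P1 * (1 - P2) := by
      rw [Matrix.mul_assoc, comp_idem h2i]
    have e2 : (1 - P1) * P2 * P2 = (1 - P1) * P2 := by
      rw [Matrix.mul_assoc, h2i]
    rw [e1, e2, ← sub_mulVec]
    congr 1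
    rw [Matrix.mul_sub, Matrix.mul_one, Matrix.sub_mul, Matrix.one_mul]
    abel
  have horth : ((P1 * (1 - P2)) *ᵥ ((1 - P2) *ᵥ x)) ⬝ᵥ (((1 - P1) * P2) *ᵥ (P2 *ᵥ x)) = 0 := by
    rw [mulVec_mulVec, mulVec_mulVec, dmv, mulVec_mulVec]
    have : (P1 * (1 - P2) * (1 - P2))ᵀ * ((1 - P1) * P2 * P2) = 0 := by
      rw [transpose_mul, transpose_mul, transpose_sub, transpose_one, h1s, h2s]
      have hz : P1 * ((1 - P1) * (P2 * P2)) = 0 := by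
        rw [← Matrix.mul_assoc, Matrix.mul_sub, Matrix.mul_one, h1i, sub_self, Matrix.zero_mul]
      calc (1 - P2) * ((1 - P2) * P1) * ((1 - P1) * P2 * P2)
          = (1 - P2) * ((1 - P2) * (P1 * ((1 - P1) * (P2 * P2)))) := by
            simp only [Matrix.mul_assoc]
        _ = 0 := by rw [hz, Matrix.mul_zero, Matrix.mul_zero]
    rw [this, zero_mulVec, dotProduct_zero]
  -- Pythagoras for the difference
  have hsub : ∀ a b : n → ℝ, a ⬝ᵥ b = 0 → vsq (a - b) = vsq a + vsq b := by
    intro a b hab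
    rw [vsq, vsq, vsq, sub_dotProduct, dotProduct_sub, dotProduct_sub,
      dotProduct_comm b a, hab]
    ring
  rw [hdec, hsub _ _ horth]
  have hA := ha.2 ((1 - P2) *ᵥ x)
  have hB := hb.2 (P2 *ᵥ x)
  have hpy := proj_pythag h2s h2i x
  nlinarith [vsq_nonneg ((1 - P2) *ᵥ x), vsq_nonneg (P2 *ᵥ x)]

end Sym


/-- key bound: `‖P⊥₂ PU₁‖ ≤ ‖R₁ - R₂‖_F / σ_min(R₁)` -/
lemma key_opb {k n p : Type*} [Fintype k] [DecidableEq k] [Fintype n] [Fintype p]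
    [DecidableEq n] [DecidableEq p]
    {A A' : Matrix k n ℝ} {B B' : Matrix k p ℝ} {σ σ' : k → ℝ} {sr : ℝ}
    (hAA : A * Aᵀ = 1) (hBB : B * Bᵀ = 1) (hA' : A' * A'ᵀ = 1)
    (hsrpos : 0 < sr) (hsrle : ∀ i, sr ≤ σ i) (hσpos : ∀ i, 0 < σ i) :
    opb ((1 - A'ᵀ * A') * (Aᵀ * A))
      (Real.sqrt (fsq (Aᵀ * diagonal σ * B - A'ᵀ * diagonal σ' * B')) / sr) := by
  set R1 : Matrix n p ℝ := Aᵀ * diagonal σ * B with hR1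
  set R2 : Matrix n p ℝ := A'ᵀ * diagonal σ' * B' with hR2
  set E : Matrix n p ℝ := R1 - R2 with hE
  set Dinv : Matrix k k ℝ := diagonal (fun i => (σ i)⁻¹) with hDinv
  set P2c : Matrix n n ℝ := 1 - A'ᵀ * A' with hP2c
  -- step 1 : Aᵀ = R1 * (Bᵀ * Dinv)
  have hDD : diagonal σ * Dinv = 1 := by
    rw [hDinv, diagonal_mul_diagonal]
    have : (fun i => σ i * (σ i)⁻¹) = fun _ => (1:ℝ) := by
      funext i; exact mul_inv_cancel₀ (ne_of_gt (hσpos i))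
    rw [this, diagonal_one]
  have step1 : Aᵀ = R1 * (Bᵀ * Dinv) := by
    rw [hR1, Matrix.mul_assoc (Aᵀ * diagonal σ) B (Bᵀ * Dinv), ← Matrix.mul_assoc B Bᵀ Dinv,
      hBB, Matrix.one_mul, Matrix.mul_assoc, hDD, Matrix.mul_one]
  -- step 2 : P2c * R2 = 0
  have step2 : P2c * R2 = 0 := by
    rw [hP2c, hR2, Matrix.sub_mul, Matrix.one_mul]
    have : A'ᵀ * A' * (A'ᵀ * diagonal σ' * B') = A'ᵀ * diagonal σ' * B' := by
      calc A'ᵀ * A' * (A'ᵀ * diagonal σ' * B')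
          = A'ᵀ * ((A' * A'ᵀ) * (diagonal σ' * B')) := by simp only [Matrix.mul_assoc]
        _ = A'ᵀ * diagonal σ' * B' := by rw [hA', Matrix.one_mul, Matrix.mul_assoc]
    rw [this, sub_self]
  -- step 3 : P2c * Aᵀ = (P2c * E) * (Bᵀ * Dinv)
  have step3 : P2c * (Aᵀ * A) = ((P2c * E) * (Bᵀ * Dinv)) * A := by
    have : P2c * Aᵀ = (P2c * E) * (Bᵀ * Dinv) := by
      calc P2c * Aᵀ = P2c * (R1 * (Bᵀ * Dinv)) := by rw [← step1]
        _ = (P2c * R1) * (Bᵀ * Dinv) := (Matrix.mul_assoc P2c R1 (Bᵀ * Dinv)).symm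
        _ = (P2c * E + P2c * R2) * (Bᵀ * Dinv) := by
            rw [← Matrix.mul_add, hE]; congr 2; abel
        _ = (P2c * E) * (Bᵀ * Dinv) := by rw [step2, add_zero]
    rw [← Matrix.mul_assoc, this]
  rw [step3]
  -- operator norm chain
  have hobP : opb P2c 1 := opb_proj (proj_symm' (A := A')) (proj_idem' hA')
  have hobE : opb E (Real.sqrt (fsq E)) :=
    opb_of_fsq (Real.sqrt_nonneg _) (le_of_eq (Real.sq_sqrt (fsq_nonneg E)).symm)
  have hobBt : opb Bᵀ 1 := by
    refine ⟨zero_le_one, fun x => ?_⟩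
    rw [orth_rows_isometry hBB, one_pow, one_mul]

  have hobDinv : opb Dinv (1 / sr) := by
    refine opb_diagonal (by positivity) fun i => ?_
    rw [abs_of_pos (inv_pos.2 (hσpos i)), one_div]
    exact inv_anti₀ hsrpos (hsrle i)
  have hobA : opb A 1 := by
    have : opb Aᵀ 1 := by
      refine ⟨zero_le_one, fun x => ?_⟩
      rw [orth_rows_isometry hAA, one_pow, one_mul]
    have h2 := opb_transpose this
    rwa [transpose_transpose] at h2
  have := opb_mul (opb_mul (opb_mul hobP hobE) (opb_mul hobBt hobDinv)) hobA
  refine opb_mono this (le_of_eq ?_)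
  ring


section Frob

lemma fip_conj (P : Matrix n n ℝ) (Q : Matrix p p ℝ) (Y Z : Matrix n p ℝ) :
    fip (P * Y * Q) Z = fip Y (Pᵀ * Z * Qᵀ) := by
  rw [fip, fip, transpose_mul, transpose_mul, Matrix.mul_assoc,
    Matrix.trace_mul_comm]
  congr 1
  simp only [Matrix.mul_assoc]

lemma conj_idem {a : Matrix n n ℝ} {c : Matrix p p ℝ} (ha : a * a = a) (hc : c * c = c)
    (Z : Matrix n p ℝ) : a * (a * Z * c) * c = a * Z * c := by
  calc a * (a * Z * c) * c = (a * a) * Z * (c * c) := by simp only [Matrix.mul_assoc]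
    _ = a * Z * c := by rw [ha, hc]

lemma fip_conj_self {a : Matrix n n ℝ} {c : Matrix p p ℝ}
    (has : aᵀ = a) (hai : a * a = a) (hcs : cᵀ = c) (hci : c * c = c) (Z : Matrix n p ℝ) :
    fip Z (a * Z * c) = fsq (a * Z * c) := by
  rw [← fip_self, fip_conj, has, hcs, conj_idem hai hci]

lemma fsq_conj_le {a : Matrix n n ℝ} {c : Matrix p p ℝ}
    (has : aᵀ = a) (hai : a * a = a) (hcs : cᵀ = c) (hci : c * c = c) (Z : Matrix n p ℝ) :
    fsq (a * Z * c) ≤ fsq Z := by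
  have h1 := fip_conj_self has hai hcs hci Z
  have h2 := fip_cs Z (a * Z * c)
  rw [h1] at h2
  exact sq_le_cancel (fsq_nonneg _) (fsq_nonneg _) (by nlinarith)

lemma fsq_sub_conj {a : Matrix n n ℝ} {c : Matrix p p ℝ}
    (has : aᵀ = a) (hai : a * a = a) (hcs : cᵀ = c) (hci : c * c = c) (Z : Matrix n p ℝ) :
    fsq (Z - a * Z * c) = fsq Z - fsq (a * Z * c) := by
  rw [fsq_sub, fip_conj_self has hai hcs hci]
  ring

/-- the `1`-bound : difference of two tangent-space projections is a contraction -/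
lemma one_bound [DecidableEq n] [DecidableEq p]
    {a b : Matrix n n ℝ} {c d : Matrix p p ℝ}
    (has : aᵀ = a) (hai : a * a = a) (hbs : bᵀ = b) (hbi : b * b = b)
    (hcs : cᵀ = c) (hci : c * c = c) (hds : dᵀ = d) (hdi : d * d = d)
    (X : Matrix n p ℝ) :
    fsq (b * X * d - a * X * c) ≤ fsq X := by
  set Z : Matrix n p ℝ := a * X * c with hZ
  set W : Matrix n p ℝ := X - Z with hW
  set G : Matrix n p ℝ := Z - b * Z * d with hG
  have hdec : b * X * d - a * X * c = b * W * d - G := by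
    rw [hG, hW, hZ]
    rw [Matrix.mul_sub, Matrix.sub_mul]
    abel
  have horth : fip (b * W * d) G = 0 := by
    rw [fip_conj, hbs, hds, hG, Matrix.mul_sub, Matrix.sub_mul, conj_idem hbi hdi, sub_self,
      fip_eq_sum]
    simp
  have hpy : fsq (b * W * d - G) = fsq (b * W * d) + fsq G := by
    rw [fsq_sub, horth]
    ring
  have h1 : fsq (b * W * d) ≤ fsq W := fsq_conj_le hbs hbi hds hdi W
  have h2 : fsq G ≤ fsq Z := by
    rw [hG, fsq_sub_conj hbs hbi hds hdi Z]
    linarith [fsq_nonneg (b * Z * d)]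
  have h3 : fsq W = fsq X - fsq Z := by
    rw [hW, hZ, fsq_sub_conj has hai hcs hci X]
  rw [hdec, hpy]
  have h4 : fsq Z ≤ fsq X := fsq_conj_le has hai hcs hci X
  linarith

lemma fnorm_le_of_fsq_le {c : ℝ} (hc : 0 ≤ c) {A : Matrix n p ℝ} {B : Matrix q s ℝ}
    (h : fsq A ≤ c ^ 2 * fsq B) : Real.sqrt (fsq A) ≤ c * Real.sqrt (fsq B) := by
  calc Real.sqrt (fsq A) ≤ Real.sqrt (c ^ 2 * fsq B) := Real.sqrt_le_sqrt h
    _ = c * Real.sqrt (fsq B) := by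
        rw [Real.sqrt_mul (sq_nonneg c), Real.sqrt_sq hc]

end Frob

end TPB

open TPB

set_option maxHeartbeats 2000000

/-- Curvature bound on tangent projections: for two rank-`r` matrices `R¹, R²`,
`‖Π_{T_{R¹}} − Π_{T_{R²}}‖ ≤ min(1, (2/σ_r(R¹)) ‖R¹ − R²‖)` in the operator norm induced
by the Frobenius norm, where `σ_r(R¹)` is the smallest nonzero singular value of `R¹`. -/
theorem tangent_projection_difference_bound
    (l m r : ℕ) (hr : 0 < r)
    (u : Fin r → Fin l → ℝ) (v : Fin r → Fin m → ℝ) (σ : Fin r → ℝ)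
    (u' : Fin r → Fin l → ℝ) (v' : Fin r → Fin m → ℝ) (σ' : Fin r → ℝ)
    (hu : ∀ i j, dotProduct (u i) (u j) = if i = j then 1 else 0)
    (hv : ∀ i j, dotProduct (v i) (v j) = if i = j then 1 else 0)
    (hu' : ∀ i j, dotProduct (u' i) (u' j) = if i = j then 1 else 0)
    (hv' : ∀ i j, dotProduct (v' i) (v' j) = if i = j then 1 else 0)
    (hσ : ∀ i, 0 < σ i) (hσ' : ∀ i, 0 < σ' i)
    (R1 R2 : Matrix (Fin l) (Fin m) ℝ)
    (hR1 : R1 = ∑ i : Fin r, σ i • vecMulVec (u i) (v i))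
    (hR2 : R2 = ∑ i : Fin r, σ' i • vecMulVec (u' i) (v' i))
    -- `σ_r(R¹)` : the smallest (nonzero) singular value of `R¹`
    (sr : ℝ) (hsr : IsLeast (Set.range σ) sr) :
    let PU1 : Matrix (Fin l) (Fin l) ℝ := ∑ i : Fin r, vecMulVec (u i) (u i)
    let PV1 : Matrix (Fin m) (Fin m) ℝ := ∑ i : Fin r, vecMulVec (v i) (v i)
    let PU2 : Matrix (Fin l) (Fin l) ℝ := ∑ i : Fin r, vecMulVec (u' i) (u' i)
    let PV2 : Matrix (Fin m) (Fin m) ℝ := ∑ i : Fin r, vecMulVec (v' i) (v' i)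
    let PT1 : Matrix (Fin l) (Fin m) ℝ → Matrix (Fin l) (Fin m) ℝ := fun X =>
      X - (1 - PU1) * X * (1 - PV1)
    let PT2 : Matrix (Fin l) (Fin m) ℝ → Matrix (Fin l) (Fin m) ℝ := fun X =>
      X - (1 - PU2) * X * (1 - PV2)
    ∀ X : Matrix (Fin l) (Fin m) ℝ,
      fnorm (PT1 X - PT2 X) ≤ min 1 ((2 / sr) * fnorm (R1 - R2)) * fnorm X := by
  intro PU1 PV1 PU2 PV2 PT1 PT2 X
  classical
  set A : Matrix (Fin r) (Fin l) ℝ := Matrix.of u with hAdef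
  set B : Matrix (Fin r) (Fin m) ℝ := Matrix.of v with hBdef
  set A' : Matrix (Fin r) (Fin l) ℝ := Matrix.of u' with hA'def
  set B' : Matrix (Fin r) (Fin m) ℝ := Matrix.of v' with hB'def
  -- orthonormality
  have hAAt : A * Aᵀ = 1 := by
    ext i j; simpa [hAdef, Matrix.mul_apply, Matrix.one_apply, dotProduct] using hu i j
  have hBBt : B * Bᵀ = 1 := by
    ext i j; simpa [hBdef, Matrix.mul_apply, Matrix.one_apply, dotProduct] using hv i j
  have hA'A't : A' * A'ᵀ = 1 := by
    ext i j; simpa [hA'def, Matrix.mul_apply, Matrix.one_apply, dotProduct] using hu' i j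
  have hB'B't : B' * B'ᵀ = 1 := by
    ext i j; simpa [hB'def, Matrix.mul_apply, Matrix.one_apply, dotProduct] using hv' i j
  -- projector identities
  have hPU1 : PU1 = Aᵀ * A := by
    show (∑ i : Fin r, vecMulVec (u i) (u i)) = Aᵀ * A
    ext i j
    simp [hAdef, Matrix.sum_apply, Matrix.mul_apply, vecMulVec_apply]
  have hPV1 : PV1 = Bᵀ * B := by
    show (∑ i : Fin r, vecMulVec (v i) (v i)) = Bᵀ * B
    ext i j
    simp [hBdef, Matrix.sum_apply, Matrix.mul_apply, vecMulVec_apply]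
  have hPU2 : PU2 = A'ᵀ * A' := by
    show (∑ i : Fin r, vecMulVec (u' i) (u' i)) = A'ᵀ * A'
    ext i j
    simp [hA'def, Matrix.sum_apply, Matrix.mul_apply, vecMulVec_apply]
  have hPV2 : PV2 = B'ᵀ * B' := by
    show (∑ i : Fin r, vecMulVec (v' i) (v' i)) = B'ᵀ * B'
    ext i j
    simp [hB'def, Matrix.sum_apply, Matrix.mul_apply, vecMulVec_apply]
  -- R identities
  have hR1' : R1 = Aᵀ * diagonal σ * B := by
    rw [hR1]
    ext i j
    simp only [Matrix.sum_apply, Matrix.smul_apply, vecMulVec_apply, smul_eq_mul,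
      Matrix.mul_apply, Matrix.mul_diagonal, Matrix.transpose_apply, hAdef, hBdef,
      Matrix.of_apply]
    refine Finset.sum_congr rfl fun t _ => ?_
    have hsum : (∑ x, u x i * diagonal σ x t) = u t i * σ t := by
      simp [Matrix.diagonal_apply, mul_ite, mul_zero]
    rw [hsum]; ring
  have hR2' : R2 = A'ᵀ * diagonal σ' * B' := by
    rw [hR2]
    ext i j
    simp only [Matrix.sum_apply, Matrix.smul_apply, vecMulVec_apply, smul_eq_mul,
      Matrix.mul_apply, Matrix.mul_diagonal, Matrix.transpose_apply, hA'def, hB'def,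
      Matrix.of_apply]
    refine Finset.sum_congr rfl fun t _ => ?_
    have hsum : (∑ x, u' x i * diagonal σ' x t) = u' t i * σ' t := by
      simp [Matrix.diagonal_apply, mul_ite, mul_zero]
    rw [hsum]; ring
  -- sr facts
  obtain ⟨i0, hi0⟩ := hsr.1
  have hsrpos : 0 < sr := hi0 ▸ hσ i0
  have hsrle : ∀ i, sr ≤ σ i := fun i => hsr.2 ⟨i, rfl⟩
  set E : Matrix (Fin l) (Fin m) ℝ := R1 - R2 with hE
  set t : ℝ := Real.sqrt (fsq E) / sr with htdef
  have ht : 0 ≤ t := div_nonneg (Real.sqrt_nonneg _) (le_of_lt hsrpos)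
  -- key operator bounds
  have k1 : opb ((1 - A'ᵀ * A') * (Aᵀ * A)) t := by
    have := key_opb (σ := σ) (σ' := σ') (B := B) (B' := B') hAAt hBBt hA'A't
      hsrpos hsrle hσ
    rwa [← hR1', ← hR2', ← hE, ← htdef] at this
  have k2 : opb ((1 - B'ᵀ * B') * (Bᵀ * B)) t := by
    have h0 := key_opb (σ := σ) (σ' := σ') (B := A) (B' := A') hBBt hAAt hB'B't
      hsrpos hsrle hσ
    have e1 : Bᵀ * diagonal σ * A = R1ᵀ := by
      rw [hR1', transpose_mul, transpose_mul, diagonal_transpose, transpose_transpose,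
        Matrix.mul_assoc]
    have e2 : B'ᵀ * diagonal σ' * A' = R2ᵀ := by
      rw [hR2', transpose_mul, transpose_mul, diagonal_transpose, transpose_transpose,
        Matrix.mul_assoc]
    rw [e1, e2, ← transpose_sub, fsq_transpose, ← hE, ← htdef] at h0
    exact h0
  -- symmetric bounds
  have s1 : opb ((1 - Aᵀ * A) * (A'ᵀ * A')) t := sym_bound hAAt hA'A't ht k1
  have s2 : opb ((1 - Bᵀ * B) * (B'ᵀ * B')) t := sym_bound hBBt hB'B't ht k2
  have k1t : opb ((Aᵀ * A) * (1 - A'ᵀ * A')) t := by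
    have := opb_transpose k1
    rwa [transpose_mul, proj_symm, proj_symm'] at this
  have k2t : opb ((Bᵀ * B) * (1 - B'ᵀ * B')) t := by
    have := opb_transpose k2
    rwa [transpose_mul, proj_symm, proj_symm'] at this
  have dU : opb ((Aᵀ * A) - (A'ᵀ * A')) t :=
    proj_diff_bound proj_symm (proj_idem hAAt) proj_symm (proj_idem hA'A't) ht k1t s1
  have dV : opb ((Bᵀ * B) - (B'ᵀ * B')) t :=
    proj_diff_bound proj_symm (proj_idem hBBt) proj_symm (proj_idem hB'B't) ht k2t s2
  -- the difference of tangent projections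
  have hdiff : PT1 X - PT2 X
      = (1 - A'ᵀ * A') * X * (1 - B'ᵀ * B') - (1 - Aᵀ * A) * X * (1 - Bᵀ * B) := by
    show (X - (1 - PU1) * X * (1 - PV1)) - (X - (1 - PU2) * X * (1 - PV2)) = _
    rw [hPU1, hPV1, hPU2, hPV2]
    abel
  have hfn : ∀ Y : Matrix (Fin l) (Fin m) ℝ, fnorm Y = Real.sqrt (fsq Y) := fun _ => rfl
  -- bound 1
  have b1 : fnorm (PT1 X - PT2 X) ≤ 1 * fnorm X := by
    rw [hdiff, hfn, hfn]
    refine fnorm_le_of_fsq_le zero_le_one ?_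
    rw [one_pow, one_mul]
    exact one_bound proj_symm' (proj_idem' hAAt) proj_symm' (proj_idem' hA'A't)
      proj_symm' (proj_idem' hBBt) proj_symm' (proj_idem' hB'B't) X
  -- bound 2
  have hsplit : (1 - A'ᵀ * A') * X * (1 - B'ᵀ * B') - (1 - Aᵀ * A) * X * (1 - Bᵀ * B)
      = ((Aᵀ * A) - (A'ᵀ * A')) * (X * (1 - B'ᵀ * B'))
        + ((1 - Aᵀ * A) * X) * ((Bᵀ * B) - (B'ᵀ * B')) := by
    simp only [Matrix.mul_sub, Matrix.sub_mul, Matrix.mul_one, Matrix.one_mul,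
      Matrix.mul_assoc]
    abel
  have b2 : fnorm (PT1 X - PT2 X) ≤ (2 / sr * fnorm E) * fnorm X := by
    rw [hdiff, hsplit, hfn, hfn]
    have hT1 : Real.sqrt (fsq (((Aᵀ * A) - (A'ᵀ * A')) * (X * (1 - B'ᵀ * B'))))
        ≤ t * Real.sqrt (fsq X) := by
      refine fnorm_le_of_fsq_le ht ?_
      calc fsq (((Aᵀ * A) - (A'ᵀ * A')) * (X * (1 - B'ᵀ * B')))
          ≤ t ^ 2 * fsq (X * (1 - B'ᵀ * B')) := fsq_mul_le dU _
        _ ≤ t ^ 2 * (1 ^ 2 * fsq X) := by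
            have := fsq_mul_right_le (X := X)
              (show opb (1 - B'ᵀ * B')ᵀ 1 by
                rw [proj_symm']; exact opb_proj proj_symm' (proj_idem' hB'B't))
            nlinarith [sq_nonneg t, this]
        _ = t ^ 2 * fsq X := by ring
    have hT2 : Real.sqrt (fsq (((1 - Aᵀ * A) * X) * ((Bᵀ * B) - (B'ᵀ * B'))))
        ≤ t * Real.sqrt (fsq X) := by
      refine fnorm_le_of_fsq_le ht ?_
      have hdVt : opb ((Bᵀ * B) - (B'ᵀ * B'))ᵀ t := by
        rwa [transpose_sub, proj_symm, proj_symm]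
      calc fsq (((1 - Aᵀ * A) * X) * ((Bᵀ * B) - (B'ᵀ * B')))
          ≤ t ^ 2 * fsq ((1 - Aᵀ * A) * X) := fsq_mul_right_le hdVt _
        _ ≤ t ^ 2 * (1 ^ 2 * fsq X) := by
            have := fsq_mul_le (opb_proj proj_symm' (proj_idem' hAAt)) X
            nlinarith [sq_nonneg t]
        _ = t ^ 2 * fsq X := by ring
    calc Real.sqrt (fsq (((Aᵀ * A) - (A'ᵀ * A')) * (X * (1 - B'ᵀ * B'))
            + ((1 - Aᵀ * A) * X) * ((Bᵀ * B) - (B'ᵀ * B'))))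
        ≤ Real.sqrt (fsq (((Aᵀ * A) - (A'ᵀ * A')) * (X * (1 - B'ᵀ * B'))))
          + Real.sqrt (fsq (((1 - Aᵀ * A) * X) * ((Bᵀ * B) - (B'ᵀ * B')))) :=
          fnorm_triangle' _ _
      _ ≤ t * Real.sqrt (fsq X) + t * Real.sqrt (fsq X) := add_le_add hT1 hT2
      _ = (2 / sr * Real.sqrt (fsq E)) * Real.sqrt (fsq X) := by
          rw [htdef]; ring
  -- combine
  have hfnE : fnorm E = Real.sqrt (fsq E) := rfl
  have hfnX : 0 ≤ fnorm X := Real.sqrt_nonneg _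
  rcases le_total (1 : ℝ) (2 / sr * fnorm E) with hc | hc
  · rw [min_eq_left hc]
    exact b1
  · rw [min_eq_right hc]
    exact b2
end

section
/- Let 𝔐 ∈ ℝ^{l×m} with SVD 𝔐 = Σ_{i=1}^{r+k} σᵢ(𝔐) uᵢvᵢᵀ. The critical points of the distance function J(R) = ½‖R − 𝔐‖² restricted to the rank-r manifold (i.e., points R of rank r with 𝔐 − R normal to the manifold at R) are exactly the matrices R = Σ_{i∈A} σᵢ uᵢvᵢᵀ for subsets A ⊆ {1,…,r+k} of cardinality r (assuming distinct singular values). -/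
open Matrix

namespace CritAux
variable {l m p q : Type*}

lemma vecMul_sum' {ι : Type*} [Fintype l] (s : Finset ι) (x : l → ℝ) (M : ι → Matrix l m ℝ) :
    x ᵥ* (∑ i ∈ s, M i) = ∑ i ∈ s, x ᵥ* M i := by
  ext j
  simp only [Matrix.vecMul, dotProduct, Matrix.sum_apply, Finset.mul_sum, Finset.sum_apply]
  rw [Finset.sum_comm]

lemma mulVec_sum' {ι : Type*} [Fintype m] (s : Finset ι) (M : ι → Matrix l m ℝ) (x : m → ℝ) :
    (∑ i ∈ s, M i) *ᵥ x = ∑ i ∈ s, M i *ᵥ x := by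
  ext j
  simp only [Matrix.mulVec, dotProduct, Matrix.sum_apply, Finset.sum_mul, Finset.sum_apply]
  rw [Finset.sum_comm]

lemma vecMul_smulMat [Fintype l] (x : l → ℝ) (c : ℝ) (M : Matrix l m ℝ) :
    x ᵥ* (c • M) = c • (x ᵥ* M) := by
  ext j
  simp only [Matrix.vecMul, dotProduct, Matrix.smul_apply, Pi.smul_apply, smul_eq_mul,
    Finset.mul_sum]
  exact Finset.sum_congr rfl fun k _ => by ring
lemma vmv_mul [Fintype m] (a : l → ℝ) (b : m → ℝ) (M : Matrix m p ℝ) :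
    vecMulVec a b * M = vecMulVec a (b ᵥ* M) := by
  ext i j
  simp only [Matrix.mul_apply, vecMulVec_apply, Matrix.vecMul, dotProduct, Finset.mul_sum]
  exact Finset.sum_congr rfl fun k _ => by ring
lemma mul_vmv [Fintype m] (M : Matrix l m ℝ) (a : m → ℝ) (b : p → ℝ) :
    M * vecMulVec a b = vecMulVec (M *ᵥ a) b := by
  ext i j
  simp only [Matrix.mul_apply, vecMulVec_apply, Matrix.mulVec, dotProduct, Finset.sum_mul]
  exact Finset.sum_congr rfl fun k _ => by ring
lemma vmv_mul_vmv [Fintype m] (a : l → ℝ) (b : m → ℝ) (c : m → ℝ) (d : p → ℝ) :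
    vecMulVec a b * vecMulVec c d = (b ⬝ᵥ c) • vecMulVec a d := by
  ext i j
  simp only [Matrix.mul_apply, vecMulVec_apply, dotProduct, Matrix.smul_apply, smul_eq_mul,
    Finset.sum_mul]
  exact Finset.sum_congr rfl fun k _ => by ring
lemma vmv_mulVec [Fintype m] (a : l → ℝ) (b : m → ℝ) (x : m → ℝ) :
    vecMulVec a b *ᵥ x = (b ⬝ᵥ x) • a := by
  ext i
  simp only [Matrix.mulVec, vecMulVec_apply, dotProduct, Pi.smul_apply, smul_eq_mul,
    Finset.sum_mul]
  exact Finset.sum_congr rfl fun k _ => by ring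
lemma trace_vmv [Fintype l] (a b : l → ℝ) : Matrix.trace (vecMulVec a b) = a ⬝ᵥ b := by
  simp [Matrix.trace, Matrix.diag, vecMulVec_apply, dotProduct]
lemma transpose_vmv (a : l → ℝ) (b : m → ℝ) : (vecMulVec a b)ᵀ = vecMulVec b a := by
  ext i j; simp [vecMulVec_apply, mul_comm]
lemma smul_vmv_right (a : l → ℝ) (c : ℝ) (b : m → ℝ) :
    vecMulVec a (c • b) = c • vecMulVec a b := by
  ext i j; simp [vecMulVec_apply]; ring
lemma zero_vmv (b : m → ℝ) : vecMulVec (0 : l → ℝ) b = 0 := by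
  ext i j; simp [vecMulVec_apply]
lemma vmv_zero (a : l → ℝ) : vecMulVec a (0 : m → ℝ) = 0 := by
  ext i j; simp [vecMulVec_apply]
lemma isUnit_of_rank_eq {r : ℕ} (A : Matrix (Fin r) (Fin r) ℝ) (h : A.rank = r) : IsUnit A := by
  rw [← Matrix.mulVec_surjective_iff_isUnit]
  have hr : LinearMap.range A.mulVecLin = ⊤ := by
    apply Submodule.eq_top_of_finrank_eq
    simpa [Matrix.rank] using h
  intro y
  obtain ⟨x, hx⟩ := LinearMap.range_eq_top.mp hr y
  exact ⟨x, by simpa [Matrix.mulVecLin_apply] using hx⟩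

lemma vecMul_vmv [Fintype l] (x : l → ℝ) (a : l → ℝ) (b : m → ℝ) :
    x ᵥ* vecMulVec a b = (x ⬝ᵥ a) • b := by
  ext j
  simp only [Matrix.vecMul, dotProduct, vecMulVec_apply, Pi.smul_apply, smul_eq_mul,
    Finset.sum_mul]
  exact Finset.sum_congr rfl fun k _ => by ring

lemma forward
    (l m r n : ℕ)
    (u : Fin n → Fin l → ℝ) (v : Fin n → Fin m → ℝ) (σ : Fin n → ℝ)
    (hu : ∀ i j, dotProduct (u i) (u j) = if i = j then 1 else 0)
    (hv : ∀ i j, dotProduct (v i) (v j) = if i = j then 1 else 0)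
    (hσpos : ∀ i, 0 < σ i)
    (hσdist : ∀ i j : Fin n, i ≠ j → σ i ≠ σ j)
    (𝔐 : Matrix (Fin l) (Fin m) ℝ)
    (h𝔐 : 𝔐 = ∑ i : Fin n, σ i • vecMulVec (u i) (v i))
    (R : Matrix (Fin l) (Fin m) ℝ)
    (U : Matrix (Fin l) (Fin r) ℝ) (Z : Matrix (Fin m) (Fin r) ℝ)
    (hUU : Uᵀ * U = 1) (hZr : Z.rank = r) (hR : R = U * Zᵀ)
    (hnU : Uᵀ * (𝔐 - R) = 0) (hnZ : (𝔐 - R) * Z = 0) :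
    ∃ A : Finset (Fin n), A.card = r ∧ R = ∑ i ∈ A, σ i • vecMulVec (u i) (v i) := by
  classical
  have hZt : Zᵀ = Uᵀ * 𝔐 := by
    have h1 : Uᵀ * 𝔐 - Uᵀ * R = 0 := by rw [← Matrix.mul_sub]; exact hnU
    have h2 : Uᵀ * R = Zᵀ := by rw [hR, ← Matrix.mul_assoc, hUU, Matrix.one_mul]
    rw [← h2]; exact (sub_eq_zero.mp h1).symm
  set S := Zᵀ * Z with hS
  have hMZ : 𝔐 * Z = U * S := by
    have h1 : 𝔐 * Z - R * Z = 0 := by rw [← Matrix.sub_mul]; exact hnZ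
    have h2 : R * Z = U * S := by rw [hR, Matrix.mul_assoc]
    rw [← h2]; exact sub_eq_zero.mp h1
  have hZ : Z = 𝔐ᵀ * U := by
    have := congrArg Matrix.transpose hZt
    simpa [Matrix.transpose_mul] using this
  have hMMU : (𝔐 * 𝔐ᵀ) * U = U * S := by
    rw [Matrix.mul_assoc, ← hZ, hMZ]
  have hSrank : S.rank = r := by rw [hS, Matrix.rank_transpose_mul_self, hZr]
  have hSunit : IsUnit S := isUnit_of_rank_eq S hSrank
  have hdet : IsUnit S.det := (Matrix.isUnit_iff_isUnit_det S).mp hSunit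
  have hSsym : Sᵀ = S := by rw [hS, Matrix.transpose_mul, Matrix.transpose_transpose]
  have hMt : 𝔐ᵀ = ∑ i, σ i • vecMulVec (v i) (u i) := by
    rw [h𝔐, Matrix.transpose_sum]
    exact Finset.sum_congr rfl fun i _ => by rw [Matrix.transpose_smul, transpose_vmv]
  have hMMt : 𝔐 * 𝔐ᵀ = ∑ i, (σ i)^2 • vecMulVec (u i) (u i) := by
    rw [hMt, h𝔐, Matrix.sum_mul]
    apply Finset.sum_congr rfl
    intro i _
    rw [Matrix.mul_sum]
    rw [Finset.sum_eq_single i]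
    · rw [Matrix.smul_mul, Matrix.mul_smul, vmv_mul_vmv, hv, if_pos rfl, one_smul, smul_smul,
        pow_two]
    · intro j _ hj
      rw [Matrix.smul_mul, Matrix.mul_smul, vmv_mul_vmv, hv, if_neg (Ne.symm hj), zero_smul,
        smul_zero, smul_zero]
    · intro h; exact absurd (Finset.mem_univ i) h
  set P := ∑ i, vecMulVec (u i) (u i) with hP
  have hPvmv : ∀ i, P * vecMulVec (u i) (u i) = vecMulVec (u i) (u i) := by
    intro i
    rw [hP, Matrix.sum_mul, Finset.sum_eq_single i]
    · rw [vmv_mul_vmv, hu, if_pos rfl, one_smul]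
    · intro j _ hj
      rw [vmv_mul_vmv, hu, if_neg hj, zero_smul]
    · intro h; exact absurd (Finset.mem_univ i) h
  have hPMM : P * (𝔐 * 𝔐ᵀ) = 𝔐 * 𝔐ᵀ := by
    rw [hMMt, Matrix.mul_sum]
    exact Finset.sum_congr rfl fun i _ => by rw [Matrix.mul_smul, hPvmv]
  have hU' : U = (𝔐 * 𝔐ᵀ) * U * S⁻¹ := by
    rw [hMMU, Matrix.mul_assoc, Matrix.mul_nonsing_inv _ hdet, Matrix.mul_one]
  have hPU : P * U = U := by
    conv_lhs => rw [hU']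
    rw [← Matrix.mul_assoc, ← Matrix.mul_assoc, hPMM, ← hU']
  set c : Fin n → Fin r → ℝ := fun i => u i ᵥ* U with hc
  have huMM : ∀ i, u i ᵥ* (𝔐 * 𝔐ᵀ) = (σ i)^2 • u i := by
    intro i
    rw [hMMt, vecMul_sum', Finset.sum_eq_single i]
    · rw [vecMul_smulMat, vecMul_vmv, hu, if_pos rfl, one_smul]
    · intro j _ hj
      rw [vecMul_smulMat, vecMul_vmv, hu, if_neg (Ne.symm hj), zero_smul, smul_zero]
    · intro h; exact absurd (Finset.mem_univ i) h
  have heig : ∀ i, c i ᵥ* S = (σ i)^2 • c i := by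
    intro i
    calc c i ᵥ* S = u i ᵥ* (U * S) := by rw [hc, Matrix.vecMul_vecMul]
    _ = u i ᵥ* ((𝔐 * 𝔐ᵀ) * U) := by rw [hMMU]
    _ = (u i ᵥ* (𝔐 * 𝔐ᵀ)) ᵥ* U := by rw [Matrix.vecMul_vecMul]
    _ = (σ i)^2 • c i := by rw [huMM, Matrix.smul_vecMul, hc]
  have hSmulVec : ∀ j, S *ᵥ c j = (σ j)^2 • c j := by
    intro j
    have h0 : S *ᵥ c j = c j ᵥ* Sᵀ := (Matrix.vecMul_transpose S (c j)).symm
    rw [h0, hSsym, heig]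
  have horth : ∀ i j, i ≠ j → c i ⬝ᵥ c j = 0 := by
    intro i j hij
    have h1 : (σ i)^2 * (c i ⬝ᵥ c j) = (σ j)^2 * (c i ⬝ᵥ c j) := by
      calc (σ i)^2 * (c i ⬝ᵥ c j) = ((σ i)^2 • c i) ⬝ᵥ c j := by
            rw [smul_dotProduct]; rfl
      _ = (c i ᵥ* S) ⬝ᵥ c j := by rw [heig]
      _ = c i ⬝ᵥ (S *ᵥ c j) := (dotProduct_mulVec _ _ _).symm
      _ = c i ⬝ᵥ ((σ j)^2 • c j) := by rw [hSmulVec]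
      _ = (σ j)^2 * (c i ⬝ᵥ c j) := by rw [dotProduct_smul]; rfl
    have h2 : ((σ i)^2 - (σ j)^2) * (c i ⬝ᵥ c j) = 0 := by linarith
    rcases mul_eq_zero.mp h2 with h | h
    · exfalso
      have hne := hσdist i j hij
      have hi := hσpos i
      have hj := hσpos j
      have h4 : (σ i - σ j) * (σ i + σ j) = 0 := by linear_combination h
      rcases mul_eq_zero.mp h4 with h5 | h5
      · exact hne (by linarith)
      · linarith
    · exact h
  have hcomp : ∑ i, vecMulVec (c i) (c i) = (1 : Matrix (Fin r) (Fin r) ℝ) := by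
    have h1 : Uᵀ * P * U = 1 := by rw [Matrix.mul_assoc, hPU, hUU]
    have h2 : Uᵀ * P * U = ∑ i, vecMulVec (c i) (c i) := by
      rw [hP, Matrix.mul_sum, Matrix.sum_mul]
      apply Finset.sum_congr rfl
      intro i _
      rw [mul_vmv, vmv_mul, Matrix.mulVec_transpose]
    rw [← h2, h1]
  have hnorm : ∀ i, c i = 0 ∨ c i ⬝ᵥ c i = 1 := by
    intro i
    have h1 : (∑ j, vecMulVec (c j) (c j)) *ᵥ c i = c i := by rw [hcomp, Matrix.one_mulVec]
    have h2 : (∑ j, vecMulVec (c j) (c j)) *ᵥ c i = (c i ⬝ᵥ c i) • c i := by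
      rw [mulVec_sum', Finset.sum_eq_single i]
      · rw [vmv_mulVec]
      · intro j _ hj
        rw [vmv_mulVec, horth j i hj, zero_smul]
      · intro h; exact absurd (Finset.mem_univ i) h
    have h3 : ((c i ⬝ᵥ c i) - 1) • c i = 0 := by
      rw [sub_smul, one_smul, ← h2, h1, sub_self]
    rcases smul_eq_zero.mp h3 with h | h
    · right; linarith [h]
    · left; exact h
  set A : Finset (Fin n) := Finset.univ.filter (fun i => c i ≠ 0) with hA
  have hAnorm : ∀ i ∈ A, c i ⬝ᵥ c i = 1 := by
    intro i hi
    rcases hnorm i with h | h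
    · exact absurd h (Finset.mem_filter.mp hi).2
    · exact h
  have hAnorm' : ∀ i ∉ A, c i ⬝ᵥ c i = 0 := by
    intro i hi
    have : c i = 0 := by
      by_contra h
      exact hi (Finset.mem_filter.mpr ⟨Finset.mem_univ i, h⟩)
    rw [this, zero_dotProduct]
  have hcard : A.card = r := by
    have htr : ∑ i, c i ⬝ᵥ c i = (r : ℝ) := by
      have := congrArg Matrix.trace hcomp
      rw [Matrix.trace_sum, Matrix.trace_one] at this
      simpa [trace_vmv] using this
    have h2 : ∑ i, c i ⬝ᵥ c i = (A.card : ℝ) := by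
      rw [← Finset.sum_filter_add_sum_filter_not Finset.univ (fun i => c i ≠ 0)]
      rw [Finset.sum_congr rfl (fun i hi => hAnorm i ((by rwa [hA]) : i ∈ A))]
      rw [Finset.sum_congr rfl (fun i hi => hAnorm' i (by
        simp only [hA]
        intro hmem
        exact (Finset.mem_filter.mp hi).2 (Finset.mem_filter.mp hmem).2))]
      simp [hA]
    exact_mod_cast (h2 ▸ htr)
  have hUdecomp : U = ∑ i, vecMulVec (u i) (c i) := by
    conv_lhs => rw [← hPU]
    rw [hP, Matrix.sum_mul]
    exact Finset.sum_congr rfl fun i _ => by rw [vmv_mul, hc]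
  have hUUt : U * Uᵀ = ∑ i ∈ A, vecMulVec (u i) (u i) := by
    have hUt : Uᵀ = ∑ i, vecMulVec (c i) (u i) := by
      rw [hUdecomp, Matrix.transpose_sum]
      exact Finset.sum_congr rfl fun i _ => transpose_vmv _ _
    calc U * Uᵀ = (∑ i, vecMulVec (u i) (c i)) * (∑ j, vecMulVec (c j) (u j)) := by
          rw [← hUdecomp, ← hUt]
    _ = ∑ i, vecMulVec (u i) (c i) * (∑ j, vecMulVec (c j) (u j)) := Matrix.sum_mul _ _ _
    _ = ∑ i, (c i ⬝ᵥ c i) • vecMulVec (u i) (u i) := by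
        apply Finset.sum_congr rfl
        intro i _
        rw [Matrix.mul_sum, Finset.sum_eq_single i]
        · rw [vmv_mul_vmv]
        · intro j _ hj
          rw [vmv_mul_vmv, horth i j (Ne.symm hj), zero_smul]
        · intro h; exact absurd (Finset.mem_univ i) h
    _ = ∑ i ∈ A, vecMulVec (u i) (u i) := by
        rw [Finset.sum_filter]
        apply Finset.sum_congr rfl
        intro i _
        by_cases hi : c i ≠ 0
        · rw [if_pos hi, hAnorm i (Finset.mem_filter.mpr ⟨Finset.mem_univ i, hi⟩), one_smul]
        · rw [if_neg hi, hAnorm' i (by simp [hA, hi] : i ∉ A), zero_smul]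
  have hproj : ∀ i, vecMulVec (u i) (u i) * 𝔐 = σ i • vecMulVec (u i) (v i) := by
    intro i
    rw [h𝔐, Matrix.mul_sum, Finset.sum_eq_single i]
    · rw [Matrix.mul_smul, vmv_mul_vmv, hu, if_pos rfl, one_smul]
    · intro j _ hj
      rw [Matrix.mul_smul, vmv_mul_vmv, hu, if_neg (Ne.symm hj), zero_smul, smul_zero]
    · intro h; exact absurd (Finset.mem_univ i) h
  refine ⟨A, hcard, ?_⟩
  calc R = U * Zᵀ := hR
  _ = (U * Uᵀ) * 𝔐 := by rw [hZt, Matrix.mul_assoc]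
  _ = ∑ i ∈ A, σ i • vecMulVec (u i) (v i) := by
      rw [hUUt, Matrix.sum_mul]
      exact Finset.sum_congr rfl fun i _ => hproj i


lemma backward
    (l m r n : ℕ)
    (u : Fin n → Fin l → ℝ) (v : Fin n → Fin m → ℝ) (σ : Fin n → ℝ)
    (hu : ∀ i j, dotProduct (u i) (u j) = if i = j then 1 else 0)
    (hv : ∀ i j, dotProduct (v i) (v j) = if i = j then 1 else 0)
    (hσpos : ∀ i, 0 < σ i)
    (𝔐 : Matrix (Fin l) (Fin m) ℝ)
    (h𝔐 : 𝔐 = ∑ i : Fin n, σ i • vecMulVec (u i) (v i))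
    (R : Matrix (Fin l) (Fin m) ℝ)
    (A : Finset (Fin n)) (hA : A.card = r)
    (hRdef : R = ∑ i ∈ A, σ i • vecMulVec (u i) (v i)) :
    R.rank = r ∧
      ∃ (U : Matrix (Fin l) (Fin r) ℝ) (Z : Matrix (Fin m) (Fin r) ℝ),
        Uᵀ * U = 1 ∧ Z.rank = r ∧ R = U * Zᵀ ∧
        Uᵀ * (𝔐 - R) = 0 ∧ (𝔐 - R) * Z = 0 := by
  classical
  set e : Fin r ≃ {x // x ∈ A} := (finCongr hA.symm).trans A.equivFin.symm with he
  have hsum : ∀ {β : Type} [AddCommMonoid β] (f : Fin n → β),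
      ∑ i ∈ A, f i = ∑ k : Fin r, f (e k) := by
    intro β _ f
    rw [← Finset.sum_coe_sort A f]
    exact (Equiv.sum_comp e (fun i : {x // x ∈ A} => f ↑i)).symm
  set U : Matrix (Fin l) (Fin r) ℝ := Matrix.of fun x k => u (e k) x with hU
  set Z : Matrix (Fin m) (Fin r) ℝ := Matrix.of fun y k => σ (e k) * v (e k) y with hZ
  have hecoe : ∀ k k' : Fin r, ((e k : Fin n) = (e k' : Fin n)) ↔ k = k' := by
    intro k k'
    rw [Subtype.coe_inj, Equiv.apply_eq_iff_eq]
  have hUU : Uᵀ * U = 1 := by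
    ext k k'
    have h := hu (e k) (e k')
    simp only [dotProduct] at h
    simp only [Matrix.mul_apply, Matrix.transpose_apply, hU, Matrix.of_apply, Matrix.one_apply]
    rw [h]
    by_cases hkk : k = k'
    · rw [if_pos ((hecoe k k').mpr hkk), if_pos hkk]
    · rw [if_neg (fun hc => hkk ((hecoe k k').mp hc)), if_neg hkk]
  have hZZ : Zᵀ * Z = Matrix.diagonal (fun k => σ (e k)^2) := by
    ext k k'
    have h := hv (e k) (e k')
    simp only [dotProduct] at h
    simp only [Matrix.mul_apply, Matrix.transpose_apply, hZ, Matrix.of_apply,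
      Matrix.diagonal_apply]
    have hh : ∑ y, σ (e k) * v (e k) y * (σ (e k') * v (e k') y)
        = (σ (e k) * σ (e k')) * ∑ y, v (e k) y * v (e k') y := by
      rw [Finset.mul_sum]
      exact Finset.sum_congr rfl fun y _ => by ring
    rw [hh, h]
    by_cases hkk : k = k'
    · subst hkk
      rw [if_pos ((hecoe k k).mpr rfl), if_pos rfl]
      ring
    · rw [if_neg (fun hc => hkk ((hecoe k k').mp hc)), if_neg hkk, mul_zero]
  have hZunit : IsUnit (Zᵀ * Z) := by
    rw [hZZ, Matrix.isUnit_iff_isUnit_det, Matrix.det_diagonal]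
    refine isUnit_iff_ne_zero.mpr (Finset.prod_ne_zero_iff.mpr fun k _ => ?_)
    have := hσpos (e k)
    positivity
  have hZrank : Z.rank = r := by
    rw [← Matrix.rank_transpose_mul_self, Matrix.rank_of_isUnit _ hZunit, Fintype.card_fin]
  have hRUZ : R = U * Zᵀ := by
    rw [hRdef, hsum]
    ext x y
    simp only [Matrix.mul_apply, Matrix.transpose_apply, hU, hZ, Matrix.of_apply,
      Finset.sum_apply, Matrix.sum_apply, Matrix.smul_apply, vecMulVec_apply, smul_eq_mul]
    exact Finset.sum_congr rfl fun k _ => by ring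
  have hdiff : 𝔐 - R = ∑ i ∈ Aᶜ, σ i • vecMulVec (u i) (v i) := by
    rw [h𝔐, hRdef, ← Finset.sum_compl_add_sum A (fun i => σ i • vecMulVec (u i) (v i))]
    abel
  have hUperp : ∀ i ∈ Aᶜ, Uᵀ *ᵥ u i = 0 := by
    intro i hi
    ext k
    have h := hu (e k) i
    simp only [dotProduct] at h
    simp only [Matrix.mulVec, dotProduct, Matrix.transpose_apply, hU, Matrix.of_apply,
      Pi.zero_apply]
    rw [h, if_neg]
    intro hc
    have hmem := (e k).2
    rw [hc] at hmem
    exact (Finset.mem_compl.mp hi) hmem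
  have hVperp : ∀ i ∈ Aᶜ, v i ᵥ* Z = 0 := by
    intro i hi
    ext k
    have h := hv i (e k)
    simp only [dotProduct] at h
    simp only [Matrix.vecMul, dotProduct, hZ, Matrix.of_apply, Pi.zero_apply]
    have hh : ∑ y, v i y * (σ (e k) * v (e k) y) = σ (e k) * ∑ y, v i y * v (e k) y := by
      rw [Finset.mul_sum]
      exact Finset.sum_congr rfl fun y _ => by ring
    rw [hh, h, if_neg, mul_zero]
    intro hc
    have hmem := (e k).2
    rw [← hc] at hmem
    exact (Finset.mem_compl.mp hi) hmem
  have hnU : Uᵀ * (𝔐 - R) = 0 := by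
    rw [hdiff, Matrix.mul_sum]
    apply Finset.sum_eq_zero
    intro i hi
    rw [Matrix.mul_smul, mul_vmv, hUperp i hi, zero_vmv, smul_zero]
  have hnZ : (𝔐 - R) * Z = 0 := by
    rw [hdiff, Matrix.sum_mul]
    apply Finset.sum_eq_zero
    intro i hi
    rw [Matrix.smul_mul, vmv_mul, hVperp i hi, vmv_zero, smul_zero]
  have hkey : Uᵀ * (R * Z) = Zᵀ * Z := by
    rw [hRUZ, Matrix.mul_assoc U, ← Matrix.mul_assoc Uᵀ, hUU, Matrix.one_mul]
  have hub : R.rank ≤ r := by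
    calc R.rank = (U * Zᵀ).rank := by rw [hRUZ]
    _ ≤ Zᵀ.rank := Matrix.rank_mul_le_right _ _
    _ = Z.rank := Matrix.rank_transpose _
    _ = r := hZrank
  have hlb : r ≤ R.rank := by
    have h1 : (Uᵀ * (R * Z)).rank ≤ (R * Z).rank := Matrix.rank_mul_le_right _ _
    have h2 : (R * Z).rank ≤ R.rank := Matrix.rank_mul_le_left _ _
    rw [hkey, Matrix.rank_transpose_mul_self, hZrank] at h1
    omega
  exact ⟨le_antisymm hub hlb, U, Z, hUU, hZrank, hRUZ, hnU, hnZ⟩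


end CritAux

open Matrix

/-- The critical points of `J(R) = ½‖R − 𝔐‖²` on the rank-`r` manifold (points `R` of rank
`r` with residual `𝔐 − R` normal to the manifold at `R`) are exactly the matrices
`Σ_{i∈A} σᵢuᵢvᵢᵀ` over subsets `A` of cardinality `r` of the singular triplets of `𝔐`
(assuming distinct positive singular values). -/
theorem critical_points_of_distance_to_rank_r
    (l m r n : ℕ)
    (u : Fin n → Fin l → ℝ) (v : Fin n → Fin m → ℝ) (σ : Fin n → ℝ)
    (hu : ∀ i j, dotProduct (u i) (u j) = if i = j then 1 else 0)
    (hv : ∀ i j, dotProduct (v i) (v j) = if i = j then 1 else 0)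
    (hσpos : ∀ i, 0 < σ i)
    (hσdist : ∀ i j : Fin n, i ≠ j → σ i ≠ σ j)
    (𝔐 : Matrix (Fin l) (Fin m) ℝ)
    (h𝔐 : 𝔐 = ∑ i : Fin n, σ i • vecMulVec (u i) (v i)) :
    ∀ R : Matrix (Fin l) (Fin m) ℝ,
      (R.rank = r ∧
        ∃ (U : Matrix (Fin l) (Fin r) ℝ) (Z : Matrix (Fin m) (Fin r) ℝ),
          Uᵀ * U = 1 ∧ Z.rank = r ∧ R = U * Zᵀ ∧
          Uᵀ * (𝔐 - R) = 0 ∧ (𝔐 - R) * Z = 0) ↔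
      (∃ A : Finset (Fin n), A.card = r ∧ R = ∑ i ∈ A, σ i • vecMulVec (u i) (v i)) := by
  intro R
  constructor
  · rintro ⟨-, U, Z, hUU, hZr, hR, hnU, hnZ⟩
    exact CritAux.forward l m r n u v σ hu hv hσpos hσdist 𝔐 h𝔐 R U Z hUU hZr hR hnU hnZ
  · rintro ⟨A, hA, hRdef⟩
    exact CritAux.backward l m r n u v σ hu hv hσpos 𝔐 h𝔐 R A hA hRdef
end

section
/- On the fixed-rank manifold parameterized by R = UZᵀ (UᵀU = I, Z full rank), a smooth curve (U(t), Z(t)) is a geodesic for the metric inherited from the Frobenius inner product if and only if Ü + U U̇ᵀU̇ + 2U̇ Żᵀ Z(ZᵀZ)^{-1} = 0 and Z̈ − Z U̇ᵀ U̇ = 0; equivalently, the acceleration d²/dt²(U(t)Z(t)ᵀ) lies in the normal space at U(t)Z(t)ᵀ at every time. -/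
open Matrix

attribute [local instance] Matrix.normedAddCommGroup Matrix.normedSpace

lemma aux_hasDerivAt_entry {a b : ℕ} {A A' : ℝ → Matrix (Fin a) (Fin b) ℝ} {t : ℝ}
    (hA : HasDerivAt A (A' t) t) (i : Fin a) (j : Fin b) :
    HasDerivAt (fun s => A s i j) (A' t i j) t :=
  hasDerivAt_pi.mp (hasDerivAt_pi.mp hA i) j

lemma aux_hasDerivAt_mul {a b c : ℕ} {A A' : ℝ → Matrix (Fin a) (Fin b) ℝ}
    {B B' : ℝ → Matrix (Fin b) (Fin c) ℝ} {t : ℝ}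
    (hA : HasDerivAt A (A' t) t) (hB : HasDerivAt B (B' t) t) :
    HasDerivAt (fun s => A s * B s) (A' t * B t + A t * B' t) t := by
  refine hasDerivAt_pi.mpr ?_; intro i
  refine hasDerivAt_pi.mpr ?_; intro j
  have : ∀ s, (A s * B s) i j = ∑ k, A s i k * B s k j := fun s => Matrix.mul_apply
  simp only [this]
  have h : HasDerivAt (fun s => ∑ k, A s i k * B s k j)
      (∑ k, (A' t i k * B t k j + A t i k * B' t k j)) t :=
    HasDerivAt.fun_sum fun k _ => (aux_hasDerivAt_entry hA i k).mul (aux_hasDerivAt_entry hB k j)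
  have e : (A' t * B t + A t * B' t) i j = ∑ k, (A' t i k * B t k j + A t i k * B' t k j) := by
    simp [Matrix.add_apply, Matrix.mul_apply, Finset.sum_add_distrib]
  rw [e]; exact h

lemma aux_hasDerivAt_transpose {a b : ℕ} {A A' : ℝ → Matrix (Fin a) (Fin b) ℝ} {t : ℝ}
    (hA : HasDerivAt A (A' t) t) :
    HasDerivAt (fun s => (A s)ᵀ) ((A' t)ᵀ) t := by
  refine hasDerivAt_pi.mpr ?_; intro j
  refine hasDerivAt_pi.mpr ?_; intro i
  exact aux_hasDerivAt_entry hA i j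

lemma aux_isUnit_gram {m r : ℕ} (Z : Matrix (Fin m) (Fin r) ℝ) (h : Z.rank = r) :
    IsUnit (Zᵀ * Z) := by
  have hrk : (Zᵀ * Z).rank = r := by rw [Matrix.rank_transpose_mul_self]; exact h
  rw [← Matrix.mulVec_surjective_iff_isUnit]
  have htop : LinearMap.range (Zᵀ * Z).mulVecLin = ⊤ := by
    apply Submodule.eq_top_of_finrank_eq
    rw [← Matrix.rank, hrk]
    simp [Module.finrank_fintype_fun_eq_card]
  intro v
  have hv : v ∈ LinearMap.range (Zᵀ * Z).mulVecLin := htop ▸ Submodule.mem_top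
  obtain ⟨y, hy⟩ := hv
  rw [Matrix.mulVecLin_apply] at hy
  exact ⟨y, hy⟩

lemma aux_key {l m r : ℕ} (U U' U'' : Matrix (Fin l) (Fin r) ℝ)
    (Z Z' Z'' : Matrix (Fin m) (Fin r) ℝ)
    (h1 : Uᵀ * U = 1) (h2 : Uᵀ * U' = 0) (h3 : U'ᵀ * U' + Uᵀ * U'' = 0)
    (hGl : ((Zᵀ * Z)⁻¹) * (Zᵀ * Z) = 1) (hGr : (Zᵀ * Z) * ((Zᵀ * Z)⁻¹) = 1) :
    (U'' + U * U'ᵀ * U' + (2:ℝ) • (U' * Z'ᵀ * Z * (Zᵀ * Z)⁻¹) = 0 ∧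
      Z'' - Z * U'ᵀ * U' = 0) ↔
    (Uᵀ * (U'' * Zᵀ + (2:ℝ) • (U' * Z'ᵀ) + U * Z''ᵀ) = 0 ∧
      (U'' * Zᵀ + (2:ℝ) • (U' * Z'ᵀ) + U * Z''ᵀ) * Z = 0) := by
  have hUU'' : Uᵀ * U'' = -(U'ᵀ * U') := eq_neg_of_add_eq_zero_right h3
  have compA : Uᵀ * (U'' * Zᵀ + (2:ℝ) • (U' * Z'ᵀ) + U * Z''ᵀ)
      = -((U'ᵀ * U') * Zᵀ) + Z''ᵀ := by
    simp only [Matrix.mul_add, Matrix.mul_smul, ← Matrix.mul_assoc, hUU'', h1, h2,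
      Matrix.zero_mul, smul_zero, Matrix.one_mul, Matrix.neg_mul]
    abel
  have compB :
      (U'' * Zᵀ + (2:ℝ) • (U' * Z'ᵀ) + U * (Z * U'ᵀ * U')ᵀ) * Z
      = U'' * (Zᵀ * Z) + U * U'ᵀ * U' * (Zᵀ * Z) + (2:ℝ) • (U' * Z'ᵀ * Z) := by
    simp only [Matrix.transpose_mul, Matrix.transpose_transpose]
    simp only [Matrix.add_mul, Matrix.smul_mul, ← Matrix.mul_assoc]
    abel
  constructor
  · rintro ⟨e1, e2⟩
    have hZ'' : Z'' = Z * U'ᵀ * U' := sub_eq_zero.mp e2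
    constructor
    · rw [compA, hZ'']
      simp [Matrix.transpose_mul, Matrix.transpose_transpose, ← Matrix.mul_assoc]
    · have e1' : U'' * (Zᵀ * Z) + U * U'ᵀ * U' * (Zᵀ * Z) + (2:ℝ) • (U' * Z'ᵀ * Z) = 0 := by
        have := congrArg (fun M => M * (Zᵀ * Z)) e1
        simpa [Matrix.add_mul, Matrix.smul_mul, Matrix.mul_assoc, hGl] using this
      rw [hZ'', compB, e1']
  · rintro ⟨nA, nB⟩
    rw [compA] at nA
    have hZ''T : Z''ᵀ = (U'ᵀ * U') * Zᵀ := (neg_add_eq_zero.mp nA).symm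
    have hZ'' : Z'' = Z * U'ᵀ * U' := by
      have := congrArg Matrix.transpose hZ''T
      simpa [Matrix.transpose_mul, Matrix.transpose_transpose, ← Matrix.mul_assoc] using this
    rw [hZ'', compB] at nB
    refine ⟨?_, sub_eq_zero.mpr hZ''⟩
    have := congrArg (fun M => M * (Zᵀ * Z)⁻¹) nB
    simpa [Matrix.add_mul, Matrix.smul_mul, Matrix.mul_assoc, hGr] using this

set_option maxHeartbeats 1000000 in
/-- Geodesic equations on the fixed-rank manifold: a smooth curve `R(t) = U(t)Z(t)ᵀ`
(with `UᵀU = I`, the gauge `UᵀU̇ = 0` and `Z` of full rank) is a geodesic, i.e. its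
acceleration lies in the normal space at every time, if and only if
`Ü + U U̇ᵀU̇ + 2U̇ŻᵀZ(ZᵀZ)⁻¹ = 0` and `Z̈ − ZU̇ᵀU̇ = 0`. -/
theorem geodesic_equations_fixed_rank_manifold
    (l m r : ℕ)
    (U U' U'' : ℝ → Matrix (Fin l) (Fin r) ℝ)
    (Z Z' Z'' : ℝ → Matrix (Fin m) (Fin r) ℝ)
    (hU' : ∀ t, HasDerivAt U (U' t) t) (hU'' : ∀ t, HasDerivAt U' (U'' t) t)
    (hZ' : ∀ t, HasDerivAt Z (Z' t) t) (hZ'' : ∀ t, HasDerivAt Z' (Z'' t) t)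
    (horth : ∀ t, (U t)ᵀ * U t = 1)
    (hgauge : ∀ t, (U t)ᵀ * U' t = 0)
    (hrank : ∀ t, (Z t).rank = r) :
    -- the acceleration of `R(t) = U(t)Z(t)ᵀ`
    let Racc : ℝ → Matrix (Fin l) (Fin m) ℝ := fun t =>
      U'' t * (Z t)ᵀ + (2 : ℝ) • (U' t * (Z' t)ᵀ) + U t * (Z'' t)ᵀ
    ((∀ t, U'' t + U t * (U' t)ᵀ * U' t +
        (2 : ℝ) • (U' t * (Z' t)ᵀ * Z t * ((Z t)ᵀ * Z t)⁻¹) = 0 ∧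
      Z'' t - Z t * (U' t)ᵀ * U' t = 0) ↔
    -- the acceleration lies in the normal space at `U(t)Z(t)ᵀ` at every time
    (∀ t, (U t)ᵀ * Racc t = 0 ∧ Racc t * Z t = 0)) := by
  intro Racc
  have h3 : ∀ t, (U' t)ᵀ * U' t + (U t)ᵀ * U'' t = 0 := by
    intro t
    have hdT : HasDerivAt (fun s => (U s)ᵀ) ((fun s => (U' s)ᵀ) t) t :=
      aux_hasDerivAt_transpose (hU' t)
    have hd : HasDerivAt (fun s => (U s)ᵀ * U' s) ((U' t)ᵀ * U' t + (U t)ᵀ * U'' t) t :=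
      aux_hasDerivAt_mul (A := fun s => (U s)ᵀ) (A' := fun s => (U' s)ᵀ)
        (B := U') (B' := U'') hdT (hU'' t)
    have hc : HasDerivAt (fun s => (U s)ᵀ * U' s) 0 t := by
      have : (fun s => (U s)ᵀ * U' s) = fun _ => (0 : Matrix (Fin r) (Fin r) ℝ) :=
        funext fun s => hgauge s
      rw [this]
      exact hasDerivAt_const t 0
    exact hd.unique hc
  have hG : ∀ t, IsUnit ((Z t)ᵀ * Z t) := fun t => aux_isUnit_gram (Z t) (hrank t)
  have hGdet : ∀ t, IsUnit ((Z t)ᵀ * Z t).det := fun t =>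
    (Matrix.isUnit_iff_isUnit_det _).mp (hG t)
  constructor
  · intro h t
    exact (aux_key (U t) (U' t) (U'' t) (Z t) (Z' t) (Z'' t) (horth t) (hgauge t) (h3 t)
      (Matrix.nonsing_inv_mul _ (hGdet t)) (Matrix.mul_nonsing_inv _ (hGdet t))).mp (h t)
  · intro h t
    exact (aux_key (U t) (U' t) (U'' t) (Z t) (Z' t) (Z'' t) (horth t) (hgauge t) (h3 t)
      (Matrix.nonsing_inv_mul _ (hGdet t)) (Matrix.mul_nonsing_inv _ (hGdet t))).mpr (h t)
end
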